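/- arXiv:2504.17535 — 8 statements merged into one kernel-verified Lean document; each statement's English description precedes it below -/
import Mathlib

section
/- Let Ω be a finite set with |Ω| ≥ 5 and let G be a subgroup of Sym(Ω) whose natural action on Ω is primitive (i.e. the action of G on Ω is transitive and preserves no nontrivial block system; in Lean, MulAction.IsPreprimitive). If G contains a transposition (a b) for some distinct a, b ∈ Ω (so that this transposition fixes at least three points), then G is the full symmetric group Sym(Ω), i.e. G = ⊤. -/
open Pointwise

/-- A group action is preprimitive if it is pretransitive and every block is trivial
(this matches Mathlib's `MulAction.IsPreprimitive`). -/
def IsPreprimitive (G X : Type*) [Group G] [MulAction G X] : Prop :=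
  MulAction.IsPretransitive G X ∧
    ∀ B : Set X, MulAction.IsBlock G B → MulAction.IsTrivialBlock B

/-- A primitive subgroup of the symmetric group on at least 5 points that contains a
transposition is the full symmetric group. -/
theorem primitive_with_transposition_eq_top
    {Ω : Type*} [Fintype Ω] [DecidableEq Ω] (hcard : 5 ≤ Fintype.card Ω)
    (G : Subgroup (Equiv.Perm Ω)) (hprim : IsPreprimitive G Ω)
    (a b : Ω) (hab : a ≠ b) (hswap : Equiv.swap a b ∈ G) :
    G = ⊤ := by
  classical
  -- the "class" of c : all x with swap c x ∈ G
  set C : Ω → Set Ω := fun c => {x | Equiv.swap c x ∈ G} with hC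
  have hself : ∀ c, c ∈ C c := fun c => by
    show Equiv.swap c c ∈ G
    rw [Equiv.swap_self]
    exact G.one_mem
  have htrans : ∀ {c x y : Ω}, Equiv.swap c x ∈ G → Equiv.swap c y ∈ G →
      Equiv.swap x y ∈ G := fun {c x y} h1 h2 => by
    have h1' : Equiv.swap x c ∈ G := by rwa [Equiv.swap_comm]
    exact SubmonoidClass.swap_mem_trans G h1' h2
  -- smul of a class is a class
  have hsmul : ∀ (g : G) (c : Ω), (g : G) • C c = C ((g : Equiv.Perm Ω) c) := by
    intro g c
    ext x
    simp only [Set.mem_smul_set_iff_inv_smul_mem, hC, Set.mem_setOf_eq]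
    have : Equiv.swap ((g : Equiv.Perm Ω) c) x
        = (g : Equiv.Perm Ω) * Equiv.swap c ((g : Equiv.Perm Ω)⁻¹ x) * (g : Equiv.Perm Ω)⁻¹ := by
      have := Equiv.swap_apply_apply (g : Equiv.Perm Ω) c ((g : Equiv.Perm Ω)⁻¹ x)
      simpa using this
    constructor
    · intro h
      rw [this]
      exact G.mul_mem (G.mul_mem g.2 h) (G.inv_mem g.2)
    · intro h
      have h' : (g : Equiv.Perm Ω)⁻¹ * Equiv.swap ((g : Equiv.Perm Ω) c) x
          * (g : Equiv.Perm Ω) ∈ G :=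
        G.mul_mem (G.mul_mem (G.inv_mem g.2) h) g.2
      have : (g : Equiv.Perm Ω)⁻¹ * Equiv.swap ((g : Equiv.Perm Ω) c) x * (g : Equiv.Perm Ω)
          = Equiv.swap c ((g : Equiv.Perm Ω)⁻¹ x) := by
        rw [this]; group
      rwa [this] at h'
  -- classes are equal or disjoint
  have heqd : ∀ c d : Ω, C c = C d ∨ Disjoint (C c) (C d) := by
    intro c d
    by_cases h : (C c ∩ C d).Nonempty
    · left
      obtain ⟨z, hzc, hzd⟩ := h
      ext x
      exact ⟨fun hx => SubmonoidClass.swap_mem_trans G hzd (htrans hzc hx),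
        fun hx => SubmonoidClass.swap_mem_trans G hzc (htrans hzd hx)⟩
    · right
      rw [Set.not_nonempty_iff_eq_empty] at h
      exact Set.disjoint_iff_inter_eq_empty.mpr h
  -- C a is a block
  have hblock : MulAction.IsBlock G (C a) := by
    intro g₁ g₂ hne
    rw [hsmul, hsmul] at *
    rcases heqd ((g₁ : Equiv.Perm Ω) a) ((g₂ : Equiv.Perm Ω) a) with h | h
    · exact absurd h hne
    · exact h
  -- C a is not subsingleton, hence univ
  have hb : b ∈ C a := hswap
  have hnotss : ¬ (C a).Subsingleton := fun h => hab (h (hself a) hb)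
  have huniv : C a = Set.univ := (hprim.2 (C a) hblock).resolve_left hnotss
  -- all transpositions are in G
  have hall : ∀ x y : Ω, Equiv.swap x y ∈ G := by
    intro x y
    have hx : x ∈ C a := huniv ▸ Set.mem_univ x
    have hy : y ∈ C a := huniv ▸ Set.mem_univ y
    exact htrans hx hy
  rw [eq_top_iff, ← Equiv.Perm.closure_isSwap, Subgroup.closure_le]
  rintro σ ⟨x, y, -, rfl⟩
  exact hall x y
end

section
/- Let Ω be a finite set partitioned into two disjoint nonempty subsets Ω₁ and Ω₂. Let ρ₀,…,ρ_{r−1} ∈ Sym(Ω) be involutions satisfying the string property. Suppose there exist an index i ∈ {0,…,r−1} and points a ∈ Ω₁, b ∈ Ω₂ such that ρᵢ is exactly the transposition (a b), every ρⱼ with j < i fixes each point of Ω₂, and every ρⱼ with j > i fixes each point of Ω₁. If the subgroup G := ⟨ρ₀,…,ρ_{r−1}⟩ acts transitively on Ω, then G = Sym(Ω) (i.e. G = ⊤). -/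
theorem Equiv.Perm.inv_apply_self {α : Type*} (f : Equiv.Perm α) (x : α) : f⁻¹ (f x) = x :=
  Equiv.symm_apply_apply f x

theorem Equiv.Perm.apply_inv_self {α : Type*} (f : Equiv.Perm α) (x : α) : f (f⁻¹ x) = x :=
  Equiv.apply_symm_apply f x

/-- If a string group generated by involutions on a finite set `Ω` has a "perfect split"
`ρ i = (a b)` across a partition `Ω = Ω₁ ∪ Ω₂` (all earlier generators supported on `Ω₁`,
all later ones on `Ω₂`) and acts transitively, then it is the full symmetric group. -/
theorem perfect_split_transitive_eq_symm
    {Ω : Type*} [Fintype Ω] [DecidableEq Ω]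
    (Ω₁ Ω₂ : Set Ω) (hdisj : Disjoint Ω₁ Ω₂) (hunion : Ω₁ ∪ Ω₂ = Set.univ)
    (hne₁ : Ω₁.Nonempty) (hne₂ : Ω₂.Nonempty)
    (r : ℕ) (ρ : Fin r → Equiv.Perm Ω)
    (hinv : ∀ j : Fin r, orderOf (ρ j) = 2)
    (hstring : ∀ j k : Fin r, (j : ℕ) + 2 ≤ (k : ℕ) ∨ (k : ℕ) + 2 ≤ (j : ℕ) →
      (ρ j * ρ k) ^ 2 = 1)
    (i : Fin r) (a b : Ω) (ha : a ∈ Ω₁) (hb : b ∈ Ω₂)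
    (hi : ρ i = Equiv.swap a b)
    (hbefore : ∀ j : Fin r, (j : ℕ) < (i : ℕ) → ∀ x ∈ Ω₂, ρ j x = x)
    (hafter : ∀ j : Fin r, (i : ℕ) < (j : ℕ) → ∀ x ∈ Ω₁, ρ j x = x)
    (htrans : ∀ x y : Ω, ∃ g ∈ Subgroup.closure (Set.range ρ), g x = y) :
    Subgroup.closure (Set.range ρ) = ⊤ := by
  classical
  set G := Subgroup.closure (Set.range ρ) with hG
  -- basic facts
  have hsq : ∀ j : Fin r, ∀ x : Ω, ρ j (ρ j x) = x := by
    intro j x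
    have h2 : ρ j ^ 2 = 1 := by rw [← hinv j]; exact pow_orderOf_eq_one (ρ j)
    have := congrArg (fun σ : Equiv.Perm Ω => σ x) h2
    simpa [sq, Equiv.Perm.mul_apply] using this
  have hmem12 : ∀ x : Ω, x ∈ Ω₁ ∨ x ∈ Ω₂ := by
    intro x
    have : x ∈ Ω₁ ∪ Ω₂ := by rw [hunion]; trivial
    exact this
  have hnot : ∀ x : Ω, x ∈ Ω₁ → x ∈ Ω₂ → False := fun x h1 h2 =>
    Set.disjoint_left.mp hdisj h1 h2
  -- the two "side" subgroups
  set A := Subgroup.closure {g : Equiv.Perm Ω | ∃ j : Fin r, (j : ℕ) < (i : ℕ) ∧ ρ j = g} with hA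
  set B := Subgroup.closure {g : Equiv.Perm Ω | ∃ j : Fin r, (i : ℕ) < (j : ℕ) ∧ ρ j = g} with hB
  have hAG : A ≤ G := by
    rw [hA]
    apply Subgroup.closure_le G |>.mpr
    rintro g ⟨j, _, rfl⟩
    exact Subgroup.subset_closure ⟨j, rfl⟩
  have hBG : B ≤ G := by
    rw [hB]
    apply Subgroup.closure_le G |>.mpr
    rintro g ⟨j, _, rfl⟩
    exact Subgroup.subset_closure ⟨j, rfl⟩
  -- A fixes Ω₂ pointwise, B fixes Ω₁ pointwise
  have hAfix : ∀ u ∈ A, ∀ x ∈ Ω₂, u x = x := by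
    intro u hu
    induction hu using Subgroup.closure_induction with
    | mem g hg =>
      obtain ⟨j, hj, rfl⟩ := hg
      exact hbefore j hj
    | one => intro x _; rfl
    | mul g h _ _ hg hh =>
      intro x hx
      simp only [Equiv.Perm.mul_apply]
      rw [hh x hx, hg x hx]
    | inv g _ hg =>
      intro x hx
      have := hg x hx
      calc g⁻¹ x = g⁻¹ (g x) := by rw [this]
        _ = x := Equiv.Perm.inv_apply_self g x
  have hBfix : ∀ v ∈ B, ∀ x ∈ Ω₁, v x = x := by
    intro v hv
    induction hv using Subgroup.closure_induction with
    | mem g hg =>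
      obtain ⟨j, hj, rfl⟩ := hg
      exact hafter j hj
    | one => intro x _; rfl
    | mul g h _ _ hg hh =>
      intro x hx
      simp only [Equiv.Perm.mul_apply]
      rw [hh x hx, hg x hx]
    | inv g _ hg =>
      intro x hx
      have := hg x hx
      calc g⁻¹ x = g⁻¹ (g x) := by rw [this]
        _ = x := Equiv.Perm.inv_apply_self g x
  -- A preserves Ω₁, B preserves Ω₂
  have hApres : ∀ u ∈ A, ∀ x ∈ Ω₁, u x ∈ Ω₁ := by
    intro u hu x hx
    rcases hmem12 (u x) with h | h
    · exact h
    · exfalso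
      have h1 : u⁻¹ (u x) = u x := hAfix u⁻¹ (inv_mem hu) (u x) h
      rw [Equiv.Perm.inv_apply_self] at h1
      rw [← h1] at h
      exact hnot x hx h
  have hBpres : ∀ v ∈ B, ∀ x ∈ Ω₂, v x ∈ Ω₂ := by
    intro v hv x hx
    rcases hmem12 (v x) with h | h
    · exfalso
      have h1 : v⁻¹ (v x) = v x := hBfix v⁻¹ (inv_mem hv) (v x) h
      rw [Equiv.Perm.inv_apply_self] at h1
      rw [← h1] at h
      exact hnot x h hx
    · exact h
  -- the reachable set
  set S : Set Ω := {x | ∃ u ∈ A, u a = x} ∪ {x | ∃ v ∈ B, v b = x} with hS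
  have hSA : ∀ x : Ω, (∃ u ∈ A, u a = x) → x ∈ Ω₁ := by
    rintro x ⟨u, hu, rfl⟩; exact hApres u hu a ha
  have hSB : ∀ x : Ω, (∃ v ∈ B, v b = x) → x ∈ Ω₂ := by
    rintro x ⟨v, hv, rfl⟩; exact hBpres v hv b hb
  -- each generator preserves S
  have hstep : ∀ j : Fin r, ∀ x ∈ S, ρ j x ∈ S := by
    intro j x hx
    rcases lt_trichotomy (j : ℕ) (i : ℕ) with hj | hj | hj
    · rcases hx with hx | hx
      · obtain ⟨u, hu, rfl⟩ := hx
        exact Or.inl ⟨ρ j * u, mul_mem (Subgroup.subset_closure ⟨j, hj, rfl⟩) hu, rfl⟩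
      · have hx2 := hSB x hx
        rw [hbefore j hj x hx2]
        exact Or.inr hx
    · have hji : j = i := Fin.ext hj
      subst hji
      rw [hi]
      rcases hx with hx | hx
      · have hx1 := hSA x hx
        by_cases hxa : x = a
        · subst hxa
          rw [Equiv.swap_apply_left]
          exact Or.inr ⟨1, one_mem B, rfl⟩
        · have hxb : x ≠ b := fun h => hnot x hx1 (h ▸ hb)
          rw [Equiv.swap_apply_of_ne_of_ne hxa hxb]
          exact Or.inl hx
      · have hx2 := hSB x hx
        by_cases hxb : x = b
        · subst hxb
          rw [Equiv.swap_apply_right]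
          exact Or.inl ⟨1, one_mem A, rfl⟩
        · have hxa : x ≠ a := fun h => hnot x (h ▸ ha) hx2
          rw [Equiv.swap_apply_of_ne_of_ne hxa hxb]
          exact Or.inr hx
    · rcases hx with hx | hx
      · have hx1 := hSA x hx
        rw [hafter j hj x hx1]
        exact Or.inl hx
      · obtain ⟨v, hv, rfl⟩ := hx
        exact Or.inr ⟨ρ j * v, mul_mem (Subgroup.subset_closure ⟨j, hj, rfl⟩) hv, rfl⟩
  -- G preserves S
  have hstab : ∀ g ∈ G, ∀ x : Ω, x ∈ S ↔ g x ∈ S := by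
    intro g hg
    induction hg using Subgroup.closure_induction with
    | mem g hg =>
      obtain ⟨j, rfl⟩ := hg
      intro x
      constructor
      · exact hstep j x
      · intro h
        have := hstep j (ρ j x) h
        rwa [hsq j x] at this
    | one => intro x; simp
    | mul g h _ _ hg hh =>
      intro x
      rw [hh x, hg (h x)]
      simp [Equiv.Perm.mul_apply]
    | inv g _ hg =>
      intro x
      constructor
      · intro h
        have := (hg (g⁻¹ x)).mpr
        rw [Equiv.Perm.apply_inv_self] at this
        exact (hg (g⁻¹ x)).mpr (by rwa [Equiv.Perm.apply_inv_self])
      · intro h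
        have := (hg (g⁻¹ x)).mp h
        rwa [Equiv.Perm.apply_inv_self] at this
  -- everything is in S
  have hall : ∀ x : Ω, x ∈ S := by
    intro x
    obtain ⟨g, hg, hgx⟩ := htrans a x
    have haS : a ∈ S := Or.inl ⟨1, one_mem A, rfl⟩
    have := (hstab g hg a).mp haS
    rwa [hgx] at this
  -- reach lemmas
  have hreach₁ : ∀ x ∈ Ω₁, ∃ u ∈ A, u a = x := by
    intro x hx
    rcases hall x with h | h
    · exact h
    · exact absurd (hSB x h) (fun h2 => hnot x hx h2)
  have hreach₂ : ∀ y ∈ Ω₂, ∃ v ∈ B, v b = y := by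
    intro y hy
    rcases hall y with h | h
    · exact absurd (hSA y h) (fun h1 => hnot y h1 hy)
    · exact h
  -- all "crossing" swaps are in G
  have hswap : ∀ x ∈ Ω₁, ∀ y ∈ Ω₂, Equiv.swap x y ∈ G := by
    intro x hx y hy
    obtain ⟨u, hu, hua⟩ := hreach₁ x hx
    obtain ⟨v, hv, hvb⟩ := hreach₂ y hy
    have hg : u * v ∈ G := mul_mem (hAG hu) (hBG hv)
    have h1 : (u * v) a = x := by
      simp only [Equiv.Perm.mul_apply]
      rw [hBfix v hv a ha, hua]
    have h2 : (u * v) b = y := by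
      simp only [Equiv.Perm.mul_apply]
      rw [hvb, hAfix u hu y hy]
    have key : Equiv.swap x y = (u * v) * ρ i * (u * v)⁻¹ := by
      rw [hi, ← h1, ← h2]
      exact Equiv.swap_apply_apply (u * v) a b
    rw [key]
    have hρi : ρ i ∈ G := Subgroup.subset_closure ⟨i, rfl⟩
    exact mul_mem (mul_mem hg hρi) (inv_mem hg)
  -- all swaps are in G
  have hswapAll : ∀ x y : Ω, x ≠ y → Equiv.swap x y ∈ G := by
    intro x y hxy
    rcases hmem12 x with hx | hx <;> rcases hmem12 y with hy | hy
    · -- both in Ω₁: conjugate (y b) by (x b)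
      have hxb : x ≠ b := fun h => hnot x hx (h ▸ hb)
      have hyb : y ≠ b := fun h => hnot y hy (h ▸ hb)
      have key : Equiv.swap x y =
          Equiv.swap x b * Equiv.swap y b * (Equiv.swap x b)⁻¹ := by
        have := Equiv.swap_apply_apply (Equiv.swap x b) y b
        rw [Equiv.swap_apply_right, Equiv.swap_apply_of_ne_of_ne hxy.symm hyb] at this
        rw [← this, Equiv.swap_comm]
      rw [key]
      exact mul_mem (mul_mem (hswap x hx b hb) (hswap y hy b hb))
        (inv_mem (hswap x hx b hb))
    · exact hswap x hx y hy
    · rw [Equiv.swap_comm]; exact hswap y hy x hx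
    · -- both in Ω₂: conjugate (a y) by (a x)
      have hxa : x ≠ a := fun h => hnot x (h ▸ ha) hx
      have hya : y ≠ a := fun h => hnot y (h ▸ ha) hy
      have key : Equiv.swap x y =
          Equiv.swap a x * Equiv.swap a y * (Equiv.swap a x)⁻¹ := by
        have := Equiv.swap_apply_apply (Equiv.swap a x) a y
        rw [Equiv.swap_apply_left, Equiv.swap_apply_of_ne_of_ne hya hxy.symm] at this
        rw [← this]
      rw [key]
      exact mul_mem (mul_mem (hswap a ha x hx) (hswap a ha y hy))
        (inv_mem (hswap a ha x hx))
  -- conclude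
  rw [eq_top_iff, ← Equiv.Perm.closure_isSwap, Subgroup.closure_le]
  rintro σ ⟨x, y, hxy, rfl⟩
  exact hswapAll x y hxy
end

section
/- Let Ω be a finite set partitioned into two disjoint subsets Ω₁ and Ω₂. Let ρ₀,…,ρ_{r−1} ∈ Sym(Ω) be involutions satisfying the string property. Suppose there exist an index i ∈ {0,…,r−1} and points a ∈ Ω₁, b ∈ Ω₂ such that ρᵢ is exactly the transposition (a b), every ρⱼ with j < i fixes each point of Ω₂, and every ρⱼ with j > i fixes each point of Ω₁. Let G := ⟨ρ₀,…,ρ_{r−1}⟩ and let C ⊆ Ω be the G-orbit of a. Then every permutation σ ∈ Sym(Ω) that fixes every point of Ω \ C belongs to G; in particular G induces the full symmetric group on C. -/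
/-- If a string group generated by involutions on a finite set `Ω` has a "perfect split"
`ρ i = (a b)` across a partition `Ω = Ω₁ ∪ Ω₂`, then the group contains every permutation
supported on the orbit `C` of `a`; in particular it induces the full symmetric group on `C`. -/
theorem perfect_split_full_symmetric_on_orbit
    {Ω : Type*} [Fintype Ω] [DecidableEq Ω]
    (Ω₁ Ω₂ : Set Ω) (hdisj : Disjoint Ω₁ Ω₂) (hunion : Ω₁ ∪ Ω₂ = Set.univ)
    (r : ℕ) (ρ : Fin r → Equiv.Perm Ω)
    (hinv : ∀ j : Fin r, orderOf (ρ j) = 2)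
    (hstring : ∀ j k : Fin r, (j : ℕ) + 2 ≤ (k : ℕ) ∨ (k : ℕ) + 2 ≤ (j : ℕ) →
      (ρ j * ρ k) ^ 2 = 1)
    (i : Fin r) (a b : Ω) (ha : a ∈ Ω₁) (hb : b ∈ Ω₂)
    (hi : ρ i = Equiv.swap a b)
    (hbefore : ∀ j : Fin r, (j : ℕ) < (i : ℕ) → ∀ x ∈ Ω₂, ρ j x = x)
    (hafter : ∀ j : Fin r, (i : ℕ) < (j : ℕ) → ∀ x ∈ Ω₁, ρ j x = x)
    (C : Set Ω) (hC : C = {x : Ω | ∃ g ∈ Subgroup.closure (Set.range ρ), g a = x}) :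
    ∀ σ : Equiv.Perm Ω, (∀ x : Ω, x ∉ C → σ x = x) → σ ∈ Subgroup.closure (Set.range ρ) := by
  set G := Subgroup.closure (Set.range ρ) with hG
  have hρmem : ∀ j, ρ j ∈ G := fun j => Subgroup.subset_closure ⟨j, rfl⟩
  have hsq : ∀ j, ρ j * ρ j = 1 := by
    intro j
    have h := pow_orderOf_eq_one (ρ j)
    rwa [hinv j, pow_two] at h
  have hρρ : ∀ j x, ρ j (ρ j x) = x := by
    intro j x
    have := congrArg (fun g : Equiv.Perm Ω => g x) (hsq j)
    simpa using this
  have hab : Equiv.swap a b ∈ G := hi ▸ hρmem i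
  have hne : a ≠ b := fun h => (hdisj.ne_of_mem ha hb) h
  -- conjugation helper
  have hconj : ∀ (f : Equiv.Perm Ω) (x y : Ω), f ∈ G → Equiv.swap x y ∈ G →
      Equiv.swap (f x) (f y) ∈ G := by
    intro f x y hf hxy
    rw [Equiv.swap_apply_apply]
    exact mul_mem (mul_mem hf hxy) (inv_mem hf)
  -- a-swaps vs b-swaps
  have keyab : ∀ x, Equiv.swap a x ∈ G → Equiv.swap b x ∈ G := by
    intro x hx
    by_cases h1 : x = a
    · subst h1; rw [Equiv.swap_comm]; exact hab
    by_cases h2 : x = b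
    · subst h2; rw [Equiv.swap_self]; exact one_mem _
    · have := hconj (Equiv.swap a b) a x hab hx
      rwa [Equiv.swap_apply_left, Equiv.swap_apply_of_ne_of_ne h1 h2] at this
  have keyba : ∀ x, Equiv.swap b x ∈ G → Equiv.swap a x ∈ G := by
    intro x hx
    by_cases h1 : x = b
    · subst h1; exact hab
    by_cases h2 : x = a
    · subst h2; rw [Equiv.swap_self]; exact one_mem _
    · have := hconj (Equiv.swap a b) b x hab hx
      rwa [Equiv.swap_apply_right, Equiv.swap_apply_of_ne_of_ne h2 h1] at this
  -- step lemma
  have pstep : ∀ (j : Fin r) (x : Ω), Equiv.swap a x ∈ G → Equiv.swap a (ρ j x) ∈ G := by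
    intro j x hx
    rcases lt_trichotomy (j : ℕ) (i : ℕ) with hlt | heq | hgt
    · have hbfix : ρ j b = b := hbefore j hlt b hb
      have := hconj (ρ j) b x (hρmem j) (keyab x hx)
      rw [hbfix] at this
      exact keyba _ this
    · have hji : j = i := Fin.ext heq
      subst hji
      have := hconj (ρ j) b x (hρmem j) (keyab x hx)
      rw [hi, Equiv.swap_apply_right] at this
      rw [hi]
      exact this
    · have hafix : ρ j a = a := hafter j hgt a ha
      have := hconj (ρ j) a x (hρmem j) hx
      rwa [hafix] at this
  -- orbit lemma
  have horb : ∀ x ∈ C, Equiv.swap a x ∈ G := by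
    intro x hx
    rw [hC] at hx
    obtain ⟨g, hg, rfl⟩ := hx
    have haa : Equiv.swap a a ∈ G := by rw [Equiv.swap_self]; exact one_mem _
    refine Subgroup.closure_induction
      (p := fun g _ => ∀ y, Equiv.swap a y ∈ G ↔ Equiv.swap a (g y) ∈ G)
      ?_ ?_ ?_ ?_ hg a |>.mp haa
    · rintro _ ⟨j, rfl⟩ y
      refine ⟨pstep j y, fun h => ?_⟩
      have := pstep j _ h
      rwa [hρρ j y] at this
    · intro y; simp
    · intro g h _ _ hgp hhp y
      rw [hhp y, hgp (h y)]; simp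
    · intro g _ hgp y
      have := (hgp (g⁻¹ y)).symm
      rwa [← Equiv.Perm.mul_apply g g⁻¹ y, mul_inv_cancel, Equiv.Perm.one_apply] at this
  -- swaps inside C
  have hswapC : ∀ x y, x ∈ C → y ∈ C → Equiv.swap x y ∈ G := by
    intro x y hx hy
    by_cases h1 : x = a
    · subst h1; exact horb y hy
    by_cases h2 : y = a
    · subst h2; rw [Equiv.swap_comm]; exact horb x hx
    by_cases h3 : y = x
    · subst h3; rw [Equiv.swap_self]; exact one_mem _
    · have hx' := horb x hx
      have hy' := horb y hy
      have := hconj (Equiv.swap a x) a y hx' hy'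
      rwa [Equiv.swap_apply_left, Equiv.swap_apply_of_ne_of_ne h2 h3] at this
  -- main induction on support size
  have main : ∀ n (σ : Equiv.Perm Ω), σ.support.card ≤ n → (∀ x ∉ C, σ x = x) → σ ∈ G := by
    intro n
    induction n with
    | zero =>
      intro σ hcard _
      have : σ.support = ∅ := Finset.card_eq_zero.mp (Nat.le_zero.mp hcard)
      have : σ = 1 := by rwa [Equiv.Perm.support_eq_empty_iff] at this
      rw [this]; exact one_mem _
    | succ n ih =>
      intro σ hcard hfix
      by_cases h1 : σ = 1
      · rw [h1]; exact one_mem _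
      · obtain ⟨x, hx⟩ : ∃ x, σ x ≠ x := by
          by_contra h
          push_neg at h
          exact h1 (Equiv.ext h)
        have hxC : x ∈ C := by
          by_contra h; exact hx (hfix x h)
        have hσxC : σ x ∈ C := by
          by_contra h
          exact hx (σ.injective (hfix (σ x) h))
        set τ := Equiv.swap x (σ x) with hτ
        set σ' := τ * σ with hσ'
        have hcard' : σ'.support.card ≤ n := by
          have h := Equiv.Perm.card_support_swap_mul hx
          rw [hσ', hτ]
          omega
        have hfix' : ∀ z ∉ C, σ' z = z := by
          intro z hz
          have hz1 : z ≠ x := fun h => hz (h ▸ hxC)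
          have hz2 : z ≠ σ x := fun h => hz (h ▸ hσxC)
          simp only [hσ', Equiv.Perm.mul_apply, hfix z hz, hτ,
            Equiv.swap_apply_of_ne_of_ne hz1 hz2]
        have hσ'G : σ' ∈ G := ih σ' hcard' hfix'
        have hτG : τ ∈ G := hswapC x (σ x) hxC hσxC
        have : σ = τ * σ' := by
          rw [hσ', ← mul_assoc, hτ, Equiv.swap_mul_self, one_mul]
        rw [this]
        exact mul_mem hτG hσ'G
  intro σ hσ
  exact main σ.support.card σ le_rfl hσ
end

section
/- Let Ω be a finite set and let (ρ₀,…,ρ_{r−1}) be a string C-group representation in Sym(Ω) (the ρⱼ are involutions generating a subgroup, with the string property and intersection property) such that ρ₀ is exactly the transposition (A a) for some distinct A, a ∈ Ω, and ρⱼ(A) = A for every j with 1 ≤ j ≤ r−1. Form Ω' := Option Ω, regarding the new point none as a new vertex B; extend each ρⱼ to a permutation of Ω' fixing none (via Option.map / Equiv.optionCongr), and define ρ₋₁ := the transposition swapping none and some A. Then the list (ρ₋₁, ρ₀, …, ρ_{r−1}) of r+1 involutions in Sym(Ω') satisfies both the string property and the intersection property, i.e. it is a string C-group representation of the subgroup it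 generates. -/
open Equiv Subgroup

namespace ExtAux
set_option linter.unusedSectionVars false
variable {Ω : Type*} [DecidableEq Ω]

def oc (Ω : Type*) : Equiv.Perm Ω →* Equiv.Perm (Option Ω) where
  toFun := Equiv.optionCongr
  map_one' := Equiv.optionCongr_one
  map_mul' := fun σ τ => by ext x; cases x <;> simp

@[simp] lemma oc_none (σ : Equiv.Perm Ω) : oc Ω σ none = none := rfl
@[simp] lemma oc_some (σ : Equiv.Perm Ω) (x : Ω) : oc Ω σ (some x) = some (σ x) := rfl

lemma oc_injective : Function.Injective (oc Ω) := fun _ _ h => Equiv.optionCongr_injective h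

lemma comm_of_fix (A : Ω) (σ : Equiv.Perm Ω) (h : σ A = A) :
    Equiv.swap (none : Option Ω) (some A) * oc Ω σ = oc Ω σ * Equiv.swap none (some A) := by
  have h1 : oc Ω σ * Equiv.swap (none : Option Ω) (some A) * (oc Ω σ)⁻¹
      = Equiv.swap (none : Option Ω) (some A) := by
    rw [← Equiv.swap_apply_apply, oc_none, oc_some, h]
  calc Equiv.swap (none : Option Ω) (some A) * oc Ω σ
      = (oc Ω σ * Equiv.swap (none : Option Ω) (some A) * (oc Ω σ)⁻¹) * oc Ω σ := by rw [h1]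
    _ = oc Ω σ * Equiv.swap none (some A) := by group

lemma core (A b : Ω) (hAb : A ≠ b) (v : Equiv.Perm Ω) (hv : v A = b) :
    Equiv.swap (none : Option Ω) (some A) * oc Ω v * Equiv.swap none (some A)
      = oc Ω (Equiv.swap A b) * (Equiv.swap none (some A) * oc Ω v) := by
  have hb1 : (some b : Option Ω) ≠ none := by simp
  have hb2 : (some b : Option Ω) ≠ some A := by simpa using hAb.symm
  ext x
  simp only [Equiv.Perm.mul_apply]
  cases x with
  | none =>
    rw [Equiv.swap_apply_left, oc_some, hv, Equiv.swap_apply_of_ne_of_ne hb1 hb2,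
        oc_none, Equiv.swap_apply_left, oc_some, Equiv.swap_apply_left]
  | some y =>
    by_cases hy : y = A
    · subst hy
      rw [Equiv.swap_apply_right, oc_none, Equiv.swap_apply_left, oc_some, hv,
          Equiv.swap_apply_of_ne_of_ne hb1 hb2, oc_some, Equiv.swap_apply_right]
    · have hy1 : (some y : Option Ω) ≠ none := by simp
      have hy2 : (some y : Option Ω) ≠ some A := by simpa using hy
      rw [Equiv.swap_apply_of_ne_of_ne hy1 hy2, oc_some]
      have h1 : v y ≠ b := fun h => hy (v.injective (h.trans hv.symm))
      by_cases h2 : v y = A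
      · rw [h2, Equiv.swap_apply_right, oc_none]
      · have hv1 : (some (v y) : Option Ω) ≠ none := by simp
        have hv2 : (some (v y) : Option Ω) ≠ some A := by simpa using h2
        rw [Equiv.swap_apply_of_ne_of_ne hv1 hv2, oc_some,
            Equiv.swap_apply_of_ne_of_ne h2 h1]

variable {r : ℕ}

lemma fixA_closure (ρ : Fin r → Equiv.Perm Ω) (A : Ω)
    (S : Set (Fin r)) (hS : ∀ j ∈ S, ρ j A = A)
    {u : Equiv.Perm Ω} (hu : u ∈ Subgroup.closure (ρ '' S)) : u A = A := by
  have hle : Subgroup.closure (ρ '' S) ≤ MulAction.stabilizer (Equiv.Perm Ω) A := by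
    rw [Subgroup.closure_le]
    rintro x ⟨j, hj, rfl⟩
    simpa [MulAction.mem_stabilizer_iff, Equiv.Perm.smul_def] using hS j hj
  simpa [MulAction.mem_stabilizer_iff, Equiv.Perm.smul_def] using hle hu

lemma L1 (hr : 1 ≤ r) (ρ : Fin r → Equiv.Perm Ω) (A a : Ω) (hAa : A ≠ a)
    (h0 : ρ ⟨0, hr⟩ = Equiv.swap A a)
    (hfixA : ∀ j : Fin r, 1 ≤ (j : ℕ) → ρ j A = A)
    (hsq : ∀ j, ρ j * ρ j = 1)
    (T : Set (Fin r)) {k : Equiv.Perm Ω} (hk : k ∈ Subgroup.closure (ρ '' T)) :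
    k A = A ∨ ((⟨0, hr⟩ : Fin r) ∈ T ∧
      ∃ u ∈ Subgroup.closure (ρ '' (T \ {⟨0, hr⟩})), k A = u a) := by
  have hfix' : ∀ j ∈ T \ {(⟨0, hr⟩ : Fin r)}, ρ j A = A := by
    rintro j ⟨hjI, hj0⟩
    refine hfixA j ?_
    rcases Nat.eq_zero_or_pos (j : ℕ) with h | h
    · exact absurd (Fin.ext h) hj0
    · exact h
  have hstab : ∀ u ∈ Subgroup.closure (ρ '' (T \ {(⟨0, hr⟩ : Fin r)})), u A = A :=
    fun u hu => fixA_closure ρ A _ hfix' hu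
  have step : ∀ x ∈ ρ '' T, ∀ y : Equiv.Perm Ω,
      (y A = A ∨ ((⟨0, hr⟩ : Fin r) ∈ T ∧
        ∃ u ∈ Subgroup.closure (ρ '' (T \ {⟨0, hr⟩})), y A = u a)) →
      ((x * y) A = A ∨ ((⟨0, hr⟩ : Fin r) ∈ T ∧
        ∃ u ∈ Subgroup.closure (ρ '' (T \ {⟨0, hr⟩})), (x * y) A = u a)) := by
    rintro x ⟨j, hjI, rfl⟩ y ih
    by_cases hj : j = (⟨0, hr⟩ : Fin r)
    · subst hj
      rcases ih with h | ⟨h0I, u, hu, hy⟩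
      · refine Or.inr ⟨hjI, 1, one_mem _, ?_⟩
        simp [Equiv.Perm.mul_apply, h, h0]
      · have huA : u A = A := hstab u hu
        have hua : u a ≠ A := fun h =>
          hAa (u.injective (huA.trans h.symm))
        by_cases h2 : u a = a
        · left
          simp [Equiv.Perm.mul_apply, hy, h2, h0]
        · refine Or.inr ⟨h0I, u, hu, ?_⟩
          simp [Equiv.Perm.mul_apply, hy, h0, Equiv.swap_apply_of_ne_of_ne hua h2]
    · have hj1 : 1 ≤ (j : ℕ) := by
        rcases Nat.eq_zero_or_pos (j : ℕ) with h | h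
        · exact absurd (Fin.ext h) hj
        · exact h
      rcases ih with h | ⟨h0I, u, hu, hy⟩
      · left; simp [Equiv.Perm.mul_apply, h, hfixA j hj1]
      · refine Or.inr ⟨h0I, ρ j * u,
          mul_mem (subset_closure ⟨j, ⟨hjI, hj⟩, rfl⟩) hu, ?_⟩
        simp [Equiv.Perm.mul_apply, hy]
  induction hk using Subgroup.closure_induction_left with
  | one => exact Or.inl rfl
  | mul_left x hx y hy ih => exact step x hx y ih
  | inv_mul_cancel x hx y hy ih =>
    obtain ⟨j, hj, rfl⟩ := hx
    rw [inv_eq_of_mul_eq_one_right (hsq j)]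
    exact step _ ⟨j, hj, rfl⟩ y ih

lemma L2 (hr : 1 ≤ r) (ρ : Fin r → Equiv.Perm Ω) (A a : Ω) (hAa : A ≠ a)
    (h0 : ρ ⟨0, hr⟩ = Equiv.swap A a)
    (hfixA : ∀ j : Fin r, 1 ≤ (j : ℕ) → ρ j A = A)
    (hsq : ∀ j, ρ j * ρ j = 1)
    (T : Set (Fin r)) {g : Equiv.Perm (Option Ω)}
    (hg : g ∈ Subgroup.closure
      ({Equiv.swap none (some A)} ∪ (oc Ω) '' (ρ '' T))) :
    g ∈ (Subgroup.closure (ρ '' T)).map (oc Ω) ∨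
      ∃ k₁ ∈ (Subgroup.closure (ρ '' T)).map (oc Ω),
      ∃ k₂ ∈ (Subgroup.closure (ρ '' T)).map (oc Ω),
        g = k₁ * Equiv.swap none (some A) * k₂ := by
  set τ : Equiv.Perm (Option Ω) := Equiv.swap none (some A) with hτdef
  set K : Subgroup (Equiv.Perm (Option Ω)) :=
    (Subgroup.closure (ρ '' T)).map (oc Ω) with hKdef
  have hfix' : ∀ j ∈ T \ {(⟨0, hr⟩ : Fin r)}, ρ j A = A := by
    rintro j ⟨hjI, hj0⟩
    refine hfixA j ?_
    rcases Nat.eq_zero_or_pos (j : ℕ) with h | h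
    · exact absurd (Fin.ext h) hj0
    · exact h
  have step : ∀ x ∈ ({τ} ∪ (oc Ω) '' (ρ '' T) : Set (Equiv.Perm (Option Ω))),
      ∀ y : Equiv.Perm (Option Ω),
      (y ∈ K ∨ ∃ k₁ ∈ K, ∃ k₂ ∈ K, y = k₁ * τ * k₂) →
      (x * y ∈ K ∨ ∃ k₁ ∈ K, ∃ k₂ ∈ K, x * y = k₁ * τ * k₂) := by
    rintro x (rfl | ⟨σ, ⟨j, hj, rfl⟩, rfl⟩) y hy
    · -- x = τ
      rcases hy with hyK | ⟨k₁, hk₁, k₂, hk₂, rfl⟩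
      · exact Or.inr ⟨1, one_mem _, y, hyK, by rw [one_mul]⟩
      · obtain ⟨kb₁, hkb₁, rfl⟩ := hk₁
        rcases L1 hr ρ A a hAa h0 hfixA hsq T hkb₁ with hA | ⟨h0T, u, hu, hb⟩
        · -- kb₁ fixes A : τ commutes with it
          left
          have hc := comm_of_fix A kb₁ hA
          have : τ * (oc Ω kb₁ * τ * k₂) = (τ * oc Ω kb₁) * τ * k₂ := by group
          rw [this, hc]
          have : oc Ω kb₁ * τ * τ * k₂ = oc Ω kb₁ * (τ * τ) * k₂ := by group
          rw [this, hτdef, Equiv.swap_mul_self, mul_one]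
          exact mul_mem ⟨kb₁, hkb₁, rfl⟩ hk₂
        · -- kb₁ A = u a
          have huA : u A = A := fixA_closure ρ A _ hfix' hu
          have huT : u ∈ Subgroup.closure (ρ '' T) :=
            Subgroup.closure_mono (Set.image_mono Set.diff_subset) hu
          set v : Equiv.Perm Ω := u⁻¹ * kb₁ with hvdef
          have hvA : v A = a := by
            have : v A = u⁻¹ (kb₁ A) := rfl
            rw [this, hb, ← Equiv.Perm.mul_apply, inv_mul_cancel, Equiv.Perm.one_apply]
          have hcore := core A a hAa v hvA
          have hcu := comm_of_fix A u huA
          have key : τ * oc Ω kb₁ * τ = oc Ω (u * Equiv.swap A a) * τ * oc Ω v := by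
            have h1 : oc Ω kb₁ = oc Ω u * oc Ω v := by
              rw [← map_mul]; congr 1; rw [hvdef]; group
            rw [h1]
            calc τ * (oc Ω u * oc Ω v) * τ
                = (τ * oc Ω u) * (oc Ω v * τ) := by group
              _ = (oc Ω u * τ) * (oc Ω v * τ) := by rw [hcu]
              _ = oc Ω u * (τ * oc Ω v * τ) := by group
              _ = oc Ω u * (oc Ω (Equiv.swap A a) * (τ * oc Ω v)) := by rw [hcore]
              _ = oc Ω (u * Equiv.swap A a) * τ * oc Ω v := by rw [map_mul (oc Ω) u (Equiv.swap A a)]; group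
          refine Or.inr ⟨oc Ω (u * Equiv.swap A a),
            ⟨u * Equiv.swap A a,
              mul_mem huT (by rw [← h0]; exact subset_closure ⟨_, h0T, rfl⟩), rfl⟩,
            oc Ω v * k₂,
            mul_mem ⟨v, mul_mem (inv_mem huT) hkb₁, rfl⟩ hk₂, ?_⟩
          calc τ * (oc Ω kb₁ * τ * k₂) = (τ * oc Ω kb₁ * τ) * k₂ := by group
            _ = (oc Ω (u * Equiv.swap A a) * τ * oc Ω v) * k₂ := by rw [key]
            _ = oc Ω (u * Equiv.swap A a) * τ * (oc Ω v * k₂) := by group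
    · -- x = oc (ρ j)
      have hxK : oc Ω (ρ j) ∈ K := ⟨ρ j, subset_closure ⟨j, hj, rfl⟩, rfl⟩
      rcases hy with hyK | ⟨k₁, hk₁, k₂, hk₂, rfl⟩
      · exact Or.inl (mul_mem hxK hyK)
      · exact Or.inr ⟨oc Ω (ρ j) * k₁, mul_mem hxK hk₁, k₂, hk₂, by group⟩
  induction hg using Subgroup.closure_induction_left with
  | one => exact Or.inl (one_mem _)
  | mul_left x hx y hy ih => exact step x hx y ih
  | inv_mul_cancel x hx y hy ih =>
    have hxx : x⁻¹ = x := by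
      rcases hx with rfl | ⟨σ, ⟨j, hj, rfl⟩, rfl⟩
      · exact Equiv.swap_inv _ _
      · rw [← map_inv, inv_eq_of_mul_eq_one_right (hsq j)]
    rw [hxx]
    exact step x hx y ih


lemma image_eq_of_not_mem (ρ' : Fin (r + 1) → Equiv.Perm (Option Ω))
    {I : Set (Fin (r + 1))} (hI : (⟨0, Nat.succ_pos r⟩ : Fin (r + 1)) ∉ I) :
    ρ' '' I = (fun j : Fin r => ρ' j.succ) '' {j | j.succ ∈ I} := by
  ext x
  constructor
  · rintro ⟨i, hi, rfl⟩
    rcases Fin.eq_zero_or_eq_succ i with rfl | ⟨j, rfl⟩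
    · exact absurd hi hI
    · exact ⟨j, hi, rfl⟩
  · rintro ⟨j, hj, rfl⟩
    exact ⟨j.succ, hj, rfl⟩

lemma image_eq_of_mem (ρ' : Fin (r + 1) → Equiv.Perm (Option Ω))
    {I : Set (Fin (r + 1))} (hI : (⟨0, Nat.succ_pos r⟩ : Fin (r + 1)) ∈ I) :
    ρ' '' I = {ρ' ⟨0, Nat.succ_pos r⟩} ∪ (fun j : Fin r => ρ' j.succ) '' {j | j.succ ∈ I} := by
  ext x
  constructor
  · rintro ⟨i, hi, rfl⟩
    rcases Fin.eq_zero_or_eq_succ i with rfl | ⟨j, rfl⟩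
    · exact Or.inl rfl
    · exact Or.inr ⟨j, hi, rfl⟩
  · rintro (rfl | ⟨j, hj, rfl⟩)
    · exact ⟨⟨0, Nat.succ_pos r⟩, hI, rfl⟩
    · exact ⟨j.succ, hj, rfl⟩

end ExtAux

open ExtAux in
/-- Extending a string C-group representation whose first generator is a transposition
`(A a)`, with `A` fixed by all other generators, by a new first generator swapping a new
point `B = none` with `A`, again yields a string C-group representation. -/
theorem extension_by_new_first_generator_is_string_C_group
    {Ω : Type*} [Fintype Ω] [DecidableEq Ω]
    (r : ℕ) (hr : 1 ≤ r) (ρ : Fin r → Equiv.Perm Ω)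
    (hinv : ∀ j : Fin r, orderOf (ρ j) = 2)
    (hstring : ∀ j k : Fin r, (j : ℕ) + 2 ≤ (k : ℕ) ∨ (k : ℕ) + 2 ≤ (j : ℕ) →
      (ρ j * ρ k) ^ 2 = 1)
    (hIP : ∀ I J : Set (Fin r),
      Subgroup.closure (ρ '' I) ⊓ Subgroup.closure (ρ '' J) = Subgroup.closure (ρ '' (I ∩ J)))
    (A a : Ω) (hAa : A ≠ a)
    (h0 : ρ ⟨0, hr⟩ = Equiv.swap A a)
    (hfixA : ∀ j : Fin r, 1 ≤ (j : ℕ) → ρ j A = A)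
    (ρ' : Fin (r + 1) → Equiv.Perm (Option Ω))
    (hρ'0 : ρ' ⟨0, Nat.succ_pos r⟩ = Equiv.swap none (some A))
    (hρ'succ : ∀ j : Fin r, ρ' j.succ = Equiv.optionCongr (ρ j)) :
    (∀ j k : Fin (r + 1), (j : ℕ) + 2 ≤ (k : ℕ) ∨ (k : ℕ) + 2 ≤ (j : ℕ) →
      (ρ' j * ρ' k) ^ 2 = 1) ∧
    (∀ I J : Set (Fin (r + 1)),
      Subgroup.closure (ρ' '' I) ⊓ Subgroup.closure (ρ' '' J) =
        Subgroup.closure (ρ' '' (I ∩ J))) := by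
  classical
  have hsq : ∀ j, ρ j * ρ j = 1 := fun j => by
    have h := pow_orderOf_eq_one (ρ j)
    rwa [hinv j, pow_two] at h
  have h00 : (0 : Fin (r + 1)) = ⟨0, Nat.succ_pos r⟩ := rfl
  have hρ'succ' : ∀ j : Fin r, ρ' j.succ = ExtAux.oc Ω (ρ j) := fun j => hρ'succ j
  have hsq1 : ∀ x y : Equiv.Perm (Option Ω),
      x * y = y * x → x * x = 1 → y * y = 1 → (x * y) ^ 2 = 1 := by
    intro x y h hx hy
    rw [pow_two]
    calc x * y * (x * y) = x * (y * x) * y := by group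
      _ = x * (x * y) * y := by rw [← h]
      _ = (x * x) * (y * y) := by group
      _ = 1 := by rw [hx, hy, one_mul]
  constructor
  · intro j k hjk
    rcases Fin.eq_zero_or_eq_succ j with rfl | ⟨j', rfl⟩ <;>
      rcases Fin.eq_zero_or_eq_succ k with rfl | ⟨k', rfl⟩
    · simp at hjk
    · have hk1 : 1 ≤ (k' : ℕ) := by
        simp only [Fin.val_zero, Fin.val_succ] at hjk; omega
      rw [h00, hρ'0, hρ'succ' k']
      exact hsq1 _ _ (ExtAux.comm_of_fix A (ρ k') (hfixA k' hk1))
        (Equiv.swap_mul_self _ _) (by rw [← map_mul, hsq, map_one])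
    · have hj1 : 1 ≤ (j' : ℕ) := by
        simp only [Fin.val_zero, Fin.val_succ] at hjk; omega
      rw [h00, hρ'0, hρ'succ' j']
      exact hsq1 _ _ (ExtAux.comm_of_fix A (ρ j') (hfixA j' hj1)).symm
        (by rw [← map_mul, hsq, map_one]) (Equiv.swap_mul_self _ _)
    · rw [hρ'succ' j', hρ'succ' k', ← map_mul, ← map_pow,
        hstring j' k' (by simp only [Fin.val_succ] at hjk; omega), map_one]
  · intro I J
    -- generic helper facts
    have hGle : ∀ K : Set (Fin (r + 1)),
        (Subgroup.closure (ρ '' {j | j.succ ∈ K})).map (ExtAux.oc Ω)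
          ≤ Subgroup.closure (ρ' '' K) := by
      intro K
      rw [MonoidHom.map_closure]
      refine Subgroup.closure_le _ |>.2 ?_
      rintro x ⟨σ, ⟨j, hj, rfl⟩, rfl⟩
      exact Subgroup.subset_closure ⟨j.succ, hj, hρ'succ' j⟩
    have himage : ∀ K : Set (Fin (r + 1)),
        (fun j : Fin r => ρ' j.succ) '' {j | j.succ ∈ K}
          = ExtAux.oc Ω '' (ρ '' {j | j.succ ∈ K}) := by
      intro K
      rw [Set.image_image]
      exact Set.image_congr fun j _ => hρ'succ' j
    have hclosure_not : ∀ K : Set (Fin (r + 1)),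
        (⟨0, Nat.succ_pos r⟩ : Fin (r + 1)) ∉ K →
        Subgroup.closure (ρ' '' K)
          = (Subgroup.closure (ρ '' {j | j.succ ∈ K})).map (ExtAux.oc Ω) := by
      intro K hK
      rw [ExtAux.image_eq_of_not_mem ρ' hK, himage K, MonoidHom.map_closure]
    have hclosure_mem : ∀ K : Set (Fin (r + 1)),
        (⟨0, Nat.succ_pos r⟩ : Fin (r + 1)) ∈ K →
        Subgroup.closure (ρ' '' K)
          = Subgroup.closure ({Equiv.swap none (some A)}
              ∪ ExtAux.oc Ω '' (ρ '' {j | j.succ ∈ K})) := by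
      intro K hK
      rw [ExtAux.image_eq_of_mem ρ' hK, himage K, hρ'0]
    have hfixnone : ∀ (S : Set (Fin r)) (x : Equiv.Perm (Option Ω)),
        x ∈ (Subgroup.closure (ρ '' S)).map (ExtAux.oc Ω) → x none = none := by
      rintro S x ⟨σ, -, rfl⟩
      rfl
    have hfixd : ∀ S : Set (Fin r), ∀ u ∈ Subgroup.closure (ρ '' (S \ {⟨0, hr⟩})), u A = A := by
      intro S u hu
      refine ExtAux.fixA_closure ρ A _ ?_ hu
      rintro j ⟨hjS, hj0⟩
      refine hfixA j ?_
      rcases Nat.eq_zero_or_pos (j : ℕ) with h | h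
      · exact absurd (Fin.ext h) hj0
      · exact h
    have hstab : ∀ K : Set (Fin (r + 1)), ∀ x ∈ Subgroup.closure (ρ' '' K),
        x none = none →
        x ∈ (Subgroup.closure (ρ '' {j | j.succ ∈ K})).map (ExtAux.oc Ω) := by
      intro K x hx hxn
      by_cases hK : (⟨0, Nat.succ_pos r⟩ : Fin (r + 1)) ∈ K
      · rw [hclosure_mem K hK] at hx
        rcases ExtAux.L2 hr ρ A a hAa h0 hfixA hsq _ hx with h | ⟨k₁, hk₁, k₂, hk₂, rfl⟩
        · exact h
        · exfalso
          obtain ⟨kb₁, -, rfl⟩ := hk₁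
          have h2 : k₂ none = none := hfixnone _ k₂ hk₂
          have h3 : (ExtAux.oc Ω kb₁ * Equiv.swap none (some A) * k₂) none
              = some (kb₁ A) := by
            simp [Equiv.Perm.mul_apply, h2]
          rw [h3] at hxn
          exact Option.some_ne_none _ hxn
      · rw [hclosure_not K hK] at hx
        exact hx
    have hfixcase : ∀ x : Equiv.Perm (Option Ω),
        x ∈ Subgroup.closure (ρ' '' I) → x ∈ Subgroup.closure (ρ' '' J) →
        x none = none → x ∈ Subgroup.closure (ρ' '' (I ∩ J)) := by
      intro x hxI hxJ hxn
      have h1 := hstab I x hxI hxn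
      have h2 := hstab J x hxJ hxn
      have h3 : x ∈ (Subgroup.closure (ρ '' {j | j.succ ∈ I})).map (ExtAux.oc Ω)
          ⊓ (Subgroup.closure (ρ '' {j | j.succ ∈ J})).map (ExtAux.oc Ω) :=
        Subgroup.mem_inf.mpr ⟨h1, h2⟩
      rw [← Subgroup.map_inf _ _ _ ExtAux.oc_injective, hIP] at h3
      exact hGle (I ∩ J) h3
    refine le_antisymm ?_ (le_inf
      (Subgroup.closure_mono (Set.image_mono Set.inter_subset_left))
      (Subgroup.closure_mono (Set.image_mono Set.inter_subset_right)))
    intro g hg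
    rw [Subgroup.mem_inf] at hg
    obtain ⟨hgI, hgJ⟩ := hg
    by_cases hgn : g none = none
    · exact hfixcase g hgI hgJ hgn
    · have hI0 : (⟨0, Nat.succ_pos r⟩ : Fin (r + 1)) ∈ I := by
        by_contra h
        rw [hclosure_not I h] at hgI
        exact hgn (hfixnone _ g hgI)
      have hJ0 : (⟨0, Nat.succ_pos r⟩ : Fin (r + 1)) ∈ J := by
        by_contra h
        rw [hclosure_not J h] at hgJ
        exact hgn (hfixnone _ g hgJ)
      have hτIJ : Equiv.swap none (some A) ∈ Subgroup.closure (ρ' '' (I ∩ J)) :=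
        Subgroup.subset_closure ⟨⟨0, Nat.succ_pos r⟩, ⟨hI0, hJ0⟩, hρ'0⟩
      have hgI' := hgI
      have hgJ' := hgJ
      rw [hclosure_mem I hI0] at hgI'
      rw [hclosure_mem J hJ0] at hgJ'
      rcases ExtAux.L2 hr ρ A a hAa h0 hfixA hsq _ hgI'
        with h | ⟨k₁, hk₁, k₂, hk₂, hgk⟩
      · exact absurd (hfixnone _ g h) hgn
      rcases ExtAux.L2 hr ρ A a hAa h0 hfixA hsq _ hgJ'
        with h | ⟨l₁, hl₁, l₂, hl₂, hgl⟩
      · exact absurd (hfixnone _ g h) hgn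
      obtain ⟨kb₁, hkb₁, rfl⟩ := hk₁
      obtain ⟨lb₁, hlb₁, rfl⟩ := hl₁
      have hg1 : g none = some (kb₁ A) := by
        rw [hgk]
        simp [Equiv.Perm.mul_apply, hfixnone _ k₂ hk₂]
      have hg2 : g none = some (lb₁ A) := by
        rw [hgl]
        simp [Equiv.Perm.mul_apply, hfixnone _ l₂ hl₂]
      have hbb : lb₁ A = kb₁ A := Option.some.inj (hg2.symm.trans hg1)
      by_cases hbA : kb₁ A = A
      · -- translate back by τ
        have h6 : (Equiv.swap none (some A) * g) none = none := by
          rw [Equiv.Perm.mul_apply, hg1, hbA, Equiv.swap_apply_right]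
        have h5I : Equiv.swap none (some A) * g ∈ Subgroup.closure (ρ' '' I) :=
          mul_mem (Subgroup.subset_closure ⟨⟨0, Nat.succ_pos r⟩, hI0, hρ'0⟩) hgI
        have h5J : Equiv.swap none (some A) * g ∈ Subgroup.closure (ρ' '' J) :=
          mul_mem (Subgroup.subset_closure ⟨⟨0, Nat.succ_pos r⟩, hJ0, hρ'0⟩) hgJ
        have h7 := hfixcase _ h5I h5J h6
        have h8 : g = Equiv.swap none (some A) * (Equiv.swap none (some A) * g) := by
          rw [← mul_assoc, Equiv.swap_mul_self, one_mul]
        rw [h8]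
        exact mul_mem hτIJ h7
      · -- kb₁ A ≠ A : use the conjugated swap
        rcases ExtAux.L1 hr ρ A a hAa h0 hfixA hsq _ hkb₁ with h | ⟨h0I', u, hu, hb⟩
        · exact absurd h hbA
        rcases ExtAux.L1 hr ρ A a hAa h0 hfixA hsq _ hlb₁ with h | ⟨h0J', u', hu', hb'⟩
        · exact absurd (hbb.symm.trans h) hbA
        have huA : u A = A := hfixd _ u hu
        have hu'A : u' A = A := hfixd _ u' hu'
        have hw : u * ρ ⟨0, hr⟩ * u⁻¹ = Equiv.swap A (kb₁ A) := by
          rw [h0, ← Equiv.swap_apply_apply, huA, ← hb]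
        have hw' : u' * ρ ⟨0, hr⟩ * u'⁻¹ = Equiv.swap A (kb₁ A) := by
          rw [h0, ← Equiv.swap_apply_apply, hu'A, ← hbb, ← hb']
        have hwI : Equiv.swap A (kb₁ A) ∈ Subgroup.closure (ρ '' {j | j.succ ∈ I}) := by
          rw [← hw]
          have huI : u ∈ Subgroup.closure (ρ '' {j | j.succ ∈ I}) :=
            Subgroup.closure_mono (Set.image_mono Set.diff_subset) hu
          exact mul_mem (mul_mem huI
            (Subgroup.subset_closure ⟨⟨0, hr⟩, h0I', rfl⟩)) (inv_mem huI)
        have hwJ : Equiv.swap A (kb₁ A) ∈ Subgroup.closure (ρ '' {j | j.succ ∈ J}) := by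
          rw [← hw']
          have huJ : u' ∈ Subgroup.closure (ρ '' {j | j.succ ∈ J}) :=
            Subgroup.closure_mono (Set.image_mono Set.diff_subset) hu'
          exact mul_mem (mul_mem huJ
            (Subgroup.subset_closure ⟨⟨0, hr⟩, h0J', rfl⟩)) (inv_mem huJ)
        have hwIJ : Equiv.swap A (kb₁ A)
            ∈ Subgroup.closure (ρ '' ({j | j.succ ∈ I} ∩ {j | j.succ ∈ J})) := by
          rw [← hIP]
          exact Subgroup.mem_inf.mpr ⟨hwI, hwJ⟩
        have hmIJ : Equiv.swap none (some A) * ExtAux.oc Ω (Equiv.swap A (kb₁ A))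
            ∈ Subgroup.closure (ρ' '' (I ∩ J)) :=
          mul_mem hτIJ (hGle (I ∩ J) ⟨Equiv.swap A (kb₁ A), hwIJ, rfl⟩)
        have hmg : ((Equiv.swap none (some A) * ExtAux.oc Ω (Equiv.swap A (kb₁ A))) * g)
            none = none := by
          simp [Equiv.Perm.mul_apply, hg1]
        have h5I : (Equiv.swap none (some A) * ExtAux.oc Ω (Equiv.swap A (kb₁ A))) * g
            ∈ Subgroup.closure (ρ' '' I) :=
          mul_mem (Subgroup.closure_mono (Set.image_mono Set.inter_subset_left) hmIJ) hgI
        have h5J : (Equiv.swap none (some A) * ExtAux.oc Ω (Equiv.swap A (kb₁ A))) * g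
            ∈ Subgroup.closure (ρ' '' J) :=
          mul_mem (Subgroup.closure_mono (Set.image_mono Set.inter_subset_right) hmIJ) hgJ
        have h7 := hfixcase _ h5I h5J hmg
        have h8 : g = (Equiv.swap none (some A) * ExtAux.oc Ω (Equiv.swap A (kb₁ A)))⁻¹
            * ((Equiv.swap none (some A) * ExtAux.oc Ω (Equiv.swap A (kb₁ A))) * g) := by
          group
        rw [h8]
        exact mul_mem (inv_mem hmIJ) h7
end

section
/- In Sym(Fin 8), define the involutions ρ₋₁ := (0 1), ρ₀ := (1 2)·(5 6), ρ₁ := (2 3)·(4 5)·(6 7), ρ₂ := (3 4). Then the intersection property fails for the ordered family (ρ₋₁, ρ₀, ρ₁, ρ₂): specifically ⟨ρ₀, ρ₁, ρ₂⟩ ∩ ⟨ρ₋₁, ρ₀⟩ ≠ ⟨ρ₀⟩. -/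
set_option maxRecDepth 10000

/-- The four involutions `(0 1)`, `(1 2)(5 6)`, `(2 3)(4 5)(6 7)`, `(3 4)` of `Sym(Fin 8)`
fail the intersection property: `⟨ρ₀, ρ₁, ρ₂⟩ ⊓ ⟨ρ₋₁, ρ₀⟩ ≠ ⟨ρ₀⟩`. -/
theorem counterexample_S8_intersection_property_fails
    (ρneg : Equiv.Perm (Fin 8)) (ρ0 ρ1 ρ2 : Equiv.Perm (Fin 8))
    (hneg : ρneg = Equiv.swap 0 1)
    (h0 : ρ0 = Equiv.swap 1 2 * Equiv.swap 5 6)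
    (h1 : ρ1 = Equiv.swap 2 3 * Equiv.swap 4 5 * Equiv.swap 6 7)
    (h2 : ρ2 = Equiv.swap 3 4) :
    Subgroup.closure {ρ0, ρ1, ρ2} ⊓ Subgroup.closure {ρneg, ρ0} ≠
      Subgroup.closure {ρ0} := by
  intro h
  set g : Equiv.Perm (Fin 8) := Equiv.swap 5 6 with hgdef
  have ha : ρ0 ∈ Subgroup.closure {ρ0, ρ1, ρ2} :=
    Subgroup.subset_closure (by simp)
  have hb : ρ1 ∈ Subgroup.closure {ρ0, ρ1, ρ2} :=
    Subgroup.subset_closure (by simp)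
  have hc : ρ2 ∈ Subgroup.closure {ρ0, ρ1, ρ2} :=
    Subgroup.subset_closure (by simp)
  have hword : ρ0*ρ1*ρ0*ρ2*ρ1*ρ0*ρ1*ρ0*ρ1*ρ0*ρ1*ρ2*ρ1*ρ0*ρ1*ρ0*ρ1*ρ0*ρ1*ρ0*ρ2*ρ1 = g := by
    subst hneg h0 h1 h2; decide
  have hA : g ∈ Subgroup.closure {ρ0, ρ1, ρ2} := by
    rw [← hword]
    exact mul_mem (mul_mem (mul_mem (mul_mem (mul_mem (mul_mem (mul_mem (mul_mem
      (mul_mem (mul_mem (mul_mem (mul_mem (mul_mem (mul_mem (mul_mem (mul_mem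
      (mul_mem (mul_mem (mul_mem (mul_mem (mul_mem ha hb) ha) hc) hb) ha) hb) ha)
      hb) ha) hb) hc) hb) ha) hb) ha) hb) ha) hb) ha) hc) hb
  have hn : ρneg ∈ Subgroup.closure {ρneg, ρ0} :=
    Subgroup.subset_closure (by simp)
  have ha' : ρ0 ∈ Subgroup.closure {ρneg, ρ0} :=
    Subgroup.subset_closure (by simp)
  have hword2 : ρneg*ρ0*ρneg*ρ0*ρneg*ρ0 = g := by
    subst hneg h0 h1 h2; decide
  have hB : g ∈ Subgroup.closure {ρneg, ρ0} := by
    rw [← hword2]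
    exact mul_mem (mul_mem (mul_mem (mul_mem (mul_mem hn ha') hn) ha') hn) ha'
  have hg : g ∈ Subgroup.closure {ρ0} := by
    rw [← h]; exact ⟨hA, hB⟩
  rw [Subgroup.mem_closure_singleton] at hg
  obtain ⟨n, hn2⟩ := hg
  have hsq : ρ0 ^ (2 : ℤ) = 1 := by subst h0; decide
  rcases Int.even_or_odd n with ⟨k, hk⟩ | ⟨k, hk⟩
  · rw [hk, ← two_mul, zpow_mul, hsq, one_zpow] at hn2
    subst hneg h0 h1 h2
    rw [← hn2] at hgdef
    exact absurd hgdef (by decide)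
  · rw [hk, zpow_add, zpow_mul, hsq, one_zpow, one_mul, zpow_one] at hn2
    subst hneg h0 h1 h2
    rw [← hn2] at hgdef
    exact absurd hgdef (by decide)
end

section
/- (Gluing theorem.) Let X and Y be finite types. Let σ₀,…,σ_{r−1} ∈ Sym(Option X) (r ≥ 1) be a string C-group representation such that σ₀ is exactly the transposition swapping none and some x₀ (for some x₀ ∈ X) and σⱼ(none) = none for all 1 ≤ j ≤ r−1. Let τ₀,…,τ_{s−1} ∈ Sym(Option Y) (s ≥ 1) be a string C-group representation such that τ₀ is exactly the transposition swapping none and some y₀ (for some y₀ ∈ Y) and τⱼ(none) = none for all 1 ≤ j ≤ s−1. Form the glued set Ω := Option (X ⊕ Y) and the injections f₁ : Option X → Ω (none ↦ none, some x ↦ some (Sum.inl x)) and f₂ : Option Y → Ω (none ↦ none, some y ↦ some (Sum.inr y)); transport each σⱼ along f₁ and each τⱼ along f₂, extending by the identity outside the respective range (Equiv.Perm.viaEmbedding). Define a family of r+s involutions θ₀,…,θ_{r+s−1} ∈ Sym(Ω) by θ_k := (transported σ_{r−1−k}) for 0 ≤ k ≤ r−1 and θ_k := (transported τ_{k−r})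 for r ≤ k ≤ r+s−1. Then (θ₀,…,θ_{r+s−1}) satisfies both the string property and the intersection property, i.e. it is a string C-group representation of the subgroup of Sym(Ω) it generates. -/
set_option linter.unusedSectionVars false
set_option linter.unusedVariables false

open Equiv Equiv.Perm Subgroup

namespace GlueAux

variable {Ω : Type*} [Fintype Ω] [DecidableEq Ω]

/-- `g` moves only points in `s`. -/
def IsSupp (g : Perm Ω) (s : Set Ω) : Prop := ∀ x, g x ≠ x → x ∈ s

theorem isSupp_mono {g : Perm Ω} {s t : Set Ω} (h : IsSupp g s) (hst : s ⊆ t) :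
    IsSupp g t := fun x hx => hst (h x hx)

theorem isSupp_one (s : Set Ω) : IsSupp (1 : Perm Ω) s := fun x hx => absurd rfl hx

theorem isSupp_mul {g h : Perm Ω} {s : Set Ω} (hg : IsSupp g s) (hh : IsSupp h s) :
    IsSupp (g * h) s := by
  intro x hx
  by_cases hxh : h x = x
  · exact hg x (by simpa [Perm.mul_apply, hxh] using hx)
  · exact hh x hxh

theorem isSupp_inv {g : Perm Ω} {s : Set Ω} (hg : IsSupp g s) : IsSupp g⁻¹ s := by
  intro x hx
  have hgx : g x ≠ x := by
    intro h
    apply hx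
    nth_rewrite 1 [← h]
    simp
  exact hg x hgx

theorem apply_eq_of_not_mem {g : Perm Ω} {s : Set Ω} (hg : IsSupp g s) {x : Ω}
    (hx : x ∉ s) : g x = x := by
  by_contra h; exact hx (hg x h)

theorem mem_of_isSupp_apply {g : Perm Ω} {s : Set Ω} (hg : IsSupp g s) {x : Ω}
    (hx : x ∈ s) : g x ∈ s := by
  by_contra h
  have h1 : g (g x) = g x := apply_eq_of_not_mem hg h
  have h2 : g x = x := g.injective h1
  exact h (by rw [h2]; exact hx)

theorem isSupp_of_fix {g : Perm Ω} {s : Set Ω} {p : Ω} (hg : IsSupp g s) (hp : g p = p) :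
    IsSupp g (s \ {p}) := by
  intro x hx
  refine ⟨hg x hx, ?_⟩
  rintro rfl; exact hx hp

theorem commute_of_disjoint {g h : Perm Ω} {s t : Set Ω} (hg : IsSupp g s) (hh : IsSupp h t)
    (hst : s ∩ t ⊆ ∅) : Commute g h := by
  have key : ∀ x, g (h x) = h (g x) := by
    intro x
    by_cases hxs : x ∈ s
    · have hxt : x ∉ t := fun hxt => hst ⟨hxs, hxt⟩
      have h1 : h x = x := apply_eq_of_not_mem hh hxt
      have h2 : g x ∈ s := mem_of_isSupp_apply hg hxs
      have h3 : h (g x) = g x := apply_eq_of_not_mem hh (fun hgt => hst ⟨h2, hgt⟩)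
      rw [h1, h3]
    · by_cases hxt : x ∈ t
      · have h1 : g x = x := apply_eq_of_not_mem hg hxs
        have h2 : h x ∈ t := mem_of_isSupp_apply hh hxt
        have h3 : g (h x) = h x := apply_eq_of_not_mem hg (fun hgs => hst ⟨hgs, h2⟩)
        rw [h1, h3]
      · simp [apply_eq_of_not_mem hg hxs, apply_eq_of_not_mem hh hxt]
  show g * h = h * g
  exact Equiv.ext fun x => by simp [Perm.mul_apply, key x]

theorem isSupp_swap {a b : Ω} : IsSupp (Equiv.swap a b) {a, b} := by
  intro x hx
  by_contra h
  simp only [Set.mem_insert_iff, Set.mem_singleton_iff, not_or] at h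
  exact hx (Equiv.swap_apply_of_ne_of_ne h.1 h.2)

theorem isSupp_closure {E : Set (Perm Ω)} {s : Set Ω} (hE : ∀ e ∈ E, IsSupp e s) :
    ∀ g ∈ Subgroup.closure E, IsSupp g s := by
  intro g hg
  induction hg using Subgroup.closure_induction with
  | mem e he => exact hE e he
  | one => exact isSupp_one s
  | mul x y _ _ hx hy => exact isSupp_mul hx hy
  | inv x _ hx => exact isSupp_inv hx

/-- A permutation mapping a finite-type set into itself maps it onto itself; hence
closures of families preserving a set preserve it. -/
theorem closure_mapsTo {E : Set (Perm Ω)} {C : Set Ω}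
    (h : ∀ e ∈ E, ∀ x ∈ C, e x ∈ C) :
    ∀ g ∈ Subgroup.closure E, ∀ x ∈ C, g x ∈ C := by
  intro g hg
  induction hg using Subgroup.closure_induction with
  | mem e he => exact h e he
  | one => intro x hx; simpa using hx
  | mul a b _ _ ha hb => intro x hx; exact ha _ (hb x hx)
  | inv a _ ha =>
      intro x hx
      have himg : a '' C = C := by
        apply Set.eq_of_subset_of_ncard_le
        · rintro y ⟨z, hz, rfl⟩; exact ha z hz
        · rw [Set.ncard_image_of_injective _ a.injective]
        · exact C.toFinite
      have : x ∈ a '' C := by rw [himg]; exact hx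
      obtain ⟨z, hz, hzx⟩ := this
      simpa [← hzx] using hz


/-- Any permutation supported in `s` lies in a subgroup containing all swaps within `s`. -/
theorem mem_of_swaps_aux (H : Subgroup (Perm Ω)) (s : Set Ω)
    (hsw : ∀ u v, u ∈ s → v ∈ s → u ≠ v → Equiv.swap u v ∈ H) :
    ∀ n (g : Perm Ω), g.support.card ≤ n → IsSupp g s → g ∈ H := by
  intro n
  induction n with
  | zero =>
      intro g hg _
      have : g.support = ∅ := Finset.card_eq_zero.mp (Nat.le_zero.mp hg)
      rw [Equiv.Perm.support_eq_empty_iff] at this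
      rw [this]; exact H.one_mem
  | succ n ih =>
      intro g hg hsupp
      by_cases h1 : g = 1
      · rw [h1]; exact H.one_mem
      · obtain ⟨x, hx⟩ : ∃ x, g x ≠ x := by
          by_contra hc
          push_neg at hc
          exact h1 (Equiv.ext hc)
        have hxs : x ∈ s := hsupp x hx
        have hgxs : g x ∈ s := mem_of_isSupp_apply hsupp hxs
        have hne : x ≠ g x := fun h => hx h.symm
        set g' := Equiv.swap x (g x) * g with hg'
        have hcard : g'.support.card < g.support.card :=
          Equiv.Perm.card_support_swap_mul hx
        have hcard' : g'.support.card ≤ n := by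
          have hle : g.support.card ≤ n + 1 := hg
          omega
        have hsupp' : IsSupp g' s := by
          apply isSupp_mul (isSupp_mono isSupp_swap ?_) hsupp
          intro z hz
          rcases hz with rfl | hz
          · exact hxs
          · simpa using hz ▸ hgxs
        have hg'H : g' ∈ H := ih g' hcard' hsupp'
        have : g = Equiv.swap x (g x) * g' := by
          rw [hg', ← mul_assoc, Equiv.swap_mul_self, one_mul]
        rw [this]
        exact H.mul_mem (hsw x (g x) hxs hgxs hne) hg'H

theorem mem_of_swaps (H : Subgroup (Perm Ω)) (s : Set Ω)
    (hsw : ∀ u v, u ∈ s → v ∈ s → u ≠ v → Equiv.swap u v ∈ H)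
    (g : Perm Ω) (hsupp : IsSupp g s) : g ∈ H :=
  mem_of_swaps_aux H s hsw g.support.card g le_rfl hsupp

/-- The orbit of a point under the subgroup generated by a set of permutations. -/
def orbSet (E : Set (Perm Ω)) (p : Ω) : Set Ω := {v | ∃ g ∈ Subgroup.closure E, g p = v}

theorem mem_orbSet_self (E : Set (Perm Ω)) (p : Ω) : p ∈ orbSet E p :=
  ⟨1, Subgroup.one_mem _, rfl⟩

theorem orbSet_mono {E F : Set (Perm Ω)} (h : E ⊆ F) (p : Ω) : orbSet E p ⊆ orbSet F p := by
  rintro v ⟨g, hg, rfl⟩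
  exact ⟨g, Subgroup.closure_mono h hg, rfl⟩

theorem apply_mem_orbSet {E : Set (Perm Ω)} {p v : Ω} {g : Perm Ω}
    (hg : g ∈ Subgroup.closure E) (hv : v ∈ orbSet E p) : g v ∈ orbSet E p := by
  obtain ⟨h, hh, rfl⟩ := hv
  exact ⟨g * h, Subgroup.mul_mem _ hg hh, rfl⟩

theorem orbSet_subset {E : Set (Perm Ω)} {s : Set Ω} {p : Ω}
    (hE : ∀ e ∈ E, IsSupp e s) (hp : p ∈ s) : orbSet E p ⊆ s := by
  rintro v ⟨g, hg, rfl⟩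
  exact closure_mapsTo (fun e he x hx => mem_of_isSupp_apply (hE e he) hx) g hg p hp

/-- Orbit of the glued group is the union of the orbits. -/
theorem orbSet_union_subset {EA EB : Set (Perm Ω)} {U V : Set Ω} {star : Ω}
    (hUV : U ∩ V ⊆ {star}) (hU : star ∈ U) (hV : star ∈ V)
    (hEA : ∀ e ∈ EA, IsSupp e U) (hEB : ∀ e ∈ EB, IsSupp e V) :
    orbSet (EA ∪ EB) star ⊆ orbSet EA star ∪ orbSet EB star := by
  have hOA : orbSet EA star ⊆ U := orbSet_subset hEA hU
  have hOB : orbSet EB star ⊆ V := orbSet_subset hEB hV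
  have key : ∀ e ∈ EA ∪ EB, ∀ x ∈ orbSet EA star ∪ orbSet EB star,
      e x ∈ orbSet EA star ∪ orbSet EB star := by
    rintro e (he | he) x (hx | hx)
    · exact Or.inl (apply_mem_orbSet (Subgroup.subset_closure he) hx)
    · by_cases hxs : x = star
      · subst hxs
        exact Or.inl (apply_mem_orbSet (Subgroup.subset_closure he) (mem_orbSet_self _ _))
      · have hxU : x ∉ U := by
          intro hxU
          exact hxs (hUV ⟨hxU, hOB hx⟩)
        rw [apply_eq_of_not_mem (hEA e he) hxU]
        exact Or.inr hx
    · by_cases hxs : x = star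
      · subst hxs
        exact Or.inr (apply_mem_orbSet (Subgroup.subset_closure he) (mem_orbSet_self _ _))
      · have hxV : x ∉ V := by
          intro hxV
          exact hxs (hUV ⟨hOA hx, hxV⟩)
        rw [apply_eq_of_not_mem (hEB e he) hxV]
        exact Or.inl hx
    · exact Or.inr (apply_mem_orbSet (Subgroup.subset_closure he) hx)
  rintro v ⟨g, hg, rfl⟩
  exact closure_mapsTo key g hg star (Or.inl (mem_orbSet_self _ _))

/-- Key clique lemma: if each generator fixes `star` or is a swap at `star`, then the
swap from `star` to any point of the orbit lies in the group. -/
theorem swap_star_mem {E : Set (Perm Ω)} {star : Ω}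
    (hE : ∀ e ∈ E, e star = star ∨ ∃ q, q ≠ star ∧ e = Equiv.swap star q) :
    ∀ v ∈ orbSet E star, v ≠ star → Equiv.swap star v ∈ Subgroup.closure E := by
  set C : Set Ω := {v | v = star ∨ Equiv.swap star v ∈ Subgroup.closure E} with hC
  have key : ∀ e ∈ E, ∀ x ∈ C, e x ∈ C := by
    intro e he x hx
    rcases hE e he with hfix | ⟨q, hq, rfl⟩
    · rcases hx with rfl | hx
      · exact Or.inl hfix
      · right
        have : Equiv.swap (e star) (e x) = e * Equiv.swap star x * e⁻¹ :=
          Equiv.swap_apply_apply e star x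
        rw [hfix] at this
        rw [this]
        exact Subgroup.mul_mem _ (Subgroup.mul_mem _ (Subgroup.subset_closure he) hx)
          (Subgroup.inv_mem _ (Subgroup.subset_closure he))
    · rcases hx with rfl | hx
      · right
        rw [Equiv.swap_apply_left]
        exact Subgroup.subset_closure he
      · by_cases hxq : x = q
        · subst hxq
          rw [Equiv.swap_apply_right]
          exact Or.inl rfl
        · by_cases hxstar : x = star
          · subst hxstar; rw [Equiv.swap_apply_left]; right
            exact Subgroup.subset_closure he
          · rw [Equiv.swap_apply_of_ne_of_ne hxstar hxq]
            exact Or.inr hx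
  intro v hv hvs
  obtain ⟨g, hg, rfl⟩ := hv
  have : g star ∈ C := closure_mapsTo key g hg star (Or.inl rfl)
  rcases this with h | h
  · exact absurd h hvs
  · exact h


section Stab

variable {star : Ω} {U V : Set Ω} {EA EB : Set (Perm Ω)}

theorem stab_step
    (hUV : U ∩ V ⊆ {star}) (hV : star ∈ V)
    (hEA : ∀ e ∈ EA, IsSupp e U ∧
      (e star = star ∨ ∃ q, q ≠ star ∧ q ∈ U ∧ e = Equiv.swap star q))
    (hEB : ∀ e ∈ EB, IsSupp e V)
    (T : Set (Perm Ω))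
    (hTd : ∀ c, IsSupp c ((orbSet EA star ∪ orbSet EB star) \ {star}) → ∀ t ∈ T, c * t ∈ T)
    (hTa : ∀ a ∈ Subgroup.closure EA, a star = star → ∀ t ∈ T, a * t ∈ T)
    (hTb : ∀ b ∈ Subgroup.closure EB, b star = star → ∀ t ∈ T, b * t ∈ T)
    (e : Perm Ω) (he : e ∈ EA) (y w : Perm Ω)
    (hw : w ∈ Subgroup.closure EA ∨ w ∈ Subgroup.closure EB)
    (hwstar : w star = y star) (ht : w⁻¹ * y ∈ T) :
    ∃ w', (w' ∈ Subgroup.closure EA ∨ w' ∈ Subgroup.closure EB) ∧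
      w' star = (e * y) star ∧ w'⁻¹ * (e * y) ∈ T := by
  have heA : e ∈ Subgroup.closure EA := Subgroup.subset_closure he
  rcases hw with hwA | hwB
  · -- w ∈ A : absorb e into w
    refine ⟨e * w, Or.inl (Subgroup.mul_mem _ heA hwA), ?_, ?_⟩
    · simp [Perm.mul_apply, hwstar]
    · have : (e * w)⁻¹ * (e * y) = w⁻¹ * y := by group
      rw [this]; exact ht
  · -- w ∈ B
    rcases (hEA e he).2 with hfix | ⟨q, hq, hqU, rfl⟩
    · -- e fixes star
      have heSupp : IsSupp e (U \ {star}) := isSupp_of_fix (hEA e he).1 hfix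
      have hwSupp : IsSupp w V := isSupp_closure hEB w hwB
      have hcomm : Commute e w :=
        commute_of_disjoint heSupp hwSupp (by
          rintro x ⟨⟨hxU, hxs⟩, hxV⟩
          exact hxs (hUV ⟨hxU, hxV⟩))
      have heys : (e * y) star = y star := by
        by_cases hys : y star = star
        · simp [Perm.mul_apply, hys, hfix]
        · have : y star ∉ U \ {star} := by
            rintro ⟨hyU, _⟩
            have hyV : y star ∈ V := by
              rw [← hwstar]
              exact orbSet_subset (fun f hf => hEB f hf) hV ⟨w, hwB, rfl⟩
            exact hys (hUV ⟨hyU, hyV⟩)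
          simp [Perm.mul_apply, apply_eq_of_not_mem heSupp this]
      refine ⟨w, Or.inr hwB, by rw [heys, hwstar], ?_⟩
      have : w⁻¹ * (e * y) = e * (w⁻¹ * y) := by
        rw [← mul_assoc, ← hcomm.inv_right.eq, mul_assoc]
      rw [this]
      exact hTa e heA hfix _ ht
    · -- e = swap star q
      have hqOA : q ∈ orbSet EA star := ⟨Equiv.swap star q, heA, Equiv.swap_apply_left _ _⟩
      by_cases hys : y star = star
      · -- y fixes star: new representative is e itself
        refine ⟨Equiv.swap star q, Or.inl heA, ?_, ?_⟩
        · simp [Perm.mul_apply, hys]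
        · have hwfix : w star = star := by rw [hwstar, hys]
          have : (Equiv.swap star q)⁻¹ * (Equiv.swap star q * y) = w * (w⁻¹ * y) := by group
          rw [this]
          exact hTb w hwB hwfix _ ht
      · -- y star ≠ star
        have hyV : y star ∈ V := by
          rw [← hwstar]
          exact orbSet_subset (fun f hf => hEB f hf) hV ⟨w, hwB, rfl⟩
        have hyU : y star ∉ U := fun hyU => hys (hUV ⟨hyU, hyV⟩)
        have hyq : y star ≠ q := fun h => hyU (h ▸ hqU)
        refine ⟨w, Or.inr hwB, ?_, ?_⟩
        · rw [hwstar]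
          simp [Perm.mul_apply, Equiv.swap_apply_of_ne_of_ne hys hyq]
        · have hqV : q ∉ V := fun hqV => hq (hUV ⟨hqU, hqV⟩)
          have hwq : w⁻¹ q = q :=
            apply_eq_of_not_mem (isSupp_inv (isSupp_closure hEB w hwB)) hqV
          have hβOB : w⁻¹ star ∈ orbSet EB star := ⟨w⁻¹, Subgroup.inv_mem _ hwB, rfl⟩
          have hβs : w⁻¹ star ≠ star := by
            intro h
            have : w star = star := by
              nth_rewrite 1 [← h]; simp
            exact hys (hwstar ▸ this)
          have hc : w⁻¹ * Equiv.swap star q * w = Equiv.swap (w⁻¹ star) (w⁻¹ q) := by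
            have := Equiv.swap_apply_apply w⁻¹ star q
            rw [inv_inv] at this
            exact this.symm
          have key : w⁻¹ * (Equiv.swap star q * y) =
              (Equiv.swap (w⁻¹ star) (w⁻¹ q)) * (w⁻¹ * y) := by
            rw [← hc]; group
          rw [key, hwq]
          refine hTd _ ?_ _ ht
          apply isSupp_mono isSupp_swap
          rintro z (rfl | hz)
          · exact ⟨Or.inr hβOB, hβs⟩
          · simp only [Set.mem_singleton_iff] at hz
            subst hz
            exact ⟨Or.inl hqOA, hq⟩


/-- Stabilizer decomposition for a glued group. -/
theorem stabDecomp
    (hUV : U ∩ V ⊆ {star}) (hU : star ∈ U) (hV : star ∈ V)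
    (hEA : ∀ e ∈ EA, IsSupp e U ∧
      (e star = star ∨ ∃ q, q ≠ star ∧ q ∈ U ∧ e = Equiv.swap star q))
    (hEB : ∀ e ∈ EB, IsSupp e V ∧
      (e star = star ∨ ∃ q, q ≠ star ∧ q ∈ V ∧ e = Equiv.swap star q))
    (hinvA : ∀ e ∈ EA, e * e = 1) (hinvB : ∀ e ∈ EB, e * e = 1) :
    ∀ g ∈ Subgroup.closure (EA ∪ EB), g star = star →
      ∃ d a b, IsSupp d ((orbSet EA star ∪ orbSet EB star) \ {star}) ∧
        a ∈ Subgroup.closure EA ∧ a star = star ∧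
        b ∈ Subgroup.closure EB ∧ b star = star ∧ g = d * a * b := by
  set A := Subgroup.closure EA with hA
  set B := Subgroup.closure EB with hB
  set OA := orbSet EA star with hOA
  set OB := orbSet EB star with hOB
  set D : Set Ω := (OA ∪ OB) \ {star} with hD
  set T : Set (Perm Ω) := {g | ∃ d a b, IsSupp d D ∧ a ∈ A ∧ a star = star ∧
    b ∈ B ∧ b star = star ∧ g = d * a * b} with hT
  have hOAU : OA ⊆ U := orbSet_subset (fun e he => (hEA e he).1) hU
  have hOBV : OB ⊆ V := orbSet_subset (fun e he => (hEB e he).1) hV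
  have hdisjUV : (U \ {star}) ∩ (V \ {star}) ⊆ ∅ := by
    rintro x ⟨⟨hxU, hxs⟩, ⟨hxV, _⟩⟩
    exact hxs (hUV ⟨hxU, hxV⟩)
  -- stabilizing elements of A (resp. B) preserve D
  have hDstabA : ∀ a ∈ A, a star = star → ∀ v ∈ D, a v ∈ D := by
    rintro a haA has v ⟨hv, hvs⟩
    simp only [Set.mem_singleton_iff] at hvs
    rcases hv with hvOA | hvOB
    · refine ⟨Or.inl (apply_mem_orbSet haA hvOA), ?_⟩
      simp only [Set.mem_singleton_iff]
      intro h
      exact hvs (a.injective (by rw [h, has]))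
    · have hvU : v ∉ U := fun hvU => hvs (hUV ⟨hvU, hOBV hvOB⟩)
      rw [apply_eq_of_not_mem (isSupp_closure (fun e he => (hEA e he).1) a haA) hvU]
      exact ⟨Or.inr hvOB, hvs⟩
  have hDstabB : ∀ b ∈ B, b star = star → ∀ v ∈ D, b v ∈ D := by
    rintro b hbB hbs v ⟨hv, hvs⟩
    simp only [Set.mem_singleton_iff] at hvs
    rcases hv with hvOA | hvOB
    · have hvV : v ∉ V := fun hvV => hvs (hUV ⟨hOAU hvOA, hvV⟩)
      rw [apply_eq_of_not_mem (isSupp_closure (fun e he => (hEB e he).1) b hbB) hvV]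
      exact ⟨Or.inl hvOA, hvs⟩
    · refine ⟨Or.inr (apply_mem_orbSet hbB hvOB), ?_⟩
      simp only [Set.mem_singleton_iff]
      intro h
      exact hvs (b.injective (by rw [h, hbs]))
  -- closure properties of T
  have hT1 : (1 : Perm Ω) ∈ T :=
    ⟨1, 1, 1, isSupp_one _, A.one_mem, rfl, B.one_mem, rfl, by group⟩
  have hTd : ∀ c, IsSupp c D → ∀ t ∈ T, c * t ∈ T := by
    rintro c hc t ⟨d, a, b, hd, ha, has, hb, hbs, rfl⟩
    exact ⟨c * d, a, b, isSupp_mul hc hd, ha, has, hb, hbs, by group⟩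
  have hTa : ∀ a' ∈ A, a' star = star → ∀ t ∈ T, a' * t ∈ T := by
    rintro a' ha' has' t ⟨d, a, b, hd, ha, has, hb, hbs, rfl⟩
    refine ⟨a' * d * a'⁻¹, a' * a, b, ?_, A.mul_mem ha' ha, by simp [Perm.mul_apply, has, has'],
      hb, hbs, by group⟩
    intro x hx
    have hdx : d (a'⁻¹ x) ≠ a'⁻¹ x := by
      intro h
      apply hx
      rw [Perm.mul_apply, Perm.mul_apply, h]; exact Equiv.apply_symm_apply a' x
    have : a'⁻¹ x ∈ D := hd _ hdx
    have := hDstabA a' ha' has' _ this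
    simpa [Perm.mul_apply] using this
  have hTb : ∀ b' ∈ B, b' star = star → ∀ t ∈ T, b' * t ∈ T := by
    rintro b' hb' hbs' t ⟨d, a, b, hd, ha, has, hb, hbs, rfl⟩
    have hcomm : Commute b' a := by
      apply commute_of_disjoint
        (isSupp_of_fix (isSupp_closure (fun e he => (hEB e he).1) b' hb') hbs')
        (isSupp_of_fix (isSupp_closure (fun e he => (hEA e he).1) a ha) has)
      rintro x ⟨hx1, hx2⟩
      exact hdisjUV ⟨hx2, hx1⟩
    refine ⟨b' * d * b'⁻¹, a, b' * b, ?_, ha, has, B.mul_mem hb' hb,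
      by simp [Perm.mul_apply, hbs, hbs'], ?_⟩
    · intro x hx
      have hdx : d (b'⁻¹ x) ≠ b'⁻¹ x := by
        intro h
        apply hx
        rw [Perm.mul_apply, Perm.mul_apply, h]; exact Equiv.apply_symm_apply b' x
      have : b'⁻¹ x ∈ D := hd _ hdx
      have := hDstabB b' hb' hbs' _ this
      simpa [Perm.mul_apply] using this
    · have : b' * a = a * b' := hcomm.eq
      calc b' * (d * a * b) = (b' * d * b'⁻¹) * (b' * a) * b := by group
        _ = (b' * d * b'⁻¹) * (a * b') * b := by rw [this]
        _ = b' * d * b'⁻¹ * a * (b' * b) := by group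
  -- main induction
  have main : ∀ g ∈ Subgroup.closure (EA ∪ EB),
      ∃ w, (w ∈ A ∨ w ∈ B) ∧ w star = g star ∧ w⁻¹ * g ∈ T := by
    intro g hg
    induction hg using Subgroup.closure_induction_left with
    | one => exact ⟨1, Or.inl A.one_mem, rfl, by rw [inv_one, one_mul]; exact hT1⟩
    | mul_left e he y hy ih =>
        obtain ⟨w, hw, hwstar, hwt⟩ := ih
        rcases he with heA | heB
        · exact stab_step hUV hV hEA (fun e he => (hEB e he).1) T hTd hTa hTb e heA y w hw
            hwstar hwt
        · have mir := stab_step (Set.inter_comm U V ▸ hUV) hU hEB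
            (fun e he => (hEA e he).1) T
            (by rw [Set.union_comm (orbSet EB star) (orbSet EA star)]; exact hTd)
            hTb hTa e heB y w hw.symm hwstar hwt
          obtain ⟨w', hw', h1, h2⟩ := mir
          exact ⟨w', hw'.symm, h1, h2⟩
    | inv_mul_cancel e he y hy ih =>
        obtain ⟨w, hw, hwstar, hwt⟩ := ih
        have hee : e⁻¹ = e := by
          rcases he with heA | heB
          · exact inv_eq_of_mul_eq_one_left (hinvA e heA)
          · exact inv_eq_of_mul_eq_one_left (hinvB e heB)
        rw [hee]
        rcases he with heA | heB
        · exact stab_step hUV hV hEA (fun e he => (hEB e he).1) T hTd hTa hTb e heA y w hw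
            hwstar hwt
        · have mir := stab_step (Set.inter_comm U V ▸ hUV) hU hEB
            (fun e he => (hEA e he).1) T
            (by rw [Set.union_comm (orbSet EB star) (orbSet EA star)]; exact hTd)
            hTb hTa e heB y w hw.symm hwstar hwt
          obtain ⟨w', hw', h1, h2⟩ := mir
          exact ⟨w', hw'.symm, h1, h2⟩
  intro g hg hgstar
  obtain ⟨w, hw, hwstar, hwt⟩ := main g hg
  rw [hgstar] at hwstar
  have hgT : g ∈ T := by
    have hgw : g = w * (w⁻¹ * g) := by group
    rcases hw with hwA | hwB
    · rw [hgw]; exact hTa w hwA hwstar _ hwt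
    · rw [hgw]; exact hTb w hwB hwstar _ hwt
  obtain ⟨d, a, b, hd, ha, has, hb, hbs, rfl⟩ := hgT
  exact ⟨d, a, b, hd, ha, has, hb, hbs, rfl⟩

end Stab

/-- The key intersection lemma for glued groups. -/
theorem keyPerm (star : Ω) (U V : Set Ω) (hUV : U ∩ V ⊆ {star}) (hU : star ∈ U) (hV : star ∈ V)
    (EA EA' EB EB' : Set (Perm Ω)) (hA' : EA' ⊆ EA) (hB' : EB' ⊆ EB)
    (hEA : ∀ e ∈ EA, IsSupp e U ∧
      (e star = star ∨ ∃ q, q ≠ star ∧ q ∈ U ∧ e = Equiv.swap star q))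
    (hEB : ∀ e ∈ EB, IsSupp e V ∧
      (e star = star ∨ ∃ q, q ≠ star ∧ q ∈ V ∧ e = Equiv.swap star q))
    (hinvA : ∀ e ∈ EA, e * e = 1) (hinvB : ∀ e ∈ EB, e * e = 1) :
    Subgroup.closure (EA ∪ EB') ⊓ Subgroup.closure (EA' ∪ EB) =
      Subgroup.closure (EA' ∪ EB') := by
  set M := Subgroup.closure (EA' ∪ EB') with hM
  have hMQ : M ≤ Subgroup.closure (EA ∪ EB') :=
    Subgroup.closure_mono (Set.union_subset_union_left _ hA')
  have hMP : M ≤ Subgroup.closure (EA' ∪ EB) :=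
    Subgroup.closure_mono (Set.union_subset_union_right _ hB')
  apply le_antisymm
  swap
  · exact le_inf hMQ hMP
  intro g hg
  obtain ⟨hgQ, hgP⟩ := Subgroup.mem_inf.mp hg
  set OA := orbSet EA star
  set OA' := orbSet EA' star
  set OB := orbSet EB star
  set OB' := orbSet EB' star
  have hEA' : ∀ e ∈ EA', IsSupp e U ∧
      (e star = star ∨ ∃ q, q ≠ star ∧ q ∈ U ∧ e = Equiv.swap star q) :=
    fun e he => hEA e (hA' he)
  have hEB' : ∀ e ∈ EB', IsSupp e V ∧
      (e star = star ∨ ∃ q, q ≠ star ∧ q ∈ V ∧ e = Equiv.swap star q) :=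
    fun e he => hEB e (hB' he)
  have hOAU : OA ⊆ U := orbSet_subset (fun e he => (hEA e he).1) hU
  have hOBV : OB ⊆ V := orbSet_subset (fun e he => (hEB e he).1) hV
  have hOA'A : OA' ⊆ OA := orbSet_mono hA' star
  have hOB'B : OB' ⊆ OB := orbSet_mono hB' star
  have hdisjUV : (U \ {star}) ∩ (V \ {star}) ⊆ ∅ := by
    rintro x ⟨⟨hxU, hxs⟩, ⟨hxV, _⟩⟩
    exact hxs (hUV ⟨hxU, hxV⟩)
  -- Step 1: reduce to the stabilizer of star
  have hgsQ : g star ∈ OA ∪ OB' :=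
    orbSet_union_subset hUV hU hV (fun e he => (hEA e he).1) (fun e he => (hEB' e he).1)
      ⟨g, hgQ, rfl⟩
  have hgsP : g star ∈ OA' ∪ OB :=
    orbSet_union_subset hUV hU hV (fun e he => (hEA' e he).1) (fun e he => (hEB e he).1)
      ⟨g, hgP, rfl⟩
  have hgsM : g star ∈ OA' ∪ OB' := by
    rcases hgsQ with hq | hq
    · rcases hgsP with hp | hp
      · exact Or.inl hp
      · -- g star ∈ OA ∩ OB ⊆ {star}
        have : g star = star := hUV ⟨hOAU hq, hOBV hp⟩
        rw [this]
        exact Or.inr (mem_orbSet_self _ _)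
    · exact Or.inr hq
  obtain ⟨m, hmM, hmstar⟩ : ∃ m ∈ M, m star = g star := by
    rcases hgsM with ⟨a, ha, haeq⟩ | ⟨b, hb, hbeq⟩
    · exact ⟨a, Subgroup.closure_mono Set.subset_union_left ha, haeq⟩
    · exact ⟨b, Subgroup.closure_mono Set.subset_union_right hb, hbeq⟩
  set h := m⁻¹ * g with hh
  have hhstar : h star = star := by
    rw [hh]
    simp [Perm.mul_apply, ← hmstar]
  have hhQ : h ∈ Subgroup.closure (EA ∪ EB') :=
    Subgroup.mul_mem _ (Subgroup.inv_mem _ (hMQ hmM)) hgQ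
  have hhP : h ∈ Subgroup.closure (EA' ∪ EB) :=
    Subgroup.mul_mem _ (Subgroup.inv_mem _ (hMP hmM)) hgP
  suffices hhM : h ∈ M by
    have : g = m * h := by rw [hh]; group
    rw [this]
    exact Subgroup.mul_mem _ hmM hhM
  -- Step 2: decompose h on both sides
  obtain ⟨d₁, a₁, b₁, hd₁, ha₁, ha₁s, hb₁, hb₁s, hdec₁⟩ :=
    stabDecomp hUV hU hV hEA hEB' hinvA (fun e he => hinvB e (hB' he)) h hhQ hhstar
  obtain ⟨d₂, a₂, b₂, hd₂, ha₂, ha₂s, hb₂, hb₂s, hdec₂⟩ :=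
    stabDecomp hUV hU hV hEA' hEB (fun e he => hinvA e (hA' he)) hinvB h hhP hhstar
  -- supports of the stabilizing parts
  have hsuppA : ∀ a ∈ Subgroup.closure EA, a star = star → IsSupp a (U \ {star}) :=
    fun a ha has => isSupp_of_fix (isSupp_closure (fun e he => (hEA e he).1) a ha) has
  have hsuppB : ∀ b ∈ Subgroup.closure EB, b star = star → IsSupp b (V \ {star}) :=
    fun b hb hbs => isSupp_of_fix (isSupp_closure (fun e he => (hEB e he).1) b hb) hbs
  have ha₂A : a₂ ∈ Subgroup.closure EA := Subgroup.closure_mono hA' ha₂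
  have hb₁B : b₁ ∈ Subgroup.closure EB := Subgroup.closure_mono hB' hb₁
  set u := a₂ * a₁⁻¹ with hu
  set v := b₂ * b₁⁻¹ with hv
  have huA : u ∈ Subgroup.closure EA := Subgroup.mul_mem _ ha₂A (Subgroup.inv_mem _ ha₁)
  have hvB : v ∈ Subgroup.closure EB := Subgroup.mul_mem _ hb₂ (Subgroup.inv_mem _ hb₁B)
  have ha₁inv : a₁⁻¹ star = star := by nth_rewrite 1 [← ha₁s]; simp
  have hb₁inv : b₁⁻¹ star = star := by nth_rewrite 1 [← hb₁s]; simp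
  have hustar : u star = star := by rw [hu]; simp [Perm.mul_apply, ha₁inv, ha₂s]
  have hvstar : v star = star := by rw [hv]; simp [Perm.mul_apply, hb₁inv, hb₂s]
  have husupp : IsSupp u (U \ {star}) := hsuppA u huA hustar
  have hvsupp : IsSupp v (V \ {star}) := hsuppB v hvB hvstar
  have hcomm_uv : Commute u v := commute_of_disjoint husupp hvsupp hdisjUV
  have hcomm_b₂b₁a₁ : Commute (b₂ * b₁⁻¹) a₁⁻¹ := by
    apply commute_of_disjoint hvsupp (isSupp_inv (hsuppA a₁ ha₁ ha₁s))
    rintro x ⟨hx1, hx2⟩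
    exact hdisjUV ⟨hx2, hx1⟩
  have huv : d₂⁻¹ * d₁ = u * v := by
    have h0 : d₁ * a₁ * b₁ = d₂ * a₂ * b₂ := by rw [← hdec₁, ← hdec₂]
    have h1 : d₂⁻¹ * d₁ = a₂ * (b₂ * b₁⁻¹ * a₁⁻¹) := by
      have h2 : d₂⁻¹ * (d₁ * a₁ * b₁) * b₁⁻¹ * a₁⁻¹ =
          d₂⁻¹ * (d₂ * a₂ * b₂) * b₁⁻¹ * a₁⁻¹ := by rw [h0]
      calc d₂⁻¹ * d₁ = d₂⁻¹ * (d₁ * a₁ * b₁) * b₁⁻¹ * a₁⁻¹ := by group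
        _ = d₂⁻¹ * (d₂ * a₂ * b₂) * b₁⁻¹ * a₁⁻¹ := h2
        _ = a₂ * (b₂ * b₁⁻¹ * a₁⁻¹) := by group
    rw [h1, hcomm_b₂b₁a₁.eq, hu, hv]
    group
  -- refined supports of u and v
  have husupp' : IsSupp u (OA \ {star}) := by
    intro x hx
    have hxU : x ∈ U \ {star} := husupp x hx
    have hvx : v x = x := apply_eq_of_not_mem hvsupp (fun hxV => hdisjUV ⟨hxU, hxV⟩)
    have hduv : (d₂⁻¹ * d₁) x ≠ x := by
      rw [huv]
      simpa [Perm.mul_apply, hvx] using hx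
    have hxDD : x ∈ ((OA' ∪ OB) \ {star}) ∪ ((OA ∪ OB') \ {star}) :=
      isSupp_mul (isSupp_mono (isSupp_inv hd₂) Set.subset_union_left)
        (isSupp_mono hd₁ Set.subset_union_right) x hduv
    rcases hxDD with ⟨hx1, hx2⟩ | ⟨hx1, hx2⟩
    · rcases hx1 with h1 | h1
      · exact ⟨hOA'A h1, hx2⟩
      · exact absurd (hdisjUV ⟨hxU, ⟨hOBV h1, hx2⟩⟩) (Set.notMem_empty x)
    · rcases hx1 with h1 | h1
      · exact ⟨h1, hx2⟩
      · exact absurd (hdisjUV ⟨hxU, ⟨hOBV (hOB'B h1), hx2⟩⟩) (Set.notMem_empty x)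
  have hvsupp' : IsSupp v (OB \ {star}) := by
    intro x hx
    have hxV : x ∈ V \ {star} := hvsupp x hx
    have hux : u x = x := apply_eq_of_not_mem husupp (fun hxU => hdisjUV ⟨hxU, hxV⟩)
    have hduv : (d₂⁻¹ * d₁) x ≠ x := by
      rw [huv]
      intro hcon
      apply hx
      have h1 : u (v x) = x := by simpa [Perm.mul_apply] using hcon
      have h2 : u (v x) = v x :=
        apply_eq_of_not_mem husupp
          (fun hmem => hdisjUV ⟨hmem, mem_of_isSupp_apply hvsupp hxV⟩)
      exact h2.symm.trans h1
    have hxDD : x ∈ ((OA' ∪ OB) \ {star}) ∪ ((OA ∪ OB') \ {star}) :=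
      isSupp_mul (isSupp_mono (isSupp_inv hd₂) Set.subset_union_left)
        (isSupp_mono hd₁ Set.subset_union_right) x hduv
    rcases hxDD with ⟨hx1, hx2⟩ | ⟨hx1, hx2⟩
    · rcases hx1 with h1 | h1
      · exact absurd (hdisjUV ⟨⟨hOAU (hOA'A h1), hx2⟩, hxV⟩) (Set.notMem_empty x)
      · exact ⟨h1, hx2⟩
    · rcases hx1 with h1 | h1
      · exact absurd (hdisjUV ⟨⟨hOAU h1, hx2⟩, hxV⟩) (Set.notMem_empty x)
      · exact ⟨hOB'B h1, hx2⟩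
  -- the middle factor e
  set e := d₂ * v with he
  have he2 : e = d₁ * u⁻¹ := by
    rw [he]
    have : d₁ = d₂ * (u * v) := by
      rw [← huv]; group
    rw [this, hcomm_uv.eq]
    group
  have hesupp : IsSupp e ((OA' ∪ OB') \ {star}) := by
    intro x hx
    have h1 : x ∈ (OA' ∪ OB) \ {star} :=
      isSupp_mul hd₂ (isSupp_mono hvsupp' (by
        rintro z ⟨hz1, hz2⟩; exact ⟨Or.inr hz1, hz2⟩)) x hx
    have h2 : x ∈ (OA ∪ OB') \ {star} := by
      rw [he2] at hx
      exact isSupp_mul hd₁ (isSupp_mono (isSupp_inv husupp') (by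
        rintro z ⟨hz1, hz2⟩; exact ⟨Or.inl hz1, hz2⟩)) x hx
    obtain ⟨h1s, hxs⟩ := h1
    obtain ⟨h2s, _⟩ := h2
    rcases h1s with hOA' | hOB
    · exact ⟨Or.inl hOA', hxs⟩
    · rcases h2s with hOA | hOB'
      · exact absurd (hUV ⟨hOAU hOA, hOBV hOB⟩) hxs
      · exact ⟨Or.inr hOB', hxs⟩
  -- h = e * a₂ * b₁
  have hcomm_a₂v : Commute a₂ v := by
    apply commute_of_disjoint (hsuppA a₂ ha₂A ha₂s) hvsupp hdisjUV
  have hfinal : h = e * a₂ * b₁ := by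
    have hb₂v : b₂ = v * b₁ := by rw [hv]; group
    rw [hdec₂, hb₂v, he]
    calc d₂ * a₂ * (v * b₁) = d₂ * (a₂ * v) * b₁ := by group
      _ = d₂ * (v * a₂) * b₁ := by rw [hcomm_a₂v.eq]
      _ = d₂ * v * a₂ * b₁ := by group
  -- swaps within (OA' ∪ OB') \ {star} lie in M
  have hswapM : ∀ w ∈ orbSet (EA' ∪ EB') star, w ≠ star → Equiv.swap star w ∈ M := by
    apply swap_star_mem
    rintro f (hf | hf)
    · rcases (hEA' f hf).2 with h | ⟨q, hq, _, hfq⟩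
      · exact Or.inl h
      · exact Or.inr ⟨q, hq, hfq⟩
    · rcases (hEB' f hf).2 with h | ⟨q, hq, _, hfq⟩
      · exact Or.inl h
      · exact Or.inr ⟨q, hq, hfq⟩
  have hDM : (OA' ∪ OB') \ {star} ⊆ orbSet (EA' ∪ EB') star := by
    rintro z ⟨hz, _⟩
    rcases hz with hz | hz
    · exact orbSet_mono Set.subset_union_left star hz
    · exact orbSet_mono Set.subset_union_right star hz
  have hswaps : ∀ p q, p ∈ (OA' ∪ OB') \ {star} → q ∈ (OA' ∪ OB') \ {star} → p ≠ q →
      Equiv.swap p q ∈ M := by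
    intro p q hp hq hpq
    have hps : p ≠ star := by
      intro hcon; exact hp.2 (by simp [hcon])
    have hqs : q ≠ star := by
      intro hcon; exact hq.2 (by simp [hcon])
    have s1 : Equiv.swap star p ∈ M := hswapM p (hDM hp) hps
    have s2 : Equiv.swap star q ∈ M := hswapM q (hDM hq) hqs
    have key : Equiv.swap p q = Equiv.swap star p * Equiv.swap star q * Equiv.swap star p := by
      have happ := Equiv.swap_apply_apply (Equiv.swap star p) star q
      rw [Equiv.swap_apply_left, Equiv.swap_apply_of_ne_of_ne hqs hpq.symm,
        Equiv.swap_inv] at happ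
      exact happ
    rw [key]
    exact Subgroup.mul_mem _ (Subgroup.mul_mem _ s1 s2) s1
  have heM : e ∈ M := mem_of_swaps M _ hswaps e hesupp
  rw [hfinal]
  exact Subgroup.mul_mem _ (Subgroup.mul_mem _ heM
    (Subgroup.closure_mono Set.subset_union_left ha₂))
    (Subgroup.closure_mono Set.subset_union_right hb₁)

section Reduction

variable {G : Type*} [Group G]

theorem commute_closure (S T : Set G) (h : ∀ s ∈ S, ∀ t ∈ T, Commute s t) :
    ∀ x ∈ Subgroup.closure S, ∀ y ∈ Subgroup.closure T, Commute x y := by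
  intro x hx
  induction hx using Subgroup.closure_induction with
  | mem s hs =>
      intro y hy
      induction hy using Subgroup.closure_induction with
      | mem t ht => exact h s hs t ht
      | one => exact Commute.one_right _
      | mul a b _ _ ha hb => exact ha.mul_right hb
      | inv a _ ha => exact ha.inv_right
  | one => intro y _; exact Commute.one_left _
  | mul a b _ _ ha hb => intro y hy; exact (ha y hy).mul_left (hb y hy)
  | inv a _ ha => intro y hy; exact (ha y hy).inv_left

variable {n : ℕ} (ρ : Fin n → G)

theorem cmono {K L : Set (Fin n)} (h : K ⊆ L) :
    Subgroup.closure (ρ '' K) ≤ Subgroup.closure (ρ '' L) :=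
  Subgroup.closure_mono (Set.image_mono h)

theorem splitAt
    (hcomm : ∀ j k : Fin n, (j : ℕ) + 2 ≤ (k : ℕ) ∨ (k : ℕ) + 2 ≤ (j : ℕ) →
      Commute (ρ j) (ρ k))
    (c : ℕ) (K : Set (Fin n)) (hc : ∀ i ∈ K, (i : ℕ) ≠ c) :
    ∀ g ∈ Subgroup.closure (ρ '' K),
      ∃ l ∈ Subgroup.closure (ρ '' {i | i ∈ K ∧ (i : ℕ) < c}),
      ∃ r ∈ Subgroup.closure (ρ '' {i | i ∈ K ∧ c < (i : ℕ)}), g = l * r := by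
  have hcommLR : ∀ x ∈ Subgroup.closure (ρ '' {i | i ∈ K ∧ (i : ℕ) < c}),
      ∀ y ∈ Subgroup.closure (ρ '' {i | i ∈ K ∧ c < (i : ℕ)}), Commute x y := by
    apply commute_closure
    rintro s ⟨i, ⟨hiK, hic⟩, rfl⟩ t ⟨j, ⟨hjK, hjc⟩, rfl⟩
    exact hcomm i j (Or.inl (by omega))
  intro g hg
  induction hg using Subgroup.closure_induction with
  | mem x hx =>
      obtain ⟨i, hiK, rfl⟩ := hx
      rcases lt_or_gt_of_ne (hc i hiK) with h | h
      · exact ⟨ρ i, Subgroup.subset_closure ⟨i, ⟨hiK, h⟩, rfl⟩, 1, Subgroup.one_mem _,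
          (mul_one _).symm⟩
      · exact ⟨1, Subgroup.one_mem _, ρ i, Subgroup.subset_closure ⟨i, ⟨hiK, h⟩, rfl⟩,
          (one_mul _).symm⟩
  | one => exact ⟨1, Subgroup.one_mem _, 1, Subgroup.one_mem _, (mul_one _).symm⟩
  | mul x y _ _ hx hy =>
      obtain ⟨l, hl, r, hr, rfl⟩ := hx
      obtain ⟨l', hl', r', hr', rfl⟩ := hy
      refine ⟨l * l', Subgroup.mul_mem _ hl hl', r * r', Subgroup.mul_mem _ hr hr', ?_⟩
      have hcom : Commute l' r := hcommLR l' hl' r hr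
      calc l * r * (l' * r') = l * (r * l') * r' := by group
        _ = l * (l' * r) * r' := by rw [hcom.symm.eq]
        _ = l * l' * (r * r') := by group
  | inv x _ hx =>
      obtain ⟨l, hl, r, hr, rfl⟩ := hx
      refine ⟨l⁻¹, Subgroup.inv_mem _ hl, r⁻¹, Subgroup.inv_mem _ hr, ?_⟩
      have hcom : Commute l r := hcommLR l hl r hr
      rw [mul_inv_rev, hcom.inv_inv.eq]

variable
    (hcomm : ∀ j k : Fin n, (j : ℕ) + 2 ≤ (k : ℕ) ∨ (k : ℕ) + 2 ≤ (j : ℕ) →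
      Commute (ρ j) (ρ k))
    (hTop : ∀ I J : Set (Fin n), (∀ i ∈ I, (i : ℕ) < n - 1) → (∀ i ∈ J, (i : ℕ) < n - 1) →
      Subgroup.closure (ρ '' I) ⊓ Subgroup.closure (ρ '' J) = Subgroup.closure (ρ '' (I ∩ J)))
    (hBot : ∀ I J : Set (Fin n), (∀ i ∈ I, 1 ≤ (i : ℕ)) → (∀ i ∈ J, 1 ≤ (i : ℕ)) →
      Subgroup.closure (ρ '' I) ⊓ Subgroup.closure (ρ '' J) = Subgroup.closure (ρ '' (I ∩ J)))
    (hKey : Subgroup.closure (ρ '' {i | (i : ℕ) < n - 1}) ⊓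
        Subgroup.closure (ρ '' {i | 1 ≤ (i : ℕ)}) =
      Subgroup.closure (ρ '' {i | 1 ≤ (i : ℕ) ∧ (i : ℕ) < n - 1}))

include hcomm hTop hBot hKey

theorem trivInt (c : ℕ) :
    ∀ g, g ∈ Subgroup.closure (ρ '' {i | (i : ℕ) < c}) →
      g ∈ Subgroup.closure (ρ '' {i | c < (i : ℕ)}) → g = 1 := by
  intro g hgl hgr
  by_cases hcn : c ≤ n - 1
  · have hs1 : {i : Fin n | (i : ℕ) < c} ⊆ {i : Fin n | (i : ℕ) < n - 1} := by
      intro i hi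
      simp only [Set.mem_setOf_eq] at hi ⊢
      omega
    have hs2 : {i : Fin n | c < (i : ℕ)} ⊆ {i : Fin n | 1 ≤ (i : ℕ)} := by
      intro i hi
      simp only [Set.mem_setOf_eq] at hi ⊢
      omega
    have h1 : g ∈ Subgroup.closure (ρ '' {i | 1 ≤ (i : ℕ) ∧ (i : ℕ) < n - 1}) := by
      rw [← hKey, Subgroup.mem_inf]
      exact ⟨cmono ρ hs1 hgl, cmono ρ hs2 hgr⟩
    have h2 : g ∈ Subgroup.closure
        (ρ '' ({i | c < (i : ℕ)} ∩ {i | 1 ≤ (i : ℕ) ∧ (i : ℕ) < n - 1})) := by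
      rw [← hBot {i | c < (i : ℕ)} {i | 1 ≤ (i : ℕ) ∧ (i : ℕ) < n - 1}
        (fun i hi => hs2 hi) (fun i hi => hi.1), Subgroup.mem_inf]
      exact ⟨hgr, h1⟩
    have h3 : g ∈ Subgroup.closure (ρ ''
        ({i | (i : ℕ) < c} ∩ ({i | c < (i : ℕ)} ∩ {i | 1 ≤ (i : ℕ) ∧ (i : ℕ) < n - 1}))) := by
      rw [← hTop {i | (i : ℕ) < c} _ (fun i hi => hs1 hi) (fun i hi => hi.2.2),
        Subgroup.mem_inf]
      exact ⟨hgl, h2⟩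
    have hempty : ({i | (i : ℕ) < c} ∩
        ({i | c < (i : ℕ)} ∩ {i | 1 ≤ (i : ℕ) ∧ (i : ℕ) < n - 1}) : Set (Fin n)) = ∅ := by
      ext i
      simp only [Set.mem_inter_iff, Set.mem_setOf_eq, Set.mem_empty_iff_false, iff_false]
      omega
    rw [hempty, Set.image_empty, Subgroup.closure_empty, Subgroup.mem_bot] at h3
    exact h3
  · have hempty : ({i | c < (i : ℕ)} : Set (Fin n)) = ∅ := by
      ext i
      have := i.isLt
      simp only [Set.mem_setOf_eq, Set.mem_empty_iff_false, iff_false]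
      omega
    rw [hempty, Set.image_empty, Subgroup.closure_empty, Subgroup.mem_bot] at hgr
    exact hgr

theorem pSplit (c : ℕ) (hc : c ≤ n - 1) (I J : Set (Fin n))
    (hcI : ∀ i ∈ I, (i : ℕ) ≠ c) (hcJ : ∀ i ∈ J, (i : ℕ) ≠ c) :
    ∀ g, g ∈ Subgroup.closure (ρ '' I) → g ∈ Subgroup.closure (ρ '' J) →
      g ∈ Subgroup.closure (ρ '' (I ∩ J)) := by
  intro g hgI hgJ
  obtain ⟨l₁, hl₁, r₁, hr₁, rfl⟩ := splitAt ρ hcomm c I hcI g hgI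
  obtain ⟨l₂, hl₂, r₂, hr₂, heq⟩ := splitAt ρ hcomm c J hcJ _ hgJ
  have hll : l₂⁻¹ * l₁ = r₂ * r₁⁻¹ := by
    calc l₂⁻¹ * l₁ = l₂⁻¹ * (l₁ * r₁) * r₁⁻¹ := by group
      _ = l₂⁻¹ * (l₂ * r₂) * r₁⁻¹ := by rw [← heq]
      _ = r₂ * r₁⁻¹ := by group
  have hsl : ∀ (K : Set (Fin n)), {i | i ∈ K ∧ (i:ℕ) < c} ⊆ {i : Fin n | (i:ℕ) < c} :=
    fun K i hi => hi.2
  have hsr : ∀ (K : Set (Fin n)), {i | i ∈ K ∧ c < (i:ℕ)} ⊆ {i : Fin n | c < (i:ℕ)} :=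
    fun K i hi => hi.2
  have h1 : l₂⁻¹ * l₁ ∈ Subgroup.closure (ρ '' {i | (i : ℕ) < c}) :=
    Subgroup.mul_mem _ (Subgroup.inv_mem _ (cmono ρ (hsl J) hl₂)) (cmono ρ (hsl I) hl₁)
  have h2 : l₂⁻¹ * l₁ ∈ Subgroup.closure (ρ '' {i | c < (i : ℕ)}) := by
    rw [hll]
    exact Subgroup.mul_mem _ (cmono ρ (hsr J) hr₂) (Subgroup.inv_mem _ (cmono ρ (hsr I) hr₁))
  have hl12 : l₂⁻¹ * l₁ = 1 := trivInt ρ hcomm hTop hBot hKey c _ h1 h2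
  have hleq : l₁ = l₂ := by
    calc l₁ = l₂ * (l₂⁻¹ * l₁) := by group
      _ = l₂ := by rw [hl12, mul_one]
  have hreq : r₁ = r₂ := by
    have hr0 : r₂ * r₁⁻¹ = 1 := by rw [← hll, hl12]
    calc r₁ = (r₂ * r₁⁻¹)⁻¹ * r₂ := by group
      _ = r₂ := by rw [hr0]; group
  have hbl : ∀ (K : Set (Fin n)), ∀ i ∈ {i | i ∈ K ∧ (i:ℕ) < c}, (i:ℕ) < n - 1 := by
    intro K i hi
    have h1 := hi.2
    omega
  have hbr : ∀ (K : Set (Fin n)), ∀ i ∈ {i | i ∈ K ∧ c < (i:ℕ)}, 1 ≤ (i:ℕ) := by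
    intro K i hi
    have h1 := hi.2
    omega
  have hlmem : l₁ ∈ Subgroup.closure
      (ρ '' ({i | i ∈ I ∧ (i:ℕ) < c} ∩ {i | i ∈ J ∧ (i:ℕ) < c})) := by
    rw [← hTop _ _ (hbl I) (hbl J), Subgroup.mem_inf]
    refine ⟨hl₁, ?_⟩
    rw [hleq]
    exact hl₂
  have hrmem : r₁ ∈ Subgroup.closure
      (ρ '' ({i | i ∈ I ∧ c < (i:ℕ)} ∩ {i | i ∈ J ∧ c < (i:ℕ)})) := by
    rw [← hBot _ _ (hbr I) (hbr J), Subgroup.mem_inf]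
    refine ⟨hr₁, ?_⟩
    rw [hreq]
    exact hr₂
  apply Subgroup.mul_mem
  · exact cmono ρ (by rintro i ⟨⟨h1, _⟩, ⟨h2, _⟩⟩; exact ⟨h1, h2⟩) hlmem
  · exact cmono ρ (by rintro i ⟨⟨h1, _⟩, ⟨h2, _⟩⟩; exact ⟨h1, h2⟩) hrmem

theorem halfTop (I J : Set (Fin n)) (hI : ∀ i ∈ I, (i : ℕ) < n - 1) :
    ∀ g, g ∈ Subgroup.closure (ρ '' I) → g ∈ Subgroup.closure (ρ '' J) →
      g ∈ Subgroup.closure (ρ '' (I ∩ J)) := by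
  intro g hgI hgJ
  by_cases hJu : ∃ c : Fin n, c ∉ J
  · obtain ⟨c, hc⟩ := hJu
    have hcJ : ∀ i ∈ J, (i : ℕ) ≠ (c : ℕ) := by
      intro i hi hic
      apply hc
      rw [← Fin.ext hic]
      exact hi
    obtain ⟨l, hl, r, hr, rfl⟩ := splitAt ρ hcomm (c : ℕ) J hcJ g hgJ
    have hcn : (c : ℕ) ≤ n - 1 := by
      have := c.isLt
      omega
    have hlsub : {i | i ∈ J ∧ (i:ℕ) < (c:ℕ)} ⊆ {i : Fin n | (i:ℕ) < n - 1} := by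
      intro i hi
      have h1 := hi.2
      simp only [Set.mem_setOf_eq]
      omega
    have hlTop : l ∈ Subgroup.closure (ρ '' {i | (i : ℕ) < n - 1}) := cmono ρ hlsub hl
    have hrTop : r ∈ Subgroup.closure (ρ '' {i | (i : ℕ) < n - 1}) := by
      have hgTop : l * r ∈ Subgroup.closure (ρ '' {i | (i : ℕ) < n - 1}) :=
        cmono ρ (fun i hi => hI i hi) hgI
      have hrr : r = l⁻¹ * (l * r) := by group
      rw [hrr]
      exact Subgroup.mul_mem _ (Subgroup.inv_mem _ hlTop) hgTop
    have hrBot : r ∈ Subgroup.closure (ρ '' {i | 1 ≤ (i : ℕ)}) := by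
      refine cmono ρ ?_ hr
      intro i hi
      have h1 := hi.2
      simp only [Set.mem_setOf_eq]
      omega
    have hrMid : r ∈ Subgroup.closure (ρ '' {i | 1 ≤ (i : ℕ) ∧ (i : ℕ) < n - 1}) := by
      rw [← hKey, Subgroup.mem_inf]; exact ⟨hrTop, hrBot⟩
    have hrJ' : r ∈ Subgroup.closure
        (ρ '' ({i | i ∈ J ∧ (c:ℕ) < (i:ℕ)} ∩ {i | 1 ≤ (i:ℕ) ∧ (i:ℕ) < n - 1})) := by
      rw [← hBot _ _ (fun i hi => by have h1 := hi.2; omega) (fun i hi => hi.1),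
        Subgroup.mem_inf]
      exact ⟨hr, hrMid⟩
    have hgJ' : l * r ∈ Subgroup.closure (ρ '' ({i | i ∈ J ∧ (i:ℕ) < (c:ℕ)} ∪
        ({i | i ∈ J ∧ (c:ℕ) < (i:ℕ)} ∩ {i | 1 ≤ (i:ℕ) ∧ (i:ℕ) < n - 1}))) := by
      apply Subgroup.mul_mem
      · exact cmono ρ Set.subset_union_left hl
      · exact cmono ρ Set.subset_union_right hrJ'
    have hJ'bound : ∀ i ∈ ({i | i ∈ J ∧ (i:ℕ) < (c:ℕ)} ∪
        ({i | i ∈ J ∧ (c:ℕ) < (i:ℕ)} ∩ {i | 1 ≤ (i:ℕ) ∧ (i:ℕ) < n - 1})), (i : ℕ) < n - 1 := by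
      rintro i (hi | hi)
      · have h1 := hi.2
        omega
      · exact hi.2.2
    have hfin : l * r ∈ Subgroup.closure (ρ '' (I ∩ ({i | i ∈ J ∧ (i:ℕ) < (c:ℕ)} ∪
        ({i | i ∈ J ∧ (c:ℕ) < (i:ℕ)} ∩ {i | 1 ≤ (i:ℕ) ∧ (i:ℕ) < n - 1})))) := by
      rw [← hTop _ _ hI hJ'bound, Subgroup.mem_inf]
      exact ⟨hgI, hgJ'⟩
    refine cmono ρ ?_ hfin
    rintro i ⟨hiI, (hi | hi)⟩
    · exact ⟨hiI, hi.1⟩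
    · exact ⟨hiI, hi.1.1⟩
  · push_neg at hJu
    have hIJ : I ∩ J = I := by
      ext i; simp [hJu i]
    rw [hIJ]
    exact hgI

theorem halfBot (I J : Set (Fin n)) (hI : ∀ i ∈ I, 1 ≤ (i : ℕ)) :
    ∀ g, g ∈ Subgroup.closure (ρ '' I) → g ∈ Subgroup.closure (ρ '' J) →
      g ∈ Subgroup.closure (ρ '' (I ∩ J)) := by
  intro g hgI hgJ
  by_cases hJu : ∃ c : Fin n, c ∉ J
  · obtain ⟨c, hc⟩ := hJu
    have hcJ : ∀ i ∈ J, (i : ℕ) ≠ (c : ℕ) := by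
      intro i hi hic
      apply hc
      rw [← Fin.ext hic]
      exact hi
    obtain ⟨l, hl, r, hr, rfl⟩ := splitAt ρ hcomm (c : ℕ) J hcJ g hgJ
    have hcn : (c : ℕ) ≤ n - 1 := by
      have := c.isLt
      omega
    have hrBot : r ∈ Subgroup.closure (ρ '' {i | 1 ≤ (i : ℕ)}) := by
      refine cmono ρ ?_ hr
      intro i hi
      have h1 := hi.2
      simp only [Set.mem_setOf_eq]
      omega
    have hlBot : l ∈ Subgroup.closure (ρ '' {i | 1 ≤ (i : ℕ)}) := by
      have hgBot : l * r ∈ Subgroup.closure (ρ '' {i | 1 ≤ (i : ℕ)}) :=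
        cmono ρ (fun i hi => hI i hi) hgI
      have hll : l = (l * r) * r⁻¹ := by group
      rw [hll]
      exact Subgroup.mul_mem _ hgBot (Subgroup.inv_mem _ hrBot)
    have hlTop : l ∈ Subgroup.closure (ρ '' {i | (i : ℕ) < n - 1}) := by
      refine cmono ρ ?_ hl
      intro i hi
      have h1 := hi.2
      simp only [Set.mem_setOf_eq]
      omega
    have hlMid : l ∈ Subgroup.closure (ρ '' {i | 1 ≤ (i : ℕ) ∧ (i : ℕ) < n - 1}) := by
      rw [← hKey, Subgroup.mem_inf]; exact ⟨hlTop, hlBot⟩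
    have hlJ' : l ∈ Subgroup.closure
        (ρ '' ({i | i ∈ J ∧ (i:ℕ) < (c:ℕ)} ∩ {i | 1 ≤ (i:ℕ) ∧ (i:ℕ) < n - 1})) := by
      rw [← hTop _ _ (fun i hi => by have h1 := hi.2; omega) (fun i hi => hi.2),
        Subgroup.mem_inf]
      exact ⟨hl, hlMid⟩
    have hgJ' : l * r ∈ Subgroup.closure (ρ ''
        (({i | i ∈ J ∧ (i:ℕ) < (c:ℕ)} ∩ {i | 1 ≤ (i:ℕ) ∧ (i:ℕ) < n - 1}) ∪
          {i | i ∈ J ∧ (c:ℕ) < (i:ℕ)})) := by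
      apply Subgroup.mul_mem
      · exact cmono ρ Set.subset_union_left hlJ'
      · exact cmono ρ Set.subset_union_right hr
    have hJ'bound : ∀ i ∈ (({i | i ∈ J ∧ (i:ℕ) < (c:ℕ)} ∩
        {i | 1 ≤ (i:ℕ) ∧ (i:ℕ) < n - 1}) ∪ {i | i ∈ J ∧ (c:ℕ) < (i:ℕ)}), 1 ≤ (i : ℕ) := by
      rintro i (hi | hi)
      · exact hi.2.1
      · have h1 := hi.2
        omega
    have hfin : l * r ∈ Subgroup.closure (ρ '' (I ∩
        (({i | i ∈ J ∧ (i:ℕ) < (c:ℕ)} ∩ {i | 1 ≤ (i:ℕ) ∧ (i:ℕ) < n - 1}) ∪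
          {i | i ∈ J ∧ (c:ℕ) < (i:ℕ)}))) := by
      rw [← hBot _ _ hI hJ'bound, Subgroup.mem_inf]
      exact ⟨hgI, hgJ'⟩
    refine cmono ρ ?_ hfin
    rintro i ⟨hiI, (hi | hi)⟩
    · exact ⟨hiI, hi.1.1⟩
    · exact ⟨hiI, hi.1⟩
  · push_neg at hJu
    have hIJ : I ∩ J = I := by
      ext i; simp [hJu i]
    rw [hIJ]
    exact hgI

theorem pairComp (j k : Fin n) (hjk : (j : ℕ) < (k : ℕ)) :
    ∀ g, g ∈ Subgroup.closure (ρ '' {i | i ≠ k}) → g ∈ Subgroup.closure (ρ '' {i | i ≠ j}) →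
      g ∈ Subgroup.closure (ρ '' {i | i ≠ j ∧ i ≠ k}) := by
  intro g hgk hgj
  have hcK : ∀ i ∈ ({i | i ≠ k} : Set (Fin n)), (i : ℕ) ≠ (k : ℕ) := by
    intro i hi hik
    exact hi (Fin.ext hik)
  obtain ⟨l, hl, r, hr, rfl⟩ := splitAt ρ hcomm (k : ℕ) {i | i ≠ k} hcK g hgk
  have hrj : r ∈ Subgroup.closure (ρ '' {i | i ≠ j}) := by
    refine cmono ρ ?_ hr
    intro i hi
    have h1 := hi.2
    simp only [Set.mem_setOf_eq]
    intro hij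
    rw [hij] at h1
    omega
  have hlj : l ∈ Subgroup.closure (ρ '' {i | i ≠ j}) := by
    have hll : l = (l * r) * r⁻¹ := by group
    rw [hll]
    exact Subgroup.mul_mem _ hgj (Subgroup.inv_mem _ hrj)
  have hlbound : ∀ i ∈ ({i | i ∈ {i | i ≠ k} ∧ (i:ℕ) < (k:ℕ)} : Set (Fin n)),
      (i:ℕ) < n - 1 := by
    intro i hi
    have h1 := k.isLt
    have h2 := hi.2
    omega
  have hlmem := halfTop ρ hcomm hTop hBot hKey _ {i | i ≠ j} hlbound l hl hlj
  apply Subgroup.mul_mem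
  · refine cmono ρ ?_ hlmem
    rintro i ⟨⟨hik, hilt⟩, hij⟩
    exact ⟨hij, hik⟩
  · refine cmono ρ ?_ hr
    rintro i ⟨hik, hgt⟩
    refine ⟨?_, hik⟩
    intro hij
    rw [hij] at hgt
    omega

theorem reduction :
    ∀ I J : Set (Fin n), Subgroup.closure (ρ '' I) ⊓ Subgroup.closure (ρ '' J) =
      Subgroup.closure (ρ '' (I ∩ J)) := by
  intro I J
  apply le_antisymm
  swap
  · exact le_inf (cmono ρ Set.inter_subset_left) (cmono ρ Set.inter_subset_right)
  intro g hg
  obtain ⟨hgI, hgJ⟩ := Subgroup.mem_inf.mp hg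
  by_cases hIu : ∃ j : Fin n, j ∉ I
  swap
  · push_neg at hIu
    have hIJ : I ∩ J = J := by ext i; simp [hIu i]
    rw [hIJ]; exact hgJ
  by_cases hJu : ∃ k : Fin n, k ∉ J
  swap
  · push_neg at hJu
    have hIJ : I ∩ J = I := by ext i; simp [hJu i]
    rw [hIJ]; exact hgI
  obtain ⟨j, hj⟩ := hIu
  obtain ⟨k, hk⟩ := hJu
  have hnotI : ∀ i ∈ I, (i : ℕ) ≠ (j : ℕ) := by
    intro i hi hic
    apply hj
    rw [← Fin.ext hic]
    exact hi
  have hnotJ : ∀ i ∈ J, (i : ℕ) ≠ (k : ℕ) := by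
    intro i hi hic
    apply hk
    rw [← Fin.ext hic]
    exact hi
  by_cases hjk : j = k
  · subst hjk
    exact pSplit ρ hcomm hTop hBot hKey (j : ℕ) (by have := j.isLt; omega) I J
      hnotI hnotJ g hgI hgJ
  · have hgjk : g ∈ Subgroup.closure (ρ '' {i | i ≠ j ∧ i ≠ k}) := by
      have hgIj : g ∈ Subgroup.closure (ρ '' {i | i ≠ j}) := by
        refine cmono ρ ?_ hgI
        intro i hi hij
        apply hj
        rw [← hij]
        exact hi
      have hgJk : g ∈ Subgroup.closure (ρ '' {i | i ≠ k}) := by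
        refine cmono ρ ?_ hgJ
        intro i hi hik
        apply hk
        rw [← hik]
        exact hi
      rcases Nat.lt_or_ge (j : ℕ) (k : ℕ) with h | h
      · exact pairComp ρ hcomm hTop hBot hKey j k h g hgJk hgIj
      · have hlt : (k : ℕ) < (j : ℕ) := by
          rcases Nat.lt_or_ge (k : ℕ) (j : ℕ) with h' | h'
          · exact h'
          · exact absurd (Fin.ext (le_antisymm h h')) (Ne.symm hjk)
        have hres := pairComp ρ hcomm hTop hBot hKey k j hlt g hgIj hgJk
        refine cmono ρ ?_ hres
        rintro i ⟨h1, h2⟩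
        exact ⟨h2, h1⟩
    have step1 : g ∈ Subgroup.closure (ρ '' (I ∩ {i | i ≠ j ∧ i ≠ k})) :=
      pSplit ρ hcomm hTop hBot hKey (j : ℕ) (by have := j.isLt; omega) I _
        hnotI (fun i hi hic => hi.1 (Fin.ext hic)) g hgI hgjk
    have step2 : g ∈ Subgroup.closure (ρ '' ((I ∩ {i | i ≠ j ∧ i ≠ k}) ∩ J)) :=
      pSplit ρ hcomm hTop hBot hKey (k : ℕ) (by have := k.isLt; omega) _ J
        (fun i hi hic => hi.2.2 (Fin.ext hic))
        hnotJ g step1 hgJ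
    refine cmono ρ ?_ step2
    rintro i ⟨⟨hiI, _⟩, hiJ⟩
    exact ⟨hiI, hiJ⟩

end Reduction


section Transport

theorem isSupp_viaEmbedding {α : Type*} (e : Perm α) (ι : α ↪ Ω) :
    IsSupp (e.viaEmbedding ι) (Set.range ι) := by
  intro x hx
  by_contra hmem
  exact hx (Equiv.Perm.viaEmbedding_apply_of_notMem e ι x hmem)

theorem viaEmbedding_swap {α : Type*} [DecidableEq α] (a b : α) (ι : α ↪ Ω) :
    (Equiv.swap a b).viaEmbedding ι = Equiv.swap (ι a) (ι b) := by
  ext x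
  by_cases hx : x ∈ Set.range ι
  · obtain ⟨c, rfl⟩ := hx
    rw [Equiv.Perm.viaEmbedding_apply, ι.injective.swap_apply]
  · rw [Equiv.Perm.viaEmbedding_apply_of_notMem _ _ _ hx]
    have ha : x ≠ ι a := fun h => hx ⟨a, h.symm⟩
    have hb : x ≠ ι b := fun h => hx ⟨b, h.symm⟩
    rw [Equiv.swap_apply_of_ne_of_ne ha hb]

theorem transportIP {G H : Type*} [Group G] [Group H] (φ : G →* H)
    (hφ : Function.Injective φ) {m n : ℕ} (ρ : Fin m → G)
    (hIP : ∀ I J : Set (Fin m), Subgroup.closure (ρ '' I) ⊓ Subgroup.closure (ρ '' J) =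
      Subgroup.closure (ρ '' (I ∩ J)))
    (e : Fin m → Fin n) (θ : Fin n → H) (hθ : ∀ j : Fin m, θ (e j) = φ (ρ j)) :
    ∀ I J : Set (Fin n), (∀ i ∈ I, ∃ j, e j = i) → (∀ i ∈ J, ∃ j, e j = i) →
      Subgroup.closure (θ '' I) ⊓ Subgroup.closure (θ '' J) =
        Subgroup.closure (θ '' (I ∩ J)) := by
  have himg : ∀ (K : Set (Fin n)), (∀ i ∈ K, ∃ j, e j = i) →
      θ '' K = φ '' (ρ '' (e ⁻¹' K)) := by
    intro K hK
    ext x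
    constructor
    · rintro ⟨i, hi, rfl⟩
      obtain ⟨j, rfl⟩ := hK i hi
      exact ⟨ρ j, ⟨j, hi, rfl⟩, (hθ j).symm⟩
    · rintro ⟨y, ⟨j, hj, rfl⟩, rfl⟩
      exact ⟨e j, hj, hθ j⟩
  intro I J hI hJ
  have hIJ : ∀ i ∈ I ∩ J, ∃ j, e j = i := fun i hi => hI i hi.1
  rw [himg I hI, himg J hJ, himg (I ∩ J) hIJ]
  rw [← MonoidHom.map_closure, ← MonoidHom.map_closure, ← MonoidHom.map_closure]
  rw [← Subgroup.map_inf _ _ φ hφ, hIP, Set.preimage_inter]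

theorem restrictIP {H : Type*} [Group H] {m n : ℕ} (ρ : Fin n → H)
    (hIP : ∀ I J : Set (Fin n), Subgroup.closure (ρ '' I) ⊓ Subgroup.closure (ρ '' J) =
      Subgroup.closure (ρ '' (I ∩ J)))
    (e : Fin m → Fin n) (he : Function.Injective e) (ρ' : Fin m → H)
    (hρ' : ∀ j, ρ' j = ρ (e j)) :
    ∀ I J : Set (Fin m), Subgroup.closure (ρ' '' I) ⊓ Subgroup.closure (ρ' '' J) =
      Subgroup.closure (ρ' '' (I ∩ J)) := by
  have himg : ∀ (K : Set (Fin m)), ρ' '' K = ρ '' (e '' K) := by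
    intro K
    ext x
    constructor
    · rintro ⟨j, hj, rfl⟩
      exact ⟨e j, ⟨j, hj, rfl⟩, (hρ' j).symm⟩
    · rintro ⟨i, ⟨j, hj, rfl⟩, rfl⟩
      exact ⟨j, hj, hρ' j⟩
  intro I J
  rw [himg I, himg J, himg (I ∩ J), Set.image_inter he, hIP]

end Transport

section Glue

variable {X Y : Type*} [Fintype X] [Fintype Y] [DecidableEq X] [DecidableEq Y]

theorem sq_of_orderOf_two {G : Type*} [Group G] (g : G) (hg : orderOf g = 2) :
    g * g = 1 := by
  have h1 := pow_orderOf_eq_one g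
  rw [hg, pow_two] at h1
  exact h1

theorem f₁_none (f₁ : Option X ↪ Option (X ⊕ Y))
    (hf₁ : ∀ o : Option X, f₁ o = Option.map Sum.inl o) : f₁ none = none := by
  rw [hf₁]; rfl

theorem f₂_none (f₂ : Option Y ↪ Option (X ⊕ Y))
    (hf₂ : ∀ o : Option Y, f₂ o = Option.map Sum.inr o) : f₂ none = none := by
  rw [hf₂]; rfl

theorem range_inter (f₁ : Option X ↪ Option (X ⊕ Y))
    (hf₁ : ∀ o : Option X, f₁ o = Option.map Sum.inl o)
    (f₂ : Option Y ↪ Option (X ⊕ Y))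
    (hf₂ : ∀ o : Option Y, f₂ o = Option.map Sum.inr o) :
    Set.range f₁ ∩ Set.range f₂ ⊆ {(none : Option (X ⊕ Y))} := by
  rintro z ⟨⟨o₁, h₁⟩, ⟨o₂, h₂⟩⟩
  rw [hf₁] at h₁
  rw [hf₂] at h₂
  cases o₁ with
  | none => simp at h₁; simp [← h₁]
  | some x =>
      cases o₂ with
      | none => simp at h₂; simp [← h₂]
      | some y =>
          exfalso
          rw [← h₂] at h₁
          simp at h₁

/-- Involution property transfers to the glued generators. -/
theorem glueInv (r s : ℕ) (hr : 1 ≤ r) (hs : 1 ≤ s)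
    (σ : Fin r → Equiv.Perm (Option X)) (τ : Fin s → Equiv.Perm (Option Y))
    (hσinv : ∀ j : Fin r, orderOf (σ j) = 2)
    (hτinv : ∀ j : Fin s, orderOf (τ j) = 2)
    (f₁ : Option X ↪ Option (X ⊕ Y)) (f₂ : Option Y ↪ Option (X ⊕ Y))
    (θ : Fin (r + s) → Equiv.Perm (Option (X ⊕ Y)))
    (hθ₁ : ∀ k : Fin (r + s), ∀ hk : (k : ℕ) < r,
      θ k = (σ ⟨r - 1 - (k : ℕ), (by omega : r - 1 - (k : ℕ) < r + 0)⟩).viaEmbedding f₁)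
    (hθ₂ : ∀ k : Fin (r + s), ∀ hk : r ≤ (k : ℕ),
      θ k = (τ ⟨(k : ℕ) - r, (by have := k.isLt; omega : (k : ℕ) - r < s + 0)⟩).viaEmbedding f₂) :
    ∀ k : Fin (r + s), θ k * θ k = 1 := by
  intro k
  rcases Nat.lt_or_ge (k : ℕ) r with hk | hk
  · have hidx : r - 1 - (k : ℕ) < r := by omega
    rw [hθ₁ k hk, ← Equiv.Perm.viaEmbeddingHom_apply, ← map_mul]
    rw [sq_of_orderOf_two (σ ⟨r - 1 - (k : ℕ), hidx⟩) (hσinv _), map_one]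
  · have hidx : (k : ℕ) - r < s := by have := k.isLt; omega
    rw [hθ₂ k hk, ← Equiv.Perm.viaEmbeddingHom_apply, ← map_mul]
    rw [sq_of_orderOf_two (τ ⟨(k : ℕ) - r, hidx⟩) (hτinv _), map_one]

/-- The string property for the glued family. -/
theorem glueString (r s : ℕ) (hr : 1 ≤ r) (hs : 1 ≤ s)
    (σ : Fin r → Equiv.Perm (Option X)) (τ : Fin s → Equiv.Perm (Option Y))
    (hσinv : ∀ j : Fin r, orderOf (σ j) = 2)
    (hσstring : ∀ j k : Fin r, (j : ℕ) + 2 ≤ (k : ℕ) ∨ (k : ℕ) + 2 ≤ (j : ℕ) →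
      (σ j * σ k) ^ 2 = 1)
    (hσfix : ∀ j : Fin r, 1 ≤ (j : ℕ) → σ j none = none)
    (hτinv : ∀ j : Fin s, orderOf (τ j) = 2)
    (hτstring : ∀ j k : Fin s, (j : ℕ) + 2 ≤ (k : ℕ) ∨ (k : ℕ) + 2 ≤ (j : ℕ) →
      (τ j * τ k) ^ 2 = 1)
    (hτfix : ∀ j : Fin s, 1 ≤ (j : ℕ) → τ j none = none)
    (f₁ : Option X ↪ Option (X ⊕ Y)) (hf₁ : ∀ o : Option X, f₁ o = Option.map Sum.inl o)
    (f₂ : Option Y ↪ Option (X ⊕ Y)) (hf₂ : ∀ o : Option Y, f₂ o = Option.map Sum.inr o)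
    (θ : Fin (r + s) → Equiv.Perm (Option (X ⊕ Y)))
    (hθ₁ : ∀ k : Fin (r + s), ∀ hk : (k : ℕ) < r,
      θ k = (σ ⟨r - 1 - (k : ℕ), (by omega : r - 1 - (k : ℕ) < r + 0)⟩).viaEmbedding f₁)
    (hθ₂ : ∀ k : Fin (r + s), ∀ hk : r ≤ (k : ℕ),
      θ k = (τ ⟨(k : ℕ) - r, (by have := k.isLt; omega : (k : ℕ) - r < s + 0)⟩).viaEmbedding f₂) :
    ∀ j k : Fin (r + s), (j : ℕ) + 2 ≤ (k : ℕ) ∨ (k : ℕ) + 2 ≤ (j : ℕ) →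
      (θ j * θ k) ^ 2 = 1 := by
  have hinv := glueInv r s hr hs σ τ hσinv hτinv f₁ f₂ θ hθ₁ hθ₂
  -- support facts
  have hsuppσ : ∀ k : Fin (r + s), (k : ℕ) < r → IsSupp (θ k) (Set.range f₁) := by
    intro k hk
    rw [hθ₁ k hk]
    exact isSupp_viaEmbedding _ _
  have hsuppτ : ∀ k : Fin (r + s), r ≤ (k : ℕ) → IsSupp (θ k) (Set.range f₂) := by
    intro k hk
    rw [hθ₂ k hk]
    exact isSupp_viaEmbedding _ _
  have hfixσ : ∀ k : Fin (r + s), (hk : (k : ℕ) < r) → (k : ℕ) ≠ r - 1 →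
      θ k none = none := by
    intro k hk hk1
    rw [hθ₁ k hk]
    have h1 : (none : Option (X ⊕ Y)) = f₁ none := (f₁_none f₁ hf₁).symm
    rw [h1, Equiv.Perm.viaEmbedding_apply]
    rw [hσfix _ (by simp only; omega)]
  have hfixτ : ∀ k : Fin (r + s), (hk : r ≤ (k : ℕ)) → (k : ℕ) ≠ r →
      θ k none = none := by
    intro k hk hk1
    rw [hθ₂ k hk]
    have h1 : (none : Option (X ⊕ Y)) = f₂ none := (f₂_none f₂ hf₂).symm
    rw [h1, Equiv.Perm.viaEmbedding_apply]
    rw [hτfix _ (by simp only; omega)]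
  have hUV := range_inter f₁ hf₁ f₂ hf₂
  -- commuting square for disjoint cross pairs
  have cross : ∀ j k : Fin (r + s), (j : ℕ) < r → r ≤ (k : ℕ) →
      ((j : ℕ) + 2 ≤ (k : ℕ)) → (θ j * θ k) ^ 2 = 1 := by
    intro j k hj hk hgap
    have hcomm : Commute (θ j) (θ k) := by
      rcases Nat.lt_or_ge (j : ℕ) (r - 1) with hj1 | hj1
      · -- θ j fixes none, support in range f₁ minus none
        have h1 : IsSupp (θ j) (Set.range f₁ \ {none}) :=
          isSupp_of_fix (hsuppσ j hj) (hfixσ j hj (by omega))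
        apply commute_of_disjoint h1 (hsuppτ k hk)
        rintro x ⟨⟨hx1, hx2⟩, hx3⟩
        exact hx2 (hUV ⟨hx1, hx3⟩)
      · -- j = r - 1, so k ≥ r + 1 and θ k fixes none
        have hkr : (k : ℕ) ≠ r := by omega
        have h2 : IsSupp (θ k) (Set.range f₂ \ {none}) :=
          isSupp_of_fix (hsuppτ k hk) (hfixτ k hk hkr)
        apply (commute_of_disjoint h2 (hsuppσ j hj) ?_).symm
        rintro x ⟨⟨hx1, hx2⟩, hx3⟩
        exact hx2 (hUV ⟨hx3, hx1⟩)
    rw [pow_two]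
    calc θ j * θ k * (θ j * θ k) = θ j * (θ k * θ j) * θ k := by group
      _ = θ j * (θ j * θ k) * θ k := by rw [hcomm.symm.eq]
      _ = (θ j * θ j) * (θ k * θ k) := by group
      _ = 1 := by rw [hinv j, hinv k, one_mul]
  intro j k hgap
  rcases Nat.lt_or_ge (j : ℕ) r with hj | hj <;> rcases Nat.lt_or_ge (k : ℕ) r with hk | hk
  · -- both σ side
    rw [hθ₁ j hj, hθ₁ k hk, ← Equiv.Perm.viaEmbeddingHom_apply,
      ← Equiv.Perm.viaEmbeddingHom_apply, ← map_mul, ← map_pow]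
    rw [hσstring ⟨r - 1 - (j : ℕ), by omega⟩ ⟨r - 1 - (k : ℕ), by omega⟩ (by
      simp only
      omega), map_one]
  · exact cross j k hj hk (by omega)
  · -- k σ side, j τ side : transpose
    have h1 := cross k j hk hj (by omega)
    have hcomm : Commute (θ k) (θ j) := by
      have h2 : θ k * θ j * (θ k * θ j) = 1 := by rw [← pow_two]; exact h1
      have h3 : θ k * θ j = (θ k * θ j)⁻¹ := by
        rw [eq_inv_iff_mul_eq_one]
        exact h2
      calc θ k * θ j = (θ k * θ j)⁻¹ := h3
        _ = (θ j)⁻¹ * (θ k)⁻¹ := by rw [mul_inv_rev]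
        _ = θ j * θ k := by
            rw [inv_eq_of_mul_eq_one_left (hinv j), inv_eq_of_mul_eq_one_left (hinv k)]
    rw [pow_two]
    calc θ j * θ k * (θ j * θ k) = θ j * (θ k * θ j) * θ k := by group
      _ = θ j * (θ j * θ k) * θ k := by rw [hcomm.eq]
      _ = (θ j * θ j) * (θ k * θ k) := by group
      _ = 1 := by rw [hinv j, hinv k, one_mul]
  · -- both τ side
    rw [hθ₂ j hj, hθ₂ k hk, ← Equiv.Perm.viaEmbeddingHom_apply,
      ← Equiv.Perm.viaEmbeddingHom_apply, ← map_mul, ← map_pow]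
    rw [hτstring ⟨(j : ℕ) - r, by have := j.isLt; omega⟩ ⟨(k : ℕ) - r, by have := k.isLt; omega⟩
      (by simp only; omega), map_one]

/-- The key intersection condition for the glued family. -/
theorem glueKey (r s : ℕ) (hr : 1 ≤ r) (hs : 1 ≤ s)
    (σ : Fin r → Equiv.Perm (Option X)) (τ : Fin s → Equiv.Perm (Option Y))
    (hσinv : ∀ j : Fin r, orderOf (σ j) = 2)
    (x₀ : X) (hσ0 : σ ⟨0, hr⟩ = Equiv.swap none (some x₀))
    (hσfix : ∀ j : Fin r, 1 ≤ (j : ℕ) → σ j none = none)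
    (hτinv : ∀ j : Fin s, orderOf (τ j) = 2)
    (y₀ : Y) (hτ0 : τ ⟨0, hs⟩ = Equiv.swap none (some y₀))
    (hτfix : ∀ j : Fin s, 1 ≤ (j : ℕ) → τ j none = none)
    (f₁ : Option X ↪ Option (X ⊕ Y)) (hf₁ : ∀ o : Option X, f₁ o = Option.map Sum.inl o)
    (f₂ : Option Y ↪ Option (X ⊕ Y)) (hf₂ : ∀ o : Option Y, f₂ o = Option.map Sum.inr o)
    (θ : Fin (r + s) → Equiv.Perm (Option (X ⊕ Y)))
    (hθ₁ : ∀ k : Fin (r + s), ∀ hk : (k : ℕ) < r,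
      θ k = (σ ⟨r - 1 - (k : ℕ), (by omega : r - 1 - (k : ℕ) < r + 0)⟩).viaEmbedding f₁)
    (hθ₂ : ∀ k : Fin (r + s), ∀ hk : r ≤ (k : ℕ),
      θ k = (τ ⟨(k : ℕ) - r, (by have := k.isLt; omega : (k : ℕ) - r < s + 0)⟩).viaEmbedding f₂) :
    Subgroup.closure (θ '' {i : Fin (r + s) | (i : ℕ) < r + s - 1}) ⊓
      Subgroup.closure (θ '' {i : Fin (r + s) | 1 ≤ (i : ℕ)}) =
    Subgroup.closure (θ '' {i : Fin (r + s) | 1 ≤ (i : ℕ) ∧ (i : ℕ) < r + s - 1}) := by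
  have hTopSplit : ({i : Fin (r + s) | (i : ℕ) < r + s - 1}) =
      {i : Fin (r + s) | (i : ℕ) < r} ∪ {i | r ≤ (i : ℕ) ∧ (i : ℕ) < r + s - 1} := by
    ext i
    simp only [Set.mem_setOf_eq, Set.mem_union]
    omega
  have hBotSplit : ({i : Fin (r + s) | 1 ≤ (i : ℕ)}) =
      {i : Fin (r + s) | 1 ≤ (i : ℕ) ∧ (i : ℕ) < r} ∪ {i | r ≤ (i : ℕ)} := by
    ext i
    have := i.isLt
    simp only [Set.mem_setOf_eq, Set.mem_union]
    omega
  have hMidSplit : ({i : Fin (r + s) | 1 ≤ (i : ℕ) ∧ (i : ℕ) < r + s - 1}) =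
      {i : Fin (r + s) | 1 ≤ (i : ℕ) ∧ (i : ℕ) < r} ∪
        {i | r ≤ (i : ℕ) ∧ (i : ℕ) < r + s - 1} := by
    ext i
    simp only [Set.mem_setOf_eq, Set.mem_union]
    omega
  rw [hTopSplit, hBotSplit, hMidSplit, Set.image_union, Set.image_union, Set.image_union]
  have hUV := range_inter f₁ hf₁ f₂ hf₂
  have hstarU : (none : Option (X ⊕ Y)) ∈ Set.range f₁ := ⟨none, f₁_none f₁ hf₁⟩
  have hstarV : (none : Option (X ⊕ Y)) ∈ Set.range f₂ := ⟨none, f₂_none f₂ hf₂⟩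
  have hEA : ∀ e ∈ θ '' {i : Fin (r + s) | (i : ℕ) < r}, IsSupp e (Set.range f₁) ∧
      (e none = none ∨ ∃ q, q ≠ none ∧ q ∈ Set.range f₁ ∧ e = Equiv.swap none q) := by
    rintro e ⟨i, hi, rfl⟩
    simp only [Set.mem_setOf_eq] at hi
    constructor
    · rw [hθ₁ i hi]
      exact isSupp_viaEmbedding _ _
    · by_cases hi1 : (i : ℕ) = r - 1
      · right
        refine ⟨f₁ (some x₀), ?_, ⟨some x₀, rfl⟩, ?_⟩
        · rw [hf₁]
          simp
        · rw [hθ₁ i hi]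
          have hidx : r - 1 - (i : ℕ) < r := by omega
          have hfin : (⟨r - 1 - (i : ℕ), hidx⟩ : Fin r) = ⟨0, hr⟩ := by
            apply Fin.ext
            simp only
            omega
          have hσe : σ ⟨r - 1 - (i : ℕ), hidx⟩ = Equiv.swap none (some x₀) := by
            rw [hfin, hσ0]
          rw [hσe, viaEmbedding_swap, f₁_none f₁ hf₁]
      · left
        rw [hθ₁ i hi]
        have h1 : (none : Option (X ⊕ Y)) = f₁ none := (f₁_none f₁ hf₁).symm
        rw [h1, Equiv.Perm.viaEmbedding_apply]
        rw [hσfix _ (by simp only; omega)]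
  have hEB : ∀ e ∈ θ '' {i : Fin (r + s) | r ≤ (i : ℕ)}, IsSupp e (Set.range f₂) ∧
      (e none = none ∨ ∃ q, q ≠ none ∧ q ∈ Set.range f₂ ∧ e = Equiv.swap none q) := by
    rintro e ⟨i, hi, rfl⟩
    simp only [Set.mem_setOf_eq] at hi
    constructor
    · rw [hθ₂ i hi]
      exact isSupp_viaEmbedding _ _
    · by_cases hi1 : (i : ℕ) = r
      · right
        refine ⟨f₂ (some y₀), ?_, ⟨some y₀, rfl⟩, ?_⟩
        · rw [hf₂]
          simp
        · rw [hθ₂ i hi]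
          have hidx : (i : ℕ) - r < s := by have := i.isLt; omega
          have hfin : (⟨(i : ℕ) - r, hidx⟩ : Fin s) = ⟨0, hs⟩ := by
            apply Fin.ext
            simp only
            omega
          have hτe : τ ⟨(i : ℕ) - r, hidx⟩ = Equiv.swap none (some y₀) := by
            rw [hfin, hτ0]
          rw [hτe, viaEmbedding_swap, f₂_none f₂ hf₂]
      · left
        rw [hθ₂ i hi]
        have h1 : (none : Option (X ⊕ Y)) = f₂ none := (f₂_none f₂ hf₂).symm
        rw [h1, Equiv.Perm.viaEmbedding_apply]
        rw [hτfix _ (by simp only; omega)]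
  have hinvA : ∀ e ∈ θ '' {i : Fin (r + s) | (i : ℕ) < r}, e * e = 1 := by
    rintro e ⟨i, hi, rfl⟩
    exact glueInv r s hr hs σ τ hσinv hτinv f₁ f₂ θ hθ₁ hθ₂ i
  have hinvB : ∀ e ∈ θ '' {i : Fin (r + s) | r ≤ (i : ℕ)}, e * e = 1 := by
    rintro e ⟨i, hi, rfl⟩
    exact glueInv r s hr hs σ τ hσinv hτinv f₁ f₂ θ hθ₁ hθ₂ i
  have hsub1 : θ '' {i : Fin (r + s) | 1 ≤ (i : ℕ) ∧ (i : ℕ) < r} ⊆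
      θ '' {i : Fin (r + s) | (i : ℕ) < r} :=
    Set.image_mono (fun i hi => hi.2)
  have hsub2 : θ '' {i : Fin (r + s) | r ≤ (i : ℕ) ∧ (i : ℕ) < r + s - 1} ⊆
      θ '' {i : Fin (r + s) | r ≤ (i : ℕ)} :=
    Set.image_mono (fun i hi => hi.1)
  have hkey := keyPerm (none : Option (X ⊕ Y)) (Set.range f₁) (Set.range f₂) hUV hstarU hstarV
    (θ '' {i : Fin (r + s) | (i : ℕ) < r})
    (θ '' {i : Fin (r + s) | 1 ≤ (i : ℕ) ∧ (i : ℕ) < r})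
    (θ '' {i : Fin (r + s) | r ≤ (i : ℕ)})
    (θ '' {i : Fin (r + s) | r ≤ (i : ℕ) ∧ (i : ℕ) < r + s - 1})
    hsub1 hsub2 hEA hEB hinvA hinvB
  exact hkey


/-- The intersection property for the glued family, by strong induction on the total rank. -/
theorem glueIP
    (f₁ : Option X ↪ Option (X ⊕ Y)) (hf₁ : ∀ o : Option X, f₁ o = Option.map Sum.inl o)
    (f₂ : Option Y ↪ Option (X ⊕ Y)) (hf₂ : ∀ o : Option Y, f₂ o = Option.map Sum.inr o) :
    ∀ (N r s : ℕ), r + s = N → ∀ (hr : 1 ≤ r) (hs : 1 ≤ s)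
      (σ : Fin r → Equiv.Perm (Option X)) (τ : Fin s → Equiv.Perm (Option Y))
      (hσinv : ∀ j : Fin r, orderOf (σ j) = 2)
      (hσstring : ∀ j k : Fin r, (j : ℕ) + 2 ≤ (k : ℕ) ∨ (k : ℕ) + 2 ≤ (j : ℕ) →
        (σ j * σ k) ^ 2 = 1)
      (hσIP : ∀ I J : Set (Fin r),
        Subgroup.closure (σ '' I) ⊓ Subgroup.closure (σ '' J) =
          Subgroup.closure (σ '' (I ∩ J)))
      (x₀ : X) (hσ0 : σ ⟨0, hr⟩ = Equiv.swap none (some x₀))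
      (hσfix : ∀ j : Fin r, 1 ≤ (j : ℕ) → σ j none = none)
      (hτinv : ∀ j : Fin s, orderOf (τ j) = 2)
      (hτstring : ∀ j k : Fin s, (j : ℕ) + 2 ≤ (k : ℕ) ∨ (k : ℕ) + 2 ≤ (j : ℕ) →
        (τ j * τ k) ^ 2 = 1)
      (hτIP : ∀ I J : Set (Fin s),
        Subgroup.closure (τ '' I) ⊓ Subgroup.closure (τ '' J) =
          Subgroup.closure (τ '' (I ∩ J)))
      (y₀ : Y) (hτ0 : τ ⟨0, hs⟩ = Equiv.swap none (some y₀))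
      (hτfix : ∀ j : Fin s, 1 ≤ (j : ℕ) → τ j none = none)
      (θ : Fin (r + s) → Equiv.Perm (Option (X ⊕ Y)))
      (hθ₁ : ∀ k : Fin (r + s), ∀ hk : (k : ℕ) < r,
        θ k = (σ ⟨r - 1 - (k : ℕ), (by omega : r - 1 - (k : ℕ) < r + 0)⟩).viaEmbedding f₁)
      (hθ₂ : ∀ k : Fin (r + s), ∀ hk : r ≤ (k : ℕ),
        θ k = (τ ⟨(k : ℕ) - r, (by have := k.isLt; omega : (k : ℕ) - r < s + 0)⟩).viaEmbedding f₂),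
      ∀ I J : Set (Fin (r + s)),
        Subgroup.closure (θ '' I) ⊓ Subgroup.closure (θ '' J) =
          Subgroup.closure (θ '' (I ∩ J)) := by
  intro N
  induction N using Nat.strong_induction_on with
  | _ N IH =>
  intro r s hN hr hs σ τ hσinv hσstring hσIP x₀ hσ0 hσfix hτinv hτstring hτIP y₀ hτ0 hτfix
    θ hθ₁ hθ₂
  have hstring := glueString r s hr hs σ τ hσinv hσstring hσfix hτinv hτstring hτfix
    f₁ hf₁ f₂ hf₂ θ hθ₁ hθ₂
  have hinv := glueInv r s hr hs σ τ hσinv hτinv f₁ f₂ θ hθ₁ hθ₂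
  have hcomm : ∀ j k : Fin (r + s), (j : ℕ) + 2 ≤ (k : ℕ) ∨ (k : ℕ) + 2 ≤ (j : ℕ) →
      Commute (θ j) (θ k) := by
    intro j k hgap
    have h1 := hstring j k hgap
    rw [pow_two] at h1
    have h3 : θ j * θ k = (θ j * θ k)⁻¹ := by
      rw [eq_inv_iff_mul_eq_one]
      exact h1
    calc θ j * θ k = (θ j * θ k)⁻¹ := h3
      _ = (θ k)⁻¹ * (θ j)⁻¹ := mul_inv_rev _ _
      _ = θ k * θ j := by
          rw [inv_eq_of_mul_eq_one_left (hinv k), inv_eq_of_mul_eq_one_left (hinv j)]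
  have hTop : ∀ I J : Set (Fin (r + s)),
      (∀ i ∈ I, (i : ℕ) < r + s - 1) → (∀ i ∈ J, (i : ℕ) < r + s - 1) →
      Subgroup.closure (θ '' I) ⊓ Subgroup.closure (θ '' J) =
        Subgroup.closure (θ '' (I ∩ J)) := by
    intro I J hI hJ
    by_cases hs2 : 2 ≤ s
    · -- induction: drop the last τ generator
      have hcast : r + (s - 1) ≤ r + s := by omega
      set τ' : Fin (s - 1) → Equiv.Perm (Option Y) :=
        fun j => τ (Fin.castLE (by omega) j) with hτ'def
      set θ' : Fin (r + (s - 1)) → Equiv.Perm (Option (X ⊕ Y)) :=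
        fun k => θ (Fin.castLE hcast k) with hθ'def
      have hθ'₁ : ∀ k : Fin (r + (s - 1)), ∀ hk : (k : ℕ) < r,
          θ' k = (σ ⟨r - 1 - (k : ℕ), by omega⟩).viaEmbedding f₁ := by
        intro k hk
        show θ (Fin.castLE hcast k) = _
        rw [hθ₁ (Fin.castLE hcast k) (by simpa using hk)]
        exact congrArg (fun z => Equiv.Perm.viaEmbedding z f₁)
          (congrArg σ (Fin.ext (by simp)))
      have hθ'₂ : ∀ k : Fin (r + (s - 1)), ∀ hk : r ≤ (k : ℕ),
          θ' k = (τ' ⟨(k : ℕ) - r, by have := k.isLt; omega⟩).viaEmbedding f₂ := by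
        intro k hk
        show θ (Fin.castLE hcast k) = _
        rw [hθ₂ (Fin.castLE hcast k) (by simpa using hk)]
        exact congrArg (fun z => Equiv.Perm.viaEmbedding z f₂)
          (congrArg τ (Fin.ext (by simp)))
      have IH' := IH (r + (s - 1)) (by omega) r (s - 1) rfl hr (by omega) σ τ'
        hσinv hσstring hσIP x₀ hσ0 hσfix
        (fun j => hτinv _)
        (fun j k h => hτstring _ _ (by simpa using h))
        (restrictIP τ hτIP (Fin.castLE (by omega)) (Fin.castLE_injective _) τ' (fun j => rfl))
        y₀
        (by
          show τ (Fin.castLE _ _) = _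
          rw [← hτ0]
          exact congrArg τ (Fin.ext (by simp)))
        (fun j h => hτfix _ (by simpa using h))
        θ' hθ'₁ hθ'₂
      refine transportIP (MonoidHom.id _) (fun a b h => h) θ' IH'
        (fun k => Fin.castLE hcast k) θ (fun j => rfl) I J ?_ ?_
      · intro i hi
        exact ⟨⟨(i : ℕ), by have := hI i hi; omega⟩, Fin.ext (by simp)⟩
      · intro i hi
        exact ⟨⟨(i : ℕ), by have := hJ i hi; omega⟩, Fin.ext (by simp)⟩
    · -- s = 1 : only σ generators appear
      have hs1 : s = 1 := by omega
      refine transportIP (Equiv.Perm.viaEmbeddingHom f₁)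
        (Equiv.Perm.viaEmbeddingHom_injective f₁) σ hσIP
        (fun j => ⟨r - 1 - (j : ℕ), by omega⟩) θ ?_ I J ?_ ?_
      · intro j
        rw [hθ₁ _ (by simp only; omega), Equiv.Perm.viaEmbeddingHom_apply]
        refine congrArg (fun z => Equiv.Perm.viaEmbedding z f₁) (congrArg σ (Fin.ext ?_))
        simp only
        have := j.isLt
        omega
      · intro i hi
        have h1 := hI i hi
        refine ⟨⟨r - 1 - (i : ℕ), by omega⟩, Fin.ext ?_⟩
        simp only
        omega
      · intro i hi
        have h1 := hJ i hi
        refine ⟨⟨r - 1 - (i : ℕ), by omega⟩, Fin.ext ?_⟩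
        simp only
        omega
  have hBot : ∀ I J : Set (Fin (r + s)),
      (∀ i ∈ I, 1 ≤ (i : ℕ)) → (∀ i ∈ J, 1 ≤ (i : ℕ)) →
      Subgroup.closure (θ '' I) ⊓ Subgroup.closure (θ '' J) =
        Subgroup.closure (θ '' (I ∩ J)) := by
    intro I J hI hJ
    by_cases hr2 : 2 ≤ r
    · -- induction: drop the first σ generator (index r-1 in σ, index 0 in θ)
      set σ' : Fin (r - 1) → Equiv.Perm (Option X) :=
        fun j => σ (Fin.castLE (by omega) j) with hσ'def
      set θ' : Fin ((r - 1) + s) → Equiv.Perm (Option (X ⊕ Y)) :=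
        fun k => θ ⟨(k : ℕ) + 1, by have := k.isLt; omega⟩ with hθ'def
      have hθ'₁ : ∀ k : Fin ((r - 1) + s), ∀ hk : (k : ℕ) < r - 1,
          θ' k = (σ' ⟨r - 1 - 1 - (k : ℕ), by omega⟩).viaEmbedding f₁ := by
        intro k hk
        show θ ⟨(k : ℕ) + 1, _⟩ = _
        rw [hθ₁ ⟨(k : ℕ) + 1, by have := k.isLt; omega⟩ (by simp only; omega)]
        show _ = (σ (Fin.castLE _ _)).viaEmbedding f₁
        refine congrArg (fun z => Equiv.Perm.viaEmbedding z f₁) (congrArg σ (Fin.ext ?_))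
        simp only [Fin.coe_castLE]
        omega
      have hθ'₂ : ∀ k : Fin ((r - 1) + s), ∀ hk : r - 1 ≤ (k : ℕ),
          θ' k = (τ ⟨(k : ℕ) - (r - 1), by have := k.isLt; omega⟩).viaEmbedding f₂ := by
        intro k hk
        show θ ⟨(k : ℕ) + 1, _⟩ = _
        rw [hθ₂ ⟨(k : ℕ) + 1, by have := k.isLt; omega⟩ (by simp only; omega)]
        refine congrArg (fun z => Equiv.Perm.viaEmbedding z f₂) (congrArg τ (Fin.ext ?_))
        simp only
        omega
      have IH' := IH ((r - 1) + s) (by omega) (r - 1) s rfl (by omega) hs σ' τ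
        (fun j => hσinv _)
        (fun j k h => hσstring _ _ (by simpa using h))
        (restrictIP σ hσIP (Fin.castLE (by omega)) (Fin.castLE_injective _) σ' (fun j => rfl))
        x₀
        (by
          show σ (Fin.castLE _ _) = _
          rw [← hσ0]
          exact congrArg σ (Fin.ext (by simp)))
        (fun j h => hσfix _ (by simpa using h))
        hτinv hτstring hτIP y₀ hτ0 hτfix
        θ' hθ'₁ hθ'₂
      refine transportIP (MonoidHom.id _) (fun a b h => h) θ' IH'
        (fun k => ⟨(k : ℕ) + 1, by have := k.isLt; omega⟩) θ (fun j => rfl) I J ?_ ?_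
      · intro i hi
        have h1 := hI i hi
        have h2 := i.isLt
        exact ⟨⟨(i : ℕ) - 1, by omega⟩, Fin.ext (by simp only; omega)⟩
      · intro i hi
        have h1 := hJ i hi
        have h2 := i.isLt
        exact ⟨⟨(i : ℕ) - 1, by omega⟩, Fin.ext (by simp only; omega)⟩
    · -- r = 1 : only τ generators appear
      have hr1 : r = 1 := by omega
      refine transportIP (Equiv.Perm.viaEmbeddingHom f₂)
        (Equiv.Perm.viaEmbeddingHom_injective f₂) τ hτIP
        (fun j => ⟨(j : ℕ) + r, by have := j.isLt; omega⟩) θ ?_ I J ?_ ?_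
      · intro j
        rw [hθ₂ _ (by simp only; omega), Equiv.Perm.viaEmbeddingHom_apply]
        refine congrArg (fun z => Equiv.Perm.viaEmbedding z f₂) (congrArg τ (Fin.ext ?_))
        simp only
        omega
      · intro i hi
        have h1 := hI i hi
        have h2 := i.isLt
        refine ⟨⟨(i : ℕ) - r, by omega⟩, Fin.ext ?_⟩
        simp only
        omega
      · intro i hi
        have h1 := hJ i hi
        have h2 := i.isLt
        refine ⟨⟨(i : ℕ) - r, by omega⟩, Fin.ext ?_⟩
        simp only
        omega
  have hKey := glueKey r s hr hs σ τ hσinv x₀ hσ0 hσfix hτinv y₀ hτ0 hτfix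
    f₁ hf₁ f₂ hf₂ θ hθ₁ hθ₂
  exact reduction θ hcomm hTop hBot hKey

end Glue

end GlueAux



/-- The gluing theorem: gluing two string C-group representations (each having a
distinguished point `none` moved only by the first generator, which is a transposition)
at that point, reversing the indices of the first family, yields a string C-group
representation on `Option (X ⊕ Y)`. -/
theorem gluing_string_C_groups
    {X Y : Type*} [Fintype X] [Fintype Y] [DecidableEq X] [DecidableEq Y]
    (r s : ℕ) (hr : 1 ≤ r) (hs : 1 ≤ s)
    (σ : Fin r → Equiv.Perm (Option X)) (τ : Fin s → Equiv.Perm (Option Y))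
    (hσinv : ∀ j : Fin r, orderOf (σ j) = 2)
    (hσstring : ∀ j k : Fin r, (j : ℕ) + 2 ≤ (k : ℕ) ∨ (k : ℕ) + 2 ≤ (j : ℕ) →
      (σ j * σ k) ^ 2 = 1)
    (hσIP : ∀ I J : Set (Fin r),
      Subgroup.closure (σ '' I) ⊓ Subgroup.closure (σ '' J) = Subgroup.closure (σ '' (I ∩ J)))
    (x₀ : X) (hσ0 : σ ⟨0, hr⟩ = Equiv.swap none (some x₀))
    (hσfix : ∀ j : Fin r, 1 ≤ (j : ℕ) → σ j none = none)
    (hτinv : ∀ j : Fin s, orderOf (τ j) = 2)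
    (hτstring : ∀ j k : Fin s, (j : ℕ) + 2 ≤ (k : ℕ) ∨ (k : ℕ) + 2 ≤ (j : ℕ) →
      (τ j * τ k) ^ 2 = 1)
    (hτIP : ∀ I J : Set (Fin s),
      Subgroup.closure (τ '' I) ⊓ Subgroup.closure (τ '' J) = Subgroup.closure (τ '' (I ∩ J)))
    (y₀ : Y) (hτ0 : τ ⟨0, hs⟩ = Equiv.swap none (some y₀))
    (hτfix : ∀ j : Fin s, 1 ≤ (j : ℕ) → τ j none = none)
    (f₁ : Option X ↪ Option (X ⊕ Y)) (hf₁ : ∀ o : Option X, f₁ o = Option.map Sum.inl o)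
    (f₂ : Option Y ↪ Option (X ⊕ Y)) (hf₂ : ∀ o : Option Y, f₂ o = Option.map Sum.inr o)
    (θ : Fin (r + s) → Equiv.Perm (Option (X ⊕ Y)))
    (hθ₁ : ∀ k : Fin (r + s), ∀ hk : (k : ℕ) < r,
      θ k = (σ ⟨r - 1 - (k : ℕ), by omega⟩).viaEmbedding f₁)
    (hθ₂ : ∀ k : Fin (r + s), ∀ hk : r ≤ (k : ℕ),
      θ k = (τ ⟨(k : ℕ) - r, by have := k.isLt; omega⟩).viaEmbedding f₂) :
    (∀ j k : Fin (r + s), (j : ℕ) + 2 ≤ (k : ℕ) ∨ (k : ℕ) + 2 ≤ (j : ℕ) →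
      (θ j * θ k) ^ 2 = 1) ∧
    (∀ I J : Set (Fin (r + s)),
      Subgroup.closure (θ '' I) ⊓ Subgroup.closure (θ '' J) =
        Subgroup.closure (θ '' (I ∩ J))) := by
  constructor
  · exact GlueAux.glueString r s hr hs σ τ hσinv hσstring hσfix hτinv hτstring hτfix
      f₁ hf₁ f₂ hf₂ θ hθ₁ hθ₂
  · exact GlueAux.glueIP f₁ hf₁ f₂ hf₂ (r + s) r s rfl hr hs σ τ hσinv hσstring hσIP
      x₀ hσ0 hσfix hτinv hτstring hτIP y₀ hτ0 hτfix θ hθ₁ hθ₂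
end

section
/- For every integer r ≥ 1, the family of adjacent transpositions ρᵢ := (i i+1) ∈ Sym(Fin (r+1)), for 0 ≤ i ≤ r−1, is a string C-group representation of the full symmetric group: the ρᵢ are involutions generating Sym(Fin (r+1)) (⟨ρ₀,…,ρ_{r−1}⟩ = ⊤), they satisfy the string property, and they satisfy the intersection property. -/
namespace SCGAux

variable {r : ℕ}

/-- `x` and `y` are connected by generators whose indices all lie in `I`. -/
def Rel (I : Set (Fin r)) (x y : Fin (r + 1)) : Prop :=
  ∀ (k : ℕ) (hk : k < r), min (x : ℕ) (y : ℕ) ≤ k → k < max (x : ℕ) (y : ℕ) →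
    (⟨k, hk⟩ : Fin r) ∈ I

lemma Rel.refl (I : Set (Fin r)) (x : Fin (r + 1)) : Rel I x x :=
  fun _ _ h1 h2 => absurd h2 (by omega)

lemma Rel.symm {I : Set (Fin r)} {x y : Fin (r + 1)} (h : Rel I x y) : Rel I y x :=
  fun k hk h1 h2 => h k hk (by omega) (by omega)

lemma Rel.trans {I : Set (Fin r)} {x y z : Fin (r + 1)}
    (h1 : Rel I x y) (h2 : Rel I y z) : Rel I x z := by
  intro k hk ha hb
  rcases lt_or_ge k (y : ℕ) with h | h
  · rcases le_or_gt (x : ℕ) k with h' | h'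
    · exact h1 k hk (by omega) (by omega)
    · exact h2 k hk (by omega) (by omega)
  · rcases le_or_gt (z : ℕ) k with h' | h'
    · exact h1 k hk (by omega) (by omega)
    · exact h2 k hk (by omega) (by omega)

/-- The subgroup of permutations moving every point within its `I`-block. -/
def strSub (I : Set (Fin r)) : Subgroup (Equiv.Perm (Fin (r + 1))) where
  carrier := {g | ∀ x, Rel I x (g x)}
  one_mem' := fun x => Rel.refl I x
  mul_mem' := by
    intro a b ha hb x
    exact (hb x).trans (ha (b x))
  inv_mem' := by
    intro g hg x
    have h := (hg (g⁻¹ x)).symm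
    rwa [show g (g⁻¹ x) = x from Equiv.apply_symm_apply g x] at h

lemma gen_mem_strSub {I : Set (Fin r)} {i : Fin r} (hi : i ∈ I) :
    Equiv.swap i.castSucc i.succ ∈ strSub I := by
  have key : Rel I i.castSucc i.succ := by
    intro k hk h1 h2
    simp only [Fin.coe_castSucc, Fin.val_succ] at h1 h2
    have : k = (i : ℕ) := by omega
    subst this
    exact hi
  intro x
  rcases eq_or_ne x i.castSucc with h | h
  · rw [h, Equiv.swap_apply_left]; exact key
  rcases eq_or_ne x i.succ with h' | h'
  · rw [h', Equiv.swap_apply_right]; exact key.symm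
  · rw [Equiv.swap_apply_of_ne_of_ne h h']; exact Rel.refl I x

lemma closure_le_strSub (I : Set (Fin r)) :
    Subgroup.closure ((fun i : Fin r => Equiv.swap i.castSucc i.succ) '' I) ≤ strSub I := by
  rw [Subgroup.closure_le]
  rintro g ⟨i, hi, rfl⟩
  exact gen_mem_strSub hi

lemma strSub_le_closure (I : Set (Fin r)) :
    strSub I ≤ Subgroup.closure ((fun i : Fin r => Equiv.swap i.castSucc i.succ) '' I) := by
  set C := Subgroup.closure ((fun i : Fin r => Equiv.swap i.castSucc i.succ) '' I) with hC
  suffices H : ∀ k, k ≤ r + 1 → ∀ g : Equiv.Perm (Fin (r + 1)), (∀ x, Rel I x (g x)) →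
      (∀ y : Fin (r + 1), k ≤ (y : ℕ) → g y = y) → g ∈ C by
    intro g hg
    exact H (r + 1) le_rfl g hg (fun y hy => absurd y.isLt (by omega))
  intro k
  induction k with
  | zero =>
    intro _ g hg hfix
    have : g = 1 := Equiv.ext fun y => hfix y (Nat.zero_le _)
    rw [this]; exact one_mem C
  | succ k IH =>
    intro hk1 g hg hfix
    have hk : k < r + 1 := hk1
    have IH' := IH (by omega)
    suffices Hd : ∀ d (g : Equiv.Perm (Fin (r + 1))), (∀ x, Rel I x (g x)) →
        (∀ y : Fin (r + 1), k + 1 ≤ (y : ℕ) → g y = y) →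
        k - ((g⁻¹ (⟨k, hk⟩ : Fin (r + 1)) : Fin (r + 1)) : ℕ) ≤ d → g ∈ C by
      exact Hd k g hg hfix (by omega)
    intro d
    induction d with
    | zero =>
      intro g hg hfix hd
      set p := g⁻¹ (⟨k, hk⟩ : Fin (r + 1)) with hp
      have hgp : g p = ⟨k, hk⟩ := Equiv.apply_symm_apply g _
      have hple : (p : ℕ) ≤ k := by
        by_contra hcon
        have := hfix p (by omega)
        rw [this] at hgp
        have : (p : ℕ) = k := congrArg Fin.val hgp
        omega
      have hpk : (p : ℕ) = k := by omega
      have hgk : g ⟨k, hk⟩ = ⟨k, hk⟩ := by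
        have : p = ⟨k, hk⟩ := Fin.ext hpk
        rw [← this, hgp]; exact this.symm
      apply IH' g hg
      intro y hy
      rcases eq_or_lt_of_le hy with h | h
      · have : y = ⟨k, hk⟩ := Fin.ext h.symm
        rw [this]; exact hgk
      · exact hfix y (by omega)
    | succ d IHd =>
      intro g hg hfix hd
      set p := g⁻¹ (⟨k, hk⟩ : Fin (r + 1)) with hp
      have hgp : g p = ⟨k, hk⟩ := Equiv.apply_symm_apply g _
      have hple : (p : ℕ) ≤ k := by
        by_contra hcon
        have := hfix p (by omega)
        rw [this] at hgp
        have : (p : ℕ) = k := congrArg Fin.val hgp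
        omega
      rcases eq_or_lt_of_le hple with hpk | hpk
      · -- g fixes k: use outer IH
        have hgk : g ⟨k, hk⟩ = ⟨k, hk⟩ := by
          have : p = ⟨k, hk⟩ := Fin.ext hpk
          rw [← this, hgp]; exact this.symm
        apply IH' g hg
        intro y hy
        rcases eq_or_lt_of_le hy with h | h
        · have : y = ⟨k, hk⟩ := Fin.ext h.symm
          rw [this]; exact hgk
        · exact hfix y (by omega)
      · -- p < k : bubble
        have hpr : (p : ℕ) < r := by omega
        set i : Fin r := ⟨p, hpr⟩ with hi
        have hiI : i ∈ I := by
          have h := hg p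
          rw [hgp] at h
          exact h (p : ℕ) hpr (by simp) (by simp; omega)
        set s := Equiv.swap i.castSucc i.succ with hs
        have hsC : s ∈ C := Subgroup.subset_closure ⟨i, hiI, rfl⟩
        have hcast : (i.castSucc : Fin (r + 1)) = p := Fin.ext (by simp [hi])
        have hsuccval : ((i.succ : Fin (r + 1)) : ℕ) = (p : ℕ) + 1 := by simp [hi]
        set g' := g * s with hg'def
        have hg' : ∀ x, Rel I x (g' x) := by
          intro x
          have h2 : Rel I (s x) (g (s x)) := hg (s x)
          have h1 : Rel I x (s x) := by
            rw [hs]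
            exact gen_mem_strSub hiI x
          have : g' x = g (s x) := rfl
          rw [this]
          exact h1.trans h2
        have hfix' : ∀ y : Fin (r + 1), k + 1 ≤ (y : ℕ) → g' y = y := by
          intro y hy
          have h1 : y ≠ i.castSucc := by
            intro h; rw [h] at hy; rw [hcast] at hy; omega
          have h2 : y ≠ i.succ := by
            intro h
            have : (y : ℕ) = (p : ℕ) + 1 := by rw [h, hsuccval]
            omega
          have : g' y = g (s y) := rfl
          rw [this, hs, Equiv.swap_apply_of_ne_of_ne h1 h2]
          exact hfix y hy
        have hinv : ((g'⁻¹ (⟨k, hk⟩ : Fin (r + 1)) : Fin (r + 1)) : ℕ) = (p : ℕ) + 1 := by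
          have : g'⁻¹ = s⁻¹ * g⁻¹ := by rw [hg'def, mul_inv_rev]
          rw [this]
          have : (s⁻¹ * g⁻¹) (⟨k, hk⟩ : Fin (r + 1)) = s⁻¹ (g⁻¹ ⟨k, hk⟩) := rfl
          rw [this, ← hp, hs, Equiv.swap_inv, ← hcast, Equiv.swap_apply_left]
          exact hsuccval
        have hg'C : g' ∈ C := IHd g' hg' hfix' (by rw [hinv]; omega)
        have hgeq : g = g' * s := by
          rw [hg'def, mul_assoc, hs, Equiv.swap_mul_self, mul_one]
        rw [hgeq]
        exact mul_mem hg'C hsC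

lemma closure_eq_strSub (I : Set (Fin r)) :
    Subgroup.closure ((fun i : Fin r => Equiv.swap i.castSucc i.succ) '' I) = strSub I :=
  le_antisymm (closure_le_strSub I) (strSub_le_closure I)

end SCGAux

/-- The adjacent transpositions `(i, i+1)` form a string C-group representation of the
full symmetric group `Sym(Fin (r+1))`. -/
theorem simplex_is_string_C_group
    (r : ℕ) (hr : 1 ≤ r) (ρ : Fin r → Equiv.Perm (Fin (r + 1)))
    (hρ : ∀ i : Fin r, ρ i = Equiv.swap i.castSucc i.succ) :
    (∀ i : Fin r, orderOf (ρ i) = 2) ∧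
    Subgroup.closure (Set.range ρ) = (⊤ : Subgroup (Equiv.Perm (Fin (r + 1)))) ∧
    (∀ i j : Fin r, (i : ℕ) + 2 ≤ (j : ℕ) ∨ (j : ℕ) + 2 ≤ (i : ℕ) →
      (ρ i * ρ j) ^ 2 = 1) ∧
    (∀ I J : Set (Fin r),
      Subgroup.closure (ρ '' I) ⊓ Subgroup.closure (ρ '' J) =
        Subgroup.closure (ρ '' (I ∩ J))) := by
  have himg : ∀ I : Set (Fin r), ρ '' I = (fun i : Fin r => Equiv.swap i.castSucc i.succ) '' I :=
    fun I => Set.image_congr fun i _ => hρ i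
  refine ⟨?_, ?_, ?_, ?_⟩
  · intro i
    rw [hρ i]
    refine orderOf_eq_prime ?_ ?_
    · rw [pow_two, Equiv.swap_mul_self]
    · rw [Ne, Equiv.swap_eq_one_iff]
      exact (Fin.castSucc_lt_succ (i := i)).ne
  · rw [← Set.image_univ, himg, SCGAux.closure_eq_strSub]
    rw [eq_top_iff]
    intro g _
    intro x k hk _ _
    exact Set.mem_univ _
  · intro i j hij
    rw [hρ i, hρ j]
    have hd : (Equiv.swap (i.castSucc : Fin (r+1)) i.succ).Disjoint
        (Equiv.swap (j.castSucc : Fin (r+1)) j.succ) := by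
      intro x
      by_cases hx : x = i.castSucc ∨ x = i.succ
      · right
        have hx1 : x ≠ j.castSucc := by
          intro h
          rcases hx with h' | h' <;> rw [h'] at h <;>
            [exact absurd (congrArg Fin.val h) (by simp; omega);
             exact absurd (congrArg Fin.val h) (by simp; omega)]
        have hx2 : x ≠ j.succ := by
          intro h
          rcases hx with h' | h' <;> rw [h'] at h <;>
            [exact absurd (congrArg Fin.val h) (by simp; omega);
             exact absurd (congrArg Fin.val h) (by simp; omega)]
        exact Equiv.swap_apply_of_ne_of_ne hx1 hx2
      · left
        push_neg at hx
        exact Equiv.swap_apply_of_ne_of_ne hx.1 hx.2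
    rw [hd.commute.mul_pow, pow_two, Equiv.swap_mul_self, pow_two, Equiv.swap_mul_self, one_mul]
  · intro I J
    rw [himg, himg, himg, SCGAux.closure_eq_strSub, SCGAux.closure_eq_strSub,
      SCGAux.closure_eq_strSub]
    ext g
    simp only [Subgroup.mem_inf]
    constructor
    · rintro ⟨h1, h2⟩ x k hk ha hb
      exact ⟨h1 x k hk ha hb, h2 x k hk ha hb⟩
    · intro h
      exact ⟨fun x k hk ha hb => (h x k hk ha hb).1, fun x k hk ha hb => (h x k hk ha hb).2⟩
end

section
/- Let k ≥ 1 and r ≥ 1 be integers. On the set Fin k × Fin (r+1), define for each 0 ≤ i ≤ r−1 the involution ρᵢ ∈ Sym(Fin k × Fin (r+1)) by ρᵢ(j, x) := (j, (i i+1)(x)) (i.e. ρᵢ = Equiv.prodCongr (Equiv.refl (Fin k)) (Equiv.swap i (i+1)), the simultaneous adjacent transposition on every copy). Then the family (ρ₀,…,ρ_{r−1}) satisfies the string property and the intersection property, and the subgroup ⟨ρ₀,…,ρ_{r−1}⟩ is isomorphic as a group to Sym(Fin (r+1)). -/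
namespace CPRAux

variable {r : ℕ}

/-- The `i`-th adjacent transposition on `Fin (r+1)`. -/
def sgen (i : Fin r) : Equiv.Perm (Fin (r + 1)) := Equiv.swap i.castSucc i.succ

/-- `g` only moves points within intervals whose inner edges all lie in `I`. -/
def ok (I : Set (Fin r)) (g : Equiv.Perm (Fin (r + 1))) : Prop :=
  ∀ x : Fin (r + 1), ∀ m : Fin r,
    min ((g x : ℕ)) ((x : ℕ)) ≤ (m : ℕ) → (m : ℕ) < max ((g x : ℕ)) ((x : ℕ)) → m ∈ I

lemma ok_one (I : Set (Fin r)) : ok I 1 := by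
  intro x m h1 h2
  simp only [Equiv.Perm.one_apply] at h1 h2
  omega

lemma ok_mul {I : Set (Fin r)} {f g : Equiv.Perm (Fin (r + 1))}
    (hf : ok I f) (hg : ok I g) : ok I (f * g) := by
  intro x m h1 h2
  rw [Equiv.Perm.mul_apply] at h1 h2
  rcases (show (min ((g x : ℕ)) ((x : ℕ)) ≤ (m : ℕ) ∧ (m : ℕ) < max ((g x : ℕ)) ((x : ℕ))) ∨
      (min ((f (g x) : ℕ)) ((g x : ℕ)) ≤ (m : ℕ) ∧
        (m : ℕ) < max ((f (g x) : ℕ)) ((g x : ℕ))) from by omega) with h | h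
  · exact hg x m h.1 h.2
  · exact hf (g x) m h.1 h.2

lemma ok_inv {I : Set (Fin r)} {g : Equiv.Perm (Fin (r + 1))} (hg : ok I g) : ok I g⁻¹ := by
  intro x m h1 h2
  have h := hg (g⁻¹ x) m
  rw [show g (g⁻¹ x) = x from g.apply_symm_apply x] at h
  exact h (by omega) (by omega)

/-- The subgroup of permutations satisfying `ok I`. -/
def Hgrp (I : Set (Fin r)) : Subgroup (Equiv.Perm (Fin (r + 1))) where
  carrier := {g | ok I g}
  one_mem' := ok_one I
  mul_mem' := ok_mul
  inv_mem' := ok_inv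

lemma mem_Hgrp {I : Set (Fin r)} {g : Equiv.Perm (Fin (r + 1))} :
    g ∈ Hgrp I ↔ ok I g := Iff.rfl

lemma sgen_mem_Hgrp {I : Set (Fin r)} {i : Fin r} (hi : i ∈ I) : sgen i ∈ Hgrp I := by
  intro x m h1 h2
  have hm : m = i := by
    rcases eq_or_ne x i.castSucc with rfl | hx1
    · simp only [sgen, Equiv.swap_apply_left, Fin.val_succ, Fin.coe_castSucc] at h1 h2
      exact Fin.ext (by omega)
    rcases eq_or_ne x i.succ with rfl | hx2
    · simp only [sgen, Equiv.swap_apply_right, Fin.val_succ, Fin.coe_castSucc] at h1 h2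
      exact Fin.ext (by omega)
    · simp only [sgen, Equiv.swap_apply_of_ne_of_ne hx1 hx2] at h1 h2
      omega
  exact hm ▸ hi

/-- A measure for the induction. -/
def meas (g : Equiv.Perm (Fin (r + 1))) : ℕ :=
  ∑ x : Fin (r + 1), (r + 2) ^ (r + 1 - (x : ℕ)) * ((g x : ℕ) - (x : ℕ))

lemma mem_closure_of_ok (I : Set (Fin r)) :
    ∀ N : ℕ, ∀ g : Equiv.Perm (Fin (r + 1)), meas g < N → ok I g →
      g ∈ Subgroup.closure (sgen '' I) := by
  intro N
  induction N with
  | zero => exact fun g h _ => absurd h (Nat.not_lt_zero _)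
  | succ N ih =>
    intro g hmeas hg
    by_cases hg1 : g = 1
    · subst hg1; exact Subgroup.one_mem _
    have hF : (Finset.univ.filter fun y : Fin (r + 1) => g y ≠ y).Nonempty := by
      rw [Finset.filter_nonempty_iff]
      by_contra h
      push_neg at h
      exact hg1 (Equiv.ext fun y => by simpa using h y (Finset.mem_univ y))
    set x : Fin (r + 1) := (Finset.univ.filter fun y : Fin (r + 1) => g y ≠ y).min' hF with hxdef
    have hxmem : g x ≠ x := by
      have h := Finset.min'_mem _ hF
      rw [Finset.mem_filter] at h
      exact h.2
    have hfix : ∀ y : Fin (r + 1), (y : ℕ) < (x : ℕ) → g y = y := by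
      intro y hy
      by_contra h
      have h2 : x ≤ y := Finset.min'_le _ y (Finset.mem_filter.2 ⟨Finset.mem_univ y, h⟩)
      rw [Fin.le_def] at h2
      omega
    have hlt : (x : ℕ) < (g x : ℕ) := by
      rcases Nat.lt_or_ge ((g x : ℕ)) ((x : ℕ)) with h | h
      · exact absurd (g.injective (hfix (g x) h)) hxmem
      · have hne : (g x : ℕ) ≠ (x : ℕ) := fun hh => hxmem (Fin.ext hh)
        omega
    set a : ℕ := (g x : ℕ) with hadef
    have har : a < r + 1 := (g x).isLt
    have hi' : a - 1 < r := by omega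
    set i : Fin r := ⟨a - 1, hi'⟩ with hidef
    have hcs : ((i.castSucc : Fin (r + 1)) : ℕ) = a - 1 := rfl
    have hsc : ((i.succ : Fin (r + 1)) : ℕ) = a := by
      simp only [Fin.val_succ, hidef]
      omega
    have hgx : g x = i.succ := Fin.ext (by rw [hsc])
    have hiI : i ∈ I := by
      refine hg x i ?_ ?_
      · show min ((g x : ℕ)) ((x : ℕ)) ≤ (i : ℕ)
        simp only [hidef]
        omega
      · show ((i : Fin r) : ℕ) < max ((g x : ℕ)) ((x : ℕ))
        simp only [hidef]
        omega
    set g' : Equiv.Perm (Fin (r + 1)) := sgen i * g with hg'def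
    have hgg' : g = sgen i * g' := by
      rw [hg'def, ← mul_assoc, sgen, Equiv.swap_mul_self, one_mul]
    set z : Fin (r + 1) := g⁻¹ i.castSucc with hzdef
    have hgz : g z = i.castSucc := g.apply_symm_apply _
    have hzx : z ≠ x := by
      intro h
      rw [h, hgx] at hgz
      have := congrArg (fun t : Fin (r + 1) => (t : ℕ)) hgz
      simp only [hsc, hcs] at this
      omega
    have hzgt : (x : ℕ) < (z : ℕ) := by
      rcases Nat.lt_trichotomy ((z : ℕ)) ((x : ℕ)) with h | h | h
      · have h2 := hfix z h
        rw [h2] at hgz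
        have := congrArg (fun t : Fin (r + 1) => (t : ℕ)) hgz
        simp only [hcs] at this
        omega
      · exact absurd (Fin.ext h) hzx
      · exact h
    have hg'app : ∀ y, g' y = Equiv.swap i.castSucc i.succ (g y) := fun y => rfl
    have hg'x : g' x = i.castSucc := by rw [hg'app, hgx, Equiv.swap_apply_right]
    have hg'z : g' z = i.succ := by rw [hg'app, hgz, Equiv.swap_apply_left]
    have hg'other : ∀ y, y ≠ x → y ≠ z → g' y = g y := by
      intro y h1 h2
      rw [hg'app]
      apply Equiv.swap_apply_of_ne_of_ne
      · exact fun h => h2 (g.injective (h.trans hgz.symm))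
      · exact fun h => h1 (g.injective (h.trans hgx.symm))
    have hg'ok : ok I g' := by
      intro y m h1 h2
      by_cases hyx : y = x
      · rw [hyx, hg'x, hcs] at h1 h2
        refine hg x m ?_ ?_
        · show min ((g x : ℕ)) ((x : ℕ)) ≤ (m : ℕ)
          omega
        · show ((m : Fin r) : ℕ) < max ((g x : ℕ)) ((x : ℕ))
          omega
      by_cases hyz : y = z
      · rw [hyz, hg'z, hsc] at h1 h2
        rcases (show ((m : ℕ) = a - 1) ∨
            (min (a - 1) ((z : ℕ)) ≤ (m : ℕ) ∧ (m : ℕ) < max (a - 1) ((z : ℕ)))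
            from by omega) with h | h
        · have hm : m = i := Fin.ext (by rw [h])
          exact hm ▸ hiI
        · refine hg z m ?_ ?_
          · show min ((g z : ℕ)) ((z : ℕ)) ≤ (m : ℕ)
            rw [hgz, hcs]
            omega
          · show ((m : Fin r) : ℕ) < max ((g z : ℕ)) ((z : ℕ))
            rw [hgz, hcs]
            omega
      · rw [hg'other y hyx hyz] at h1 h2
        exact hg y m h1 h2
    have hwlt : (r + 2) ^ (r + 1 - (z : ℕ)) < (r + 2) ^ (r + 1 - (x : ℕ)) := by
      apply Nat.pow_lt_pow_right (by omega)
      have := z.isLt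
      omega
    have hkey : meas g' + (r + 2) ^ (r + 1 - (x : ℕ)) ≤
        meas g + (r + 2) ^ (r + 1 - (z : ℕ)) := by
      have e1 : meas g' + (r + 2) ^ (r + 1 - (x : ℕ)) =
          ∑ y : Fin (r + 1), ((r + 2) ^ (r + 1 - (y : ℕ)) * ((g' y : ℕ) - (y : ℕ)) +
            if y = x then (r + 2) ^ (r + 1 - (x : ℕ)) else 0) := by
        rw [Finset.sum_add_distrib,
          Finset.sum_ite_eq' Finset.univ x (fun _ : Fin (r + 1) => (r + 2) ^ (r + 1 - (x : ℕ)))]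
        simp [meas]
      have e2 : meas g + (r + 2) ^ (r + 1 - (z : ℕ)) =
          ∑ y : Fin (r + 1), ((r + 2) ^ (r + 1 - (y : ℕ)) * ((g y : ℕ) - (y : ℕ)) +
            if y = z then (r + 2) ^ (r + 1 - (z : ℕ)) else 0) := by
        rw [Finset.sum_add_distrib,
          Finset.sum_ite_eq' Finset.univ z (fun _ : Fin (r + 1) => (r + 2) ^ (r + 1 - (z : ℕ)))]
        simp [meas]
      rw [e1, e2]
      apply Finset.sum_le_sum
      intro y _
      by_cases hyx : y = x
      · have hax : a - (x : ℕ) = (a - 1 - (x : ℕ)) + 1 := by omega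
        rw [hyx, hg'x, hcs, if_pos rfl, if_neg (fun h => hzx (h.symm)), add_zero, ← hadef,
          hax, Nat.mul_succ]
      by_cases hyz : y = z
      · rw [hyz, hg'z, hsc, if_neg (hyz ▸ hyx), if_pos rfl, hgz, hcs, add_zero]
        calc (r + 2) ^ (r + 1 - (z : ℕ)) * (a - (z : ℕ))
            ≤ (r + 2) ^ (r + 1 - (z : ℕ)) * ((a - 1 - (z : ℕ)) + 1) :=
              Nat.mul_le_mul_left _ (by omega)
          _ = (r + 2) ^ (r + 1 - (z : ℕ)) * (a - 1 - (z : ℕ)) +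
              (r + 2) ^ (r + 1 - (z : ℕ)) := by rw [Nat.mul_succ]
      · rw [hg'other y hyx hyz, if_neg hyx, if_neg hyz]
    have hxlt : meas g' < meas g := by omega
    rw [hgg']
    exact Subgroup.mul_mem _ (Subgroup.subset_closure ⟨i, hiI, rfl⟩)
      (ih g' (by omega) hg'ok)

lemma closure_eq (I : Set (Fin r)) : Subgroup.closure (sgen '' I) = Hgrp I := by
  apply le_antisymm
  · rw [Subgroup.closure_le]
    rintro _ ⟨i, hi, rfl⟩
    exact sgen_mem_Hgrp hi
  · intro g hg
    exact mem_closure_of_ok I (meas g + 1) g (Nat.lt_succ_self _) hg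

lemma closure_inf (I J : Set (Fin r)) :
    Subgroup.closure (sgen '' I) ⊓ Subgroup.closure (sgen '' J) =
      Subgroup.closure (sgen '' (I ∩ J)) := by
  rw [closure_eq, closure_eq, closure_eq]
  ext g
  rw [Subgroup.mem_inf]
  constructor
  · rintro ⟨h1, h2⟩ x m hm1 hm2
    exact ⟨h1 x m hm1 hm2, h2 x m hm1 hm2⟩
  · intro h
    exact ⟨fun x m hm1 hm2 => (h x m hm1 hm2).1, fun x m hm1 hm2 => (h x m hm1 hm2).2⟩

lemma closure_range_sgen : Subgroup.closure (Set.range (sgen (r := r))) = ⊤ := by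
  rw [← Set.image_univ, closure_eq]
  rw [eq_top_iff]
  intro g _
  exact fun x m _ _ => Set.mem_univ m

lemma sgen_disjoint {i j : Fin r} (h : (i : ℕ) + 2 ≤ (j : ℕ) ∨ (j : ℕ) + 2 ≤ (i : ℕ)) :
    (sgen i).Disjoint (sgen j) := by
  intro y
  by_cases h1 : y = i.castSucc ∨ y = i.succ
  · right
    have hy : (y : ℕ) = (i : ℕ) ∨ (y : ℕ) = (i : ℕ) + 1 := by
      rcases h1 with rfl | rfl
      · left; rfl
      · right; simp [Fin.val_succ]
    apply Equiv.swap_apply_of_ne_of_ne <;>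
      · apply Fin.ne_of_val_ne
        simp only [Fin.val_succ, Fin.coe_castSucc]
        omega
  · push_neg at h1
    left
    exact Equiv.swap_apply_of_ne_of_ne h1.1 h1.2

lemma sgen_string {i j : Fin r} (h : (i : ℕ) + 2 ≤ (j : ℕ) ∨ (j : ℕ) + 2 ≤ (i : ℕ)) :
    (sgen i * sgen j) ^ 2 = 1 := by
  rw [(sgen_disjoint h).commute.mul_pow, sq, sq, sgen, Equiv.swap_mul_self, sgen,
    Equiv.swap_mul_self, one_mul]

/-- The diagonal embedding of `Sym(Fin (r+1))` into `Sym(Fin k × Fin (r+1))`. -/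
def phi (k r : ℕ) : Equiv.Perm (Fin (r + 1)) →* Equiv.Perm (Fin k × Fin (r + 1)) where
  toFun e := Equiv.prodCongr (Equiv.refl (Fin k)) e
  map_one' := Equiv.ext fun p => rfl
  map_mul' a b := Equiv.ext fun p => rfl

lemma phi_inj {k r : ℕ} (hk : 1 ≤ k) : Function.Injective (phi k r) := by
  intro a b h
  ext y
  have h2 := Equiv.ext_iff.mp h (⟨0, hk⟩, y)
  simp only [phi, MonoidHom.coe_mk, OneHom.coe_mk, Equiv.prodCongr_apply, Equiv.coe_refl,
    Prod.map, id, Prod.mk.injEq] at h2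
  exact congrArg Fin.val h2.2

end CPRAux

open CPRAux in
/-- A disjoint union of `k` identical `r`-simplexes is a CPR graph representing
`Sym(Fin (r+1))`: the simultaneous adjacent transpositions satisfy the string and
intersection properties and generate a group isomorphic to `Sym(Fin (r+1))`. -/
theorem union_of_identical_simplexes_is_string_C_group
    (k r : ℕ) (hk : 1 ≤ k) (hr : 1 ≤ r)
    (ρ : Fin r → Equiv.Perm (Fin k × Fin (r + 1)))
    (hρ : ∀ i : Fin r,
      ρ i = Equiv.prodCongr (Equiv.refl (Fin k)) (Equiv.swap i.castSucc i.succ)) :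
    (∀ i j : Fin r, (i : ℕ) + 2 ≤ (j : ℕ) ∨ (j : ℕ) + 2 ≤ (i : ℕ) →
      (ρ i * ρ j) ^ 2 = 1) ∧
    (∀ I J : Set (Fin r),
      Subgroup.closure (ρ '' I) ⊓ Subgroup.closure (ρ '' J) =
        Subgroup.closure (ρ '' (I ∩ J))) ∧
    Nonempty (Subgroup.closure (Set.range ρ) ≃* Equiv.Perm (Fin (r + 1))) := by
  have hρ' : ρ = fun i => phi k r (sgen i) := funext fun i => by rw [hρ]; rfl
  subst hρ'
  have himg : ∀ S : Set (Fin r),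
      ((fun i => phi k r (sgen i)) '' S) = phi k r '' (sgen '' S) := fun S => by
    rw [Set.image_image]
  refine ⟨?_, ?_, ?_⟩
  · intro i j h
    have : (phi k r (sgen i) * phi k r (sgen j)) ^ 2 = phi k r ((sgen i * sgen j) ^ 2) := by
      rw [map_pow, map_mul]
    rw [this, sgen_string h, map_one]
  · intro I J
    rw [himg, himg, himg, ← MonoidHom.map_closure, ← MonoidHom.map_closure,
      ← MonoidHom.map_closure, ← Subgroup.map_inf _ _ _ (phi_inj hk), closure_inf]
  · have hcl : Subgroup.closure (Set.range fun i => phi k r (sgen i)) = (phi k r).range := by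
      rw [show (Set.range fun i => phi k r (sgen i)) = phi k r '' Set.range sgen from
        (Set.range_comp _ _), ← MonoidHom.map_closure, closure_range_sgen,
        ← MonoidHom.range_eq_map]
    exact ⟨(MulEquiv.subgroupCongr hcl).trans (MonoidHom.ofInjective (phi_inj hk)).symm⟩
end
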